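/- arXiv:2306.10871 — 8 statements merged into one kernel-verified Lean document; each statement's English description precedes it below -/
import Mathlib

section
/- Let P be a finite set; for each p ∈ P let Q_p be an invertible n×n complex matrix and c_p > 0 a constant. Let 𝕄 be a nonempty compact set of n×n real matrices, and let E ⊆ P × P be a relation containing no directed cycle. Then for every ε ∈ (0,1) there exist positive real scalars (s_p)_{p∈P} such that, setting P_p = s_p·Q_p, one has c_p·‖P_q⁻¹·M·P_p‖ < ε for every (p,q) ∈ E and every M ∈ 𝕄. -/
open Matrix
open scoped Matrix.Norms.L2Operator

/-- A relation `E` contains no directed cycle: there is no edge `a → b` together with a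
directed path from `b` back to `a`. -/
def NoDirectedCycle {P : Type*} (E : P → P → Prop) : Prop :=
  ∀ a b, E a b → ¬ Relation.ReflTransGen E b a

/-- Scaling lemma: given invertible complex matrices `Q p`, constants `c p > 0`, a nonempty
compact set `𝕄` of real matrices and an acyclic relation `E`, for every `ε ∈ (0,1)` there are
positive scalars `s p` such that, setting `P_p = s_p • Q_p`, the quantities
`c_p ‖P_q⁻¹ M P_p‖` are `< ε` along every edge `(p,q) ∈ E` and every `M ∈ 𝕄`. -/
theorem scaling_lemma_acyclic {n : ℕ} {P : Type*} [Fintype P]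
    (Q : P → Matrix (Fin n) (Fin n) ℂ) (hQ : ∀ p, IsUnit (Q p))
    (c : P → ℝ) (hc : ∀ p, 0 < c p)
    (𝕄 : Set (Matrix (Fin n) (Fin n) ℝ)) (h𝕄ne : 𝕄.Nonempty) (h𝕄 : IsCompact 𝕄)
    (E : P → P → Prop) (hE : NoDirectedCycle E)
    (ε : ℝ) (hε0 : 0 < ε) (hε1 : ε < 1) :
    ∃ s : P → ℝ, (∀ p, 0 < s p) ∧
      ∀ p q, E p q → ∀ M ∈ 𝕄,
        c p * ‖((s q : ℂ) • Q q)⁻¹ * M.map (Complex.ofReal ·) * ((s p : ℂ) • Q p)‖ < ε := by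
  classical
  set K := Fintype.card P with hK
  -- the rank function
  set r : P → ℕ := fun p => {x | Relation.TransGen E x p}.ncard with hrdef
  have hrank : ∀ p q, E p q → r p < r q := by
    intro p q hpq
    apply Set.ncard_lt_ncard _ (Set.toFinite _)
    constructor
    · intro x hx
      exact Relation.TransGen.tail hx hpq
    · intro hsub
      have hp : p ∈ {x | Relation.TransGen E x q} := Relation.TransGen.single hpq
      have hpp : Relation.TransGen E p p := hsub hp
      obtain ⟨b, hb, hbp⟩ := Relation.TransGen.head'_iff.mp hpp
      exact hE p b hb hbp
  have hrK : ∀ p, r p ≤ K := by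
    intro p
    have := Set.ncard_le_ncard (Set.subset_univ {x | Relation.TransGen E x p})
      Set.finite_univ
    simpa [Set.ncard_univ, hK] using this
  -- uniform bounds along each edge
  have hcont : ∀ p q : P, ∃ B : ℝ, 0 ≤ B ∧
      ∀ M ∈ 𝕄, c p * ‖(Q q)⁻¹ * M.map (Complex.ofReal ·) * Q p‖ ≤ B := by
    intro p q
    have hf : ContinuousOn
        (fun M : Matrix (Fin n) (Fin n) ℝ =>
          c p * ‖(Q q)⁻¹ * M.map (Complex.ofReal ·) * Q p‖) 𝕄 := by
      apply Continuous.continuousOn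
      exact continuous_const.mul
        ((continuous_const.mul (continuous_id.matrix_map Complex.continuous_ofReal)).mul
          continuous_const).norm
    obtain ⟨M₀, hM₀, hmax⟩ := h𝕄.exists_isMaxOn h𝕄ne hf
    exact ⟨_, mul_nonneg (hc p).le (norm_nonneg _), fun M hM => hmax hM⟩
  choose B hB0 hB using hcont
  set C : ℝ := ∑ p : P, ∑ q : P, B p q with hCdef
  have hC0 : 0 ≤ C := Finset.sum_nonneg fun p _ => Finset.sum_nonneg fun q _ => hB0 p q
  have hBC : ∀ p q, B p q ≤ C := by
    intro p q
    have h1 : B p q ≤ ∑ q : P, B p q :=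
      Finset.single_le_sum (fun i _ => hB0 p i) (Finset.mem_univ q)
    have h2 : (∑ q : P, B p q) ≤ C :=
      Finset.single_le_sum (fun i (_ : i ∈ Finset.univ) =>
        Finset.sum_nonneg fun j _ => hB0 i j) (Finset.mem_univ p)
    linarith
  -- the scaling parameter
  set t : ℝ := min 1 (ε / (C + 1)) with htdef
  have ht0 : 0 < t := lt_min one_pos (div_pos hε0 (by linarith))
  have ht1 : t ≤ 1 := min_le_left _ _
  have htC : t * C < ε := by
    have h1 : t * C ≤ (ε / (C + 1)) * C :=
      mul_le_mul_of_nonneg_right (min_le_right _ _) hC0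
    have h2 : (ε / (C + 1)) * C < ε := by
      rw [div_mul_eq_mul_div, div_lt_iff₀ (by linarith : (0:ℝ) < C + 1)]
      nlinarith
    linarith
  refine ⟨fun p => t ^ (K - r p), fun p => pow_pos ht0 _, ?_⟩
  intro p q hpq M hM
  have h1 : r p < r q := hrank p q hpq
  have h2 : r q ≤ K := hrK q
  -- the scalar factor is at most t
  have hfac : t ^ (K - r p) * (t ^ (K - r q))⁻¹ ≤ t := by
    have hsplit : K - r p = (K - r q) + (r q - r p) := by omega
    rw [hsplit, pow_add, mul_comm (t ^ (K - r q)) (t ^ (r q - r p)), mul_assoc,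
      mul_inv_cancel₀ (pow_ne_zero _ ht0.ne')]
    calc t ^ (r q - r p) * 1 = t ^ (r q - r p) := mul_one _
      _ ≤ t ^ 1 := pow_le_pow_of_le_one ht0.le ht1 (by omega)
      _ = t := pow_one t
  -- rewrite the inverse of the scaled matrix
  have hne : ((t ^ (K - r q) : ℝ) : ℂ) ≠ 0 := by
    exact_mod_cast (pow_pos ht0 _).ne'
  haveI : Invertible ((t ^ (K - r q) : ℝ) : ℂ) := invertibleOfNonzero hne
  have hdetq : IsUnit (Q q).det := (Matrix.isUnit_iff_isUnit_det _).mp (hQ q)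
  have hinv : (((t ^ (K - r q) : ℝ) : ℂ) • Q q)⁻¹
      = ((t ^ (K - r q) : ℝ) : ℂ)⁻¹ • (Q q)⁻¹ := by
    rw [Matrix.inv_smul _ _ hdetq, invOf_eq_inv]
  have hcollect :
      (((t ^ (K - r q) : ℝ) : ℂ)⁻¹ • (Q q)⁻¹) * M.map (Complex.ofReal ·) *
        (((t ^ (K - r p) : ℝ) : ℂ) • Q p)
      = (((t ^ (K - r q) : ℝ) : ℂ)⁻¹ * ((t ^ (K - r p) : ℝ) : ℂ)) •
          ((Q q)⁻¹ * M.map (Complex.ofReal ·) * Q p) := by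
    simp [smul_mul_assoc, mul_smul_comm, smul_smul, mul_comm]
  have hsc : ‖((t ^ (K - r q) : ℝ) : ℂ)⁻¹ * ((t ^ (K - r p) : ℝ) : ℂ)‖
      = (t ^ (K - r q))⁻¹ * t ^ (K - r p) := by
    rw [norm_mul, norm_inv, Complex.norm_real, Complex.norm_real,
      Real.norm_of_nonneg (pow_pos ht0 _).le, Real.norm_of_nonneg (pow_pos ht0 _).le]
  calc c p * ‖(((t ^ (K - r q) : ℝ) : ℂ) • Q q)⁻¹ * M.map (Complex.ofReal ·) *
        (((t ^ (K - r p) : ℝ) : ℂ) • Q p)‖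
      = (t ^ (K - r p) * (t ^ (K - r q))⁻¹) *
          (c p * ‖(Q q)⁻¹ * M.map (Complex.ofReal ·) * Q p‖) := by
        rw [hinv, hcollect, norm_smul, hsc]; ring
    _ ≤ t * B p q :=
        mul_le_mul hfac (hB p q M hM)
          (mul_nonneg (hc p).le (norm_nonneg _)) ht0.le
    _ ≤ t * C := mul_le_mul_of_nonneg_left (hBC p q) ht0.le
    _ < ε := htC
end

section
/- Let P be a finite index set and (A_p)_{p∈P} n×n real matrices with P = 𝔰 ∪ 𝔲. Let E ⊆ P × P be a set of admissible switches such that the subrelation E_u = {(p,q) ∈ E : p ∈ 𝔲} contains no directed cycle, and let 𝕄 be a nonempty compact set of n×n real matrices not containing the zero matrix. Then there exist τ* ≥ 0, η* > 0, a family of reset matrices R_{(p,q)} ∈ 𝕄 for (p,q) ∈ E, and a constant C > 0 such that for every j ≥ 0, every sequence p_0, …, p_j ∈ P with (p_{k−1},p_k) ∈ E for 1 ≤ k ≤ j, all durations d_1, …, d_j > 0 with d_k ≥ τ* whenever p_{k−1} ∈ 𝔰 and d_k ≤ η* whenever p_{k−1} ∈ 𝔲, and every s ≥ 0 with s ≤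 η* whenever p_j ∈ 𝔲, one has ‖exp(s·A_{p_j})·Φ_j‖ ≤ C; that is, the reset switched system governed by the graph E with resets chosen from 𝕄 is stable for all E-admissible switching signals with dwell time τ* and flee time η*. -/
open Matrix NormedSpace
open scoped Matrix.Norms.L2Operator

noncomputable section

/-- A real square matrix is Hurwitz stable if every eigenvalue of it, regarded as a
complex matrix, has negative real part. -/
def HurwitzStable {n : ℕ} (A : Matrix (Fin n) (Fin n) ℝ) : Prop :=
  ∀ μ ∈ spectrum ℂ (A.map (Complex.ofReal ·)), μ.re < 0

/-- A real square matrix is unstable if some eigenvalue of it, regarded as a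
complex matrix, has positive real part. -/
def HasUnstableEigenvalue {n : ℕ} (A : Matrix (Fin n) (Fin n) ℝ) : Prop :=
  ∃ μ ∈ spectrum ℂ (A.map (Complex.ofReal ·)), 0 < μ.re

/-- The transition matrix `Φ_j` of the reset switched system: for the switching sequence
`p 0, p 1, …`, durations `d 1, d 2, …` and reset matrices `R`, it is
`Φ_j = R_{(p_{j−1},p_j)} exp(d_j A_{p_{j−1}}) ⋯ R_{(p_0,p_1)} exp(d_1 A_{p_0})`, `Φ_0 = 1`. -/
def resetTransition {n : ℕ} {P : Type*} (A : P → Matrix (Fin n) (Fin n) ℝ)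
    (R : P → P → Matrix (Fin n) (Fin n) ℝ) (p : ℕ → P) (d : ℕ → ℝ) :
    ℕ → Matrix (Fin n) (Fin n) ℝ
  | 0 => 1
  | j + 1 => R (p j) (p (j + 1)) * exp (d (j + 1) • A (p j)) * resetTransition A R p d j

/-- The transition matrix `Ψ_j` of the impulsive switched system: for the switching sequence
`p 0, p 1, …`, durations `d 1, d 2, …` and impulse matrices `M 1, M 2, …`, it is
`Ψ_j = M_j exp(d_j A_{p_{j−1}}) ⋯ M_1 exp(d_1 A_{p_0})`, `Ψ_0 = 1`. -/
def impulsiveTransition {n : ℕ} {P : Type*} (A : P → Matrix (Fin n) (Fin n) ℝ)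
    (M : ℕ → Matrix (Fin n) (Fin n) ℝ) (p : ℕ → P) (d : ℕ → ℝ) :
    ℕ → Matrix (Fin n) (Fin n) ℝ
  | 0 => 1
  | j + 1 => M (j + 1) * exp (d (j + 1) • A (p j)) * impulsiveTransition A M p d j

section Aux
open scoped ENNReal NNReal

variable {n : ℕ}

lemma matNormOneLe (𝕜 : Type*) [RCLike 𝕜] : ‖(1 : Matrix (Fin n) (Fin n) 𝕜)‖ ≤ 1 := by
  rw [Matrix.cstar_norm_def, _root_.map_one]
  exact ContinuousLinearMap.norm_id_le

lemma matNormExpLe {𝕜 : Type*} [RCLike 𝕜] (x : Matrix (Fin n) (Fin n) 𝕜) :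
    ‖exp x‖ ≤ Real.exp ‖x‖ := by
  rw [exp_eq_tsum 𝕜]
  refine (norm_tsum_le_tsum_norm (norm_expSeries_summable' x)).trans ?_
  rw [Real.exp_eq_exp_ℝ, exp_eq_tsum ℝ]
  refine Summable.tsum_le_tsum (fun k => ?_) (norm_expSeries_summable' x)
    (expSeries_summable' (𝕂 := ℝ) ‖x‖)
  rw [norm_smul, smul_eq_mul]
  have h1 : ‖((Nat.factorial k : 𝕜)⁻¹ : 𝕜)‖ = ((Nat.factorial k : ℝ))⁻¹ := by
    rw [norm_inv, RCLike.norm_natCast]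
  rw [h1]
  gcongr
  cases k with
  | zero => simpa using matNormOneLe 𝕜
  | succ k => exact norm_pow_le' x k.succ_pos

lemma matNormPowLe {𝕜 : Type*} [RCLike 𝕜] (X : Matrix (Fin n) (Fin n) 𝕜) (q : ℕ) :
    ‖X ^ q‖ ≤ ‖X‖ ^ q := by
  cases q with
  | zero => simpa using matNormOneLe 𝕜
  | succ q => exact norm_pow_le' X q.succ_pos

lemma mulVec_exp_eigen (M : Matrix (Fin n) (Fin n) ℂ) {μ : ℂ} {w : Fin n → ℂ}
    (hw : M *ᵥ w = μ • w) : exp M *ᵥ w = Complex.exp μ • w := by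
  have hpow : ∀ k : ℕ, (M ^ k) *ᵥ w = μ ^ k • w := by
    intro k
    induction k with
    | zero => simp
    | succ k ih =>
      rw [pow_succ', pow_succ', ← Matrix.mulVec_mulVec, ih, Matrix.mulVec_smul, hw,
        smul_smul, mul_comm]
  let L : Matrix (Fin n) (Fin n) ℂ →ₗ[ℂ] (Fin n → ℂ) :=
    { toFun := fun X => X *ᵥ w
      map_add' := fun X Y => Matrix.add_mulVec X Y w
      map_smul' := fun c X => smul_mulVec c X w }
  let Lc : Matrix (Fin n) (Fin n) ℂ →L[ℂ] (Fin n → ℂ) := LinearMap.toContinuousLinearMap L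
  have h0 : exp M *ᵥ w = Lc (exp M) := rfl
  rw [h0, exp_eq_tsum ℂ, Lc.map_tsum (expSeries_summable' M)]
  have h1 : ∀ k : ℕ, Lc (((Nat.factorial k : ℂ))⁻¹ • M ^ k)
      = (((Nat.factorial k : ℂ))⁻¹ * μ ^ k) • w := by
    intro k
    have : Lc (((Nat.factorial k : ℂ))⁻¹ • M ^ k)
        = ((Nat.factorial k : ℂ))⁻¹ • (M ^ k *ᵥ w) := by
      simp [Lc, L]
    rw [this, hpow k, smul_smul]
  simp_rw [h1]
  rw [Summable.tsum_smul_const]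
  · congr 1
    have : (fun k : ℕ => ((Nat.factorial k : ℂ))⁻¹ * μ ^ k)
        = fun k : ℕ => ((Nat.factorial k : ℂ))⁻¹ • μ ^ k := by
      funext k; rw [smul_eq_mul]
    rw [this]
    have h2 : ∑' (k : ℕ), ((Nat.factorial k : ℂ))⁻¹ • μ ^ k = exp μ := by
      rw [exp_eq_tsum ℂ]
    rw [h2, ← Complex.exp_eq_exp_ℂ]
  · have := expSeries_summable' (𝕂 := ℂ) μ
    simpa [smul_eq_mul] using this

lemma spectrum_exp_subset (M : Matrix (Fin n) (Fin n) ℂ) :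
    ∀ lam ∈ spectrum ℂ (exp M), ∃ μ ∈ spectrum ℂ M, lam = Complex.exp μ := by
  intro lam hlam
  have heq : ∀ X : Matrix (Fin n) (Fin n) ℂ,
      spectrum ℂ X = spectrum ℂ (Matrix.toLinAlgEquiv' X) :=
    fun X => (AlgEquiv.spectrum_eq Matrix.toLinAlgEquiv' X).symm
  set g : Module.End ℂ (Fin n → ℂ) := Matrix.toLinAlgEquiv' (exp M) with hgdef
  set a : Module.End ℂ (Fin n → ℂ) := Matrix.toLinAlgEquiv' M with hadef
  have hEig : Module.End.HasEigenvalue g lam :=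
    Module.End.hasEigenvalue_iff_mem_spectrum.mpr (by rw [← heq]; exact hlam)
  set V := Module.End.eigenspace g lam with hVdef
  have hgv : ∀ v ∈ V, g v = lam • v := fun v hv => Module.End.mem_eigenspace_iff.mp hv
  have hcomm : g * a = a * g := by
    have hc : Commute (exp M) M := (Commute.refl M).exp_left
    have := hc.map (Matrix.toLinAlgEquiv' (R := ℂ) (n := Fin n)).toAlgHom
    simpa [Commute, SemiconjBy] using this
  have hinv : ∀ v ∈ V, a v ∈ V := by
    intro v hv
    rw [hVdef, Module.End.mem_eigenspace_iff]
    have h2 : g (a v) = a (g v) := by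
      have := congrArg (fun f : Module.End ℂ (Fin n → ℂ) => f v) hcomm
      simpa [Module.End.mul_apply] using this
    rw [h2, hgv v hv, _root_.map_smul]
  haveI : Nontrivial V := by
    rcases Submodule.exists_mem_ne_zero_of_ne_bot hEig with ⟨v, hv, hv0⟩
    exact ⟨⟨⟨v, hv⟩, 0, by simpa using hv0⟩⟩
  obtain ⟨μ, hμ⟩ := Module.End.exists_eigenvalue (LinearMap.restrict a hinv)
  obtain ⟨w, hw⟩ := hμ.exists_hasEigenvector
  have hwV : (w : Fin n → ℂ) ∈ V := w.2
  have hws : (w : Fin n → ℂ) ≠ 0 := fun h => hw.2 (by exact_mod_cast Subtype.ext h)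
  have haw : M *ᵥ (w : Fin n → ℂ) = μ • (w : Fin n → ℂ) := by
    have h3 := hw.apply_eq_smul
    have h4 := congrArg (Subtype.val) h3
    rw [LinearMap.restrict_apply] at h4
    simpa [hadef, Matrix.toLinAlgEquiv'_apply] using h4
  have hgw : exp M *ᵥ (w : Fin n → ℂ) = lam • (w : Fin n → ℂ) := by
    have := hgv _ hwV
    simpa [hgdef, Matrix.toLinAlgEquiv'_apply] using this
  have hexp := mulVec_exp_eigen M haw
  have hlameq : lam = Complex.exp μ := by
    have h5 : (lam - Complex.exp μ) • (w : Fin n → ℂ) = 0 := by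
      rw [sub_smul, ← hgw, ← hexp, sub_self]
    rcases smul_eq_zero.mp h5 with h | h
    · exact sub_eq_zero.mp h
    · exact absurd h hws
  refine ⟨μ, ?_, hlameq⟩
  rw [heq, ← Module.End.hasEigenvalue_iff_mem_spectrum]
  refine Module.End.hasEigenvalue_of_hasEigenvector ⟨Module.End.mem_eigenspace_iff.mpr ?_, hws⟩
  simpa [hadef, Matrix.toLinAlgEquiv'_apply] using haw

open Filter Topology in
lemma matBridge : ∃ K > (0:ℝ), ∀ M : Matrix (Fin n) (Fin n) ℝ,
    ‖M‖ ≤ K * ‖M.map (Complex.ofReal ·)‖ := by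
  classical
  let ψ : Matrix (Fin n) (Fin n) ℝ →ₗ[ℝ] Matrix (Fin n) (Fin n) ℂ :=
    (Complex.ofRealAm.mapMatrix : Matrix (Fin n) (Fin n) ℝ →ₐ[ℝ] Matrix (Fin n) (Fin n) ℂ).toLinearMap
  have hinj : Function.Injective ψ := by
    intro X Y h
    ext i j
    have h2 : X.map (Complex.ofReal ·) = Y.map (Complex.ofReal ·) := by
      simpa [ψ] using h
    have h3 : (X.map (Complex.ofReal ·)) i j = (Y.map (Complex.ofReal ·)) i j := by rw [h2]
    simp only [Matrix.map_apply] at h3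
    exact_mod_cast h3
  let e := LinearEquiv.ofInjective ψ hinj
  let gc := LinearMap.toContinuousLinearMap (e.symm.toLinearMap)
  refine ⟨‖gc‖ + 1, by positivity, fun M => ?_⟩
  have h1 : M = gc (e M) := by
    simp [gc, e]
  have h2 : ‖(e M : Matrix (Fin n) (Fin n) ℂ)‖ = ‖M.map (Complex.ofReal ·)‖ := by
    rw [LinearEquiv.ofInjective_apply]
    congr 1
  calc ‖M‖ = ‖gc (e M)‖ := by rw [← h1]
    _ ≤ ‖gc‖ * ‖e M‖ := gc.le_opNorm _
    _ ≤ (‖gc‖ + 1) * ‖e M‖ := by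
        have : (0:ℝ) ≤ ‖e M‖ := norm_nonneg _
        nlinarith [norm_nonneg gc]
    _ = (‖gc‖ + 1) * ‖M.map (Complex.ofReal ·)‖ := by rw [← h2]; rfl

noncomputable def matRatNA (𝕜 : Type*) [RCLike 𝕜] : NormedAlgebra ℚ (Matrix (Fin n) (Fin n) 𝕜) :=
  NormedAlgebra.restrictScalars ℚ 𝕜 (Matrix (Fin n) (Fin n) 𝕜)

attribute [local instance] matRatNA

open Filter Topology in
lemma hurwitz_decay {A : Matrix (Fin n) (Fin n) ℝ} (hA : HurwitzStable A) :
    Filter.Tendsto (fun t : ℝ => ‖exp (t • A)‖) Filter.atTop (𝓝 (0:ℝ)) := by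
  set Ac := A.map (Complex.ofReal ·) with hAcdef
  have hσ := spectrum_exp_subset Ac
  -- spectral radius of exp Ac is < 1
  have hrad : spectralRadius ℂ (exp Ac) < 1 := by
    by_cases hs : (spectrum ℂ Ac).Nonempty
    · obtain ⟨μ0, hμ0, hmax⟩ := (spectrum.isCompact Ac).exists_isMaxOn hs
        (Complex.continuous_re.continuousOn)
      have hρ1 : Real.exp μ0.re < 1 := by
        rw [Real.exp_lt_one_iff]
        exact hA μ0 hμ0
      have hb : spectralRadius ℂ (exp Ac) ≤ ENNReal.ofReal (Real.exp μ0.re) := by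
        unfold spectralRadius
        refine iSup₂_le fun lam hlam => ?_
        obtain ⟨μ, hμ, rfl⟩ := hσ lam hlam
        have hne : ‖Complex.exp μ‖ = Real.exp μ.re := by
          rw [Complex.norm_exp]
        calc (‖Complex.exp μ‖₊ : ℝ≥0∞) = ENNReal.ofReal ‖Complex.exp μ‖ :=
              (ENNReal.ofReal_eq_coe_nnreal (norm_nonneg _)).symm
          _ ≤ ENNReal.ofReal (Real.exp μ0.re) := by
              refine ENNReal.ofReal_le_ofReal ?_
              rw [hne]
              exact Real.exp_le_exp.mpr (hmax hμ)
      refine hb.trans_lt ?_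
      rw [← ENNReal.ofReal_one]
      exact (ENNReal.ofReal_lt_ofReal_iff one_pos).mpr hρ1
    · have hempty : spectrum ℂ (exp Ac) = ∅ := by
        ext lam
        simp only [Set.mem_empty_iff_false, iff_false]
        intro hlam
        obtain ⟨μ, hμ, _⟩ := hσ lam hlam
        exact hs ⟨μ, hμ⟩
      have hz : spectralRadius ℂ (exp Ac) = 0 := by
        simp [spectralRadius, hempty]
      simp [hz]
  -- Gelfand : get a power with norm < 1
  obtain ⟨m₀, hm₀⟩ : ∃ m₀ : ℕ, 1 ≤ m₀ ∧ ‖exp Ac ^ m₀‖ < 1 := by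
    have hgel := spectrum.pow_nnnorm_pow_one_div_tendsto_nhds_spectralRadius (exp Ac)
    have hev := hgel.eventually_lt_const hrad
    obtain ⟨m₀, hlt, hm₀⟩ := (hev.and (eventually_ge_atTop 1)).exists
    refine ⟨m₀, hm₀, ?_⟩
    have hnn : ‖exp Ac ^ m₀‖₊ < 1 := by
      by_contra hge
      push_neg at hge
      have hone : (1:ℝ≥0∞) ≤ (‖exp Ac ^ m₀‖₊ : ℝ≥0∞) ^ (1/(m₀:ℝ)) := by
        calc (1:ℝ≥0∞) = 1 ^ (1/(m₀:ℝ)) := (ENNReal.one_rpow _).symm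
          _ ≤ _ := by
              refine ENNReal.rpow_le_rpow ?_ (by positivity)
              exact_mod_cast hge
      exact hone.not_gt hlt
    rw [← coe_nnnorm]
    exact_mod_cast hnn
  obtain ⟨hm₀1, hβlt⟩ := hm₀
  have hm₀pos : (0:ℝ) < (m₀:ℝ) := by exact_mod_cast hm₀1
  set B := exp ((m₀:ℝ) • Ac) with hBdef
  have hBpow : exp Ac ^ m₀ = B := by
    rw [hBdef, Nat.cast_smul_eq_nsmul ℝ m₀ Ac, NormedSpace.exp_nsmul]
  set β := ‖B‖ with hβdef
  have hβ1 : β < 1 := by rw [hβdef, ← hBpow]; exact hβlt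
  have hβ0 : 0 ≤ β := norm_nonneg _
  obtain ⟨K, hK0, hKb⟩ := matBridge (n := n)
  -- the exp commutes with complexification
  have hφ : ∀ X : Matrix (Fin n) (Fin n) ℝ,
      (exp X).map (Complex.ofReal ·) = exp (X.map (Complex.ofReal ·)) := by
    intro X
    have hcont : Continuous (Complex.ofRealAm.mapMatrix :
        Matrix (Fin n) (Fin n) ℝ →ₐ[ℝ] Matrix (Fin n) (Fin n) ℂ) :=
      LinearMap.continuous_of_finiteDimensional
        (Complex.ofRealAm.mapMatrix : Matrix (Fin n) (Fin n) ℝ →ₐ[ℝ]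
          Matrix (Fin n) (Fin n) ℂ).toLinearMap
    have h1 := map_exp (Complex.ofRealAm.mapMatrix :
        Matrix (Fin n) (Fin n) ℝ →ₐ[ℝ] Matrix (Fin n) (Fin n) ℂ) hcont X
    simpa [AlgHom.mapMatrix_apply] using h1
  have hsmulmap : ∀ (t : ℝ), (t • A).map (Complex.ofReal ·) = t • Ac := by
    intro t
    ext i j
    simp [hAcdef, Matrix.map_apply, Complex.real_smul]
  -- main pointwise bound
  have hbound : ∀ t : ℝ, 0 ≤ t →
      ‖exp (t • A)‖ ≤ K * Real.exp ((m₀:ℝ) * ‖Ac‖) * β ^ ⌊t / (m₀:ℝ)⌋₊ := by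
    intro t ht
    set q := ⌊t / (m₀:ℝ)⌋₊ with hqdef
    have hq1 : (q:ℝ) * (m₀:ℝ) ≤ t := by
      have := Nat.floor_le (div_nonneg ht hm₀pos.le)
      calc (q:ℝ) * (m₀:ℝ) ≤ (t / (m₀:ℝ)) * (m₀:ℝ) := by
            exact mul_le_mul_of_nonneg_right this hm₀pos.le
        _ = t := div_mul_cancel₀ t hm₀pos.ne'
    set s := t - (q:ℝ) * (m₀:ℝ) with hsdef
    have hs0 : 0 ≤ s := by simp [hsdef]; linarith
    have hs1 : s ≤ (m₀:ℝ) := by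
      have h3 : t / (m₀:ℝ) < (q:ℝ) + 1 := Nat.lt_floor_add_one _
      have h4 : t < ((q:ℝ) + 1) * (m₀:ℝ) := by
        calc t = (t / (m₀:ℝ)) * (m₀:ℝ) := (div_mul_cancel₀ t hm₀pos.ne').symm
          _ < ((q:ℝ) + 1) * (m₀:ℝ) := by
              exact mul_lt_mul_of_pos_right h3 hm₀pos
      simp only [hsdef]
      nlinarith
    have hsplit : exp (t • Ac) = exp (s • Ac) * B ^ q := by
      have hts : t • Ac = s • Ac + ((q:ℝ) * (m₀:ℝ)) • Ac := by
        rw [← add_smul]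
        congr 1
        simp [hsdef]
      have hcq : exp (((q:ℝ) * (m₀:ℝ)) • Ac) = B ^ q := by
        rw [mul_smul, Nat.cast_smul_eq_nsmul ℝ q ((m₀:ℝ) • Ac), NormedSpace.exp_nsmul]
      rw [hts, NormedSpace.exp_add_of_commute (((Commute.refl Ac).smul_left s).smul_right _), hcq]
    have hmain : ‖exp (t • Ac)‖ ≤ Real.exp ((m₀:ℝ) * ‖Ac‖) * β ^ q := by
      rw [hsplit]
      calc ‖exp (s • Ac) * B ^ q‖ ≤ ‖exp (s • Ac)‖ * ‖B ^ q‖ := norm_mul_le _ _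
        _ ≤ Real.exp ((m₀:ℝ) * ‖Ac‖) * β ^ q := by
            refine mul_le_mul ?_ ?_ (norm_nonneg _) (Real.exp_nonneg _)
            · refine (matNormExpLe _).trans ?_
              refine Real.exp_le_exp.mpr ?_
              rw [norm_smul, Real.norm_eq_abs, abs_of_nonneg hs0]
              exact mul_le_mul_of_nonneg_right hs1 (norm_nonneg _)
            · exact matNormPowLe B q
    calc ‖exp (t • A)‖ ≤ K * ‖(exp (t • A)).map (Complex.ofReal ·)‖ := hKb _
      _ = K * ‖exp (t • Ac)‖ := by rw [hφ, hsmulmap]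
      _ ≤ K * (Real.exp ((m₀:ℝ) * ‖Ac‖) * β ^ q) := by
          exact mul_le_mul_of_nonneg_left hmain hK0.le
      _ = K * Real.exp ((m₀:ℝ) * ‖Ac‖) * β ^ q := by ring
  -- conclude
  have h1 : Tendsto (fun t : ℝ => β ^ ⌊t / (m₀:ℝ)⌋₊) atTop (𝓝 (0:ℝ)) := by
    refine (tendsto_pow_atTop_nhds_zero_of_lt_one hβ0 hβ1).comp ?_
    exact tendsto_nat_floor_atTop.comp (tendsto_id.atTop_div_const hm₀pos)
  have h2 := h1.const_mul (K * Real.exp ((m₀:ℝ) * ‖Ac‖))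
  rw [mul_zero] at h2
  refine tendsto_of_tendsto_of_tendsto_of_le_of_le' tendsto_const_nhds h2 ?_ ?_
  · exact Eventually.of_forall fun t => norm_nonneg _
  · filter_upwards [eventually_ge_atTop (0:ℝ)] with t ht
    exact hbound t ht

open Filter Topology in
lemma hurwitz_pkg {A : Matrix (Fin n) (Fin n) ℝ} (hA : HurwitzStable A) (ε : ℝ) (hε : 0 < ε) :
    ∃ K τ : ℝ, 0 < K ∧ 0 ≤ τ ∧ (∀ t : ℝ, 0 ≤ t → ‖exp (t • A)‖ ≤ K) ∧
      (∀ t : ℝ, τ ≤ t → ‖exp (t • A)‖ ≤ ε) := by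
  have hdec := hurwitz_decay hA
  have hev : ∀ᶠ t : ℝ in atTop, ‖exp (t • A)‖ < ε := hdec.eventually_lt_const hε
  obtain ⟨b, hb⟩ := eventually_atTop.mp hev
  set τ := max b 0 with hτdef
  have hcont : Continuous fun t : ℝ => exp (t • A) :=
    exp_continuous.comp (continuous_id.smul continuous_const)
  obtain ⟨C, hC⟩ := (isCompact_Icc (a := (0:ℝ)) (b := τ)).exists_bound_of_continuousOn
    hcont.continuousOn
  have hmaxpos : 0 < max C ε + 1 := by
    have h1 : 0 < max C ε := lt_of_lt_of_le hε (le_max_right _ _)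
    linarith
  refine ⟨max C ε + 1, τ, hmaxpos, le_max_right _ _, ?_, ?_⟩
  · intro t ht
    rcases le_total t τ with h | h
    · have h2 := hC t ⟨ht, h⟩
      have h3 : ‖exp (t • A)‖ ≤ C := h2
      have h4 : C ≤ max C ε := le_max_left _ _
      linarith
    · have h2 := (hb t (le_trans (le_max_left b 0) h)).le
      have h4 : ε ≤ max C ε := le_max_right _ _
      linarith
  · intro t ht
    exact (hb t (le_trans (le_max_left b 0) ht)).le

end Aux

/-- Given a switching graph `E` whose unstable part is acyclic and a nonempty compact set
`𝕄` of nonzero matrices, there are a dwell time `τ* ≥ 0`, a flee time `η* > 0` and resets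
chosen from `𝕄` making the reset switched system governed by `E` stable for all
`E`-admissible switching signals with dwell time `τ*` and flee time `η*`. -/
theorem exists_time_constraints_and_resets_from_compact {n : ℕ} {P : Type*} [Fintype P]
    (A : P → Matrix (Fin n) (Fin n) ℝ)
    (hP : ∀ p, HurwitzStable (A p) ∨ HasUnstableEigenvalue (A p))
    (E : P → P → Prop)
    (hEu : NoDirectedCycle (fun p q => E p q ∧ HasUnstableEigenvalue (A p)))
    (𝕄 : Set (Matrix (Fin n) (Fin n) ℝ)) (h𝕄ne : 𝕄.Nonempty) (h𝕄 : IsCompact 𝕄)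
    (h𝕄0 : (0 : Matrix (Fin n) (Fin n) ℝ) ∉ 𝕄) :
    ∃ τs : ℝ, 0 ≤ τs ∧ ∃ ηs : ℝ, 0 < ηs ∧
      ∃ R : P → P → Matrix (Fin n) (Fin n) ℝ, (∀ p q, E p q → R p q ∈ 𝕄) ∧
      ∃ C > (0 : ℝ), ∀ (j : ℕ) (p : ℕ → P) (d : ℕ → ℝ),
        (∀ k, 1 ≤ k → k ≤ j → E (p (k - 1)) (p k)) →
        (∀ k, 1 ≤ k → k ≤ j → 0 < d k) →
        (∀ k, 1 ≤ k → k ≤ j → HurwitzStable (A (p (k - 1))) → τs ≤ d k) →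
        (∀ k, 1 ≤ k → k ≤ j → HasUnstableEigenvalue (A (p (k - 1))) → d k ≤ ηs) →
        ∀ s : ℝ, 0 ≤ s → (HasUnstableEigenvalue (A (p j)) → s ≤ ηs) →
          ‖exp (s • A (p j)) * resetTransition A R p d j‖ ≤ C := by
  classical
  obtain ⟨M₀, hM₀⟩ := h𝕄ne
  cases isEmpty_or_nonempty P with
  | inl hemp =>
    refine ⟨0, le_refl 0, 1, one_pos, fun _ _ => M₀, fun p q _ => hM₀, 1, one_pos, ?_⟩
    intro j p d
    exact isEmptyElim (p 0)
  | inr hne =>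
    obtain ⟨r0, hr0⟩ : ∃ r0, 𝕄 ⊆ Metric.closedBall 0 r0 := h𝕄.isBounded.subset_closedBall 0
    set r : ℝ := max r0 1 with hrdef
    have hr1 : (1:ℝ) ≤ r := le_max_right _ _
    have hrM : ∀ X ∈ 𝕄, ‖X‖ ≤ r := by
      intro X hX
      have := hr0 hX
      rw [Metric.mem_closedBall, dist_zero_right] at this
      exact this.trans (le_max_left _ _)
    set a : ℝ := Finset.univ.sup' Finset.univ_nonempty (fun q : P => ‖A q‖) with hadef
    have haA : ∀ q : P, ‖A q‖ ≤ a := by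
      intro q
      rw [hadef]
      exact Finset.le_sup' (fun x : P => ‖A x‖) (Finset.mem_univ q)
    have ha0 : (0:ℝ) ≤ a := le_trans (norm_nonneg (A hne.some)) (haA _)
    set u : ℝ := r * Real.exp a with hudef
    have hea1 : (1:ℝ) ≤ Real.exp a := Real.one_le_exp ha0
    have hu1 : (1:ℝ) ≤ u := by nlinarith
    have hu0 : (0:ℝ) < u := by linarith
    set N := Fintype.card P with hNdef
    have hr0' : (0:ℝ) < r := by linarith
    set ε : ℝ := (r * u ^ N + 1)⁻¹ with hεdef
    have hε0 : 0 < ε := by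
      rw [hεdef]
      positivity
    have hdecall : ∀ q : P, HurwitzStable (A q) → ∃ Kq τq : ℝ, 0 < Kq ∧ 0 ≤ τq ∧
        (∀ t : ℝ, 0 ≤ t → ‖exp (t • A q)‖ ≤ Kq) ∧
        (∀ t : ℝ, τq ≤ t → ‖exp (t • A q)‖ ≤ ε) :=
      fun q hq => hurwitz_pkg hq ε hε0
    choose! K τ hK0 hτ0 hKb hτb using hdecall
    set τs : ℝ := ∑ q : P, max (τ q) 0 with hτsdef
    have hτs0 : 0 ≤ τs := Finset.sum_nonneg fun q _ => le_max_right _ _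
    have hττs : ∀ q : P, τ q ≤ τs := fun q =>
      le_trans (le_max_left _ _)
        (Finset.single_le_sum (fun x _ => le_max_right (τ x) 0) (Finset.mem_univ q))
    set S : ℝ := (∑ q : P, max (K q) 0) + Real.exp a with hSdef
    have hsum0 : (0:ℝ) ≤ ∑ q : P, max (K q) 0 :=
      Finset.sum_nonneg fun q _ => le_max_right _ _
    have hSK : ∀ q : P, K q ≤ S := by
      intro q
      have h1 : K q ≤ max (K q) 0 := le_max_left _ _
      have h2 : max (K q) 0 ≤ ∑ x : P, max (K x) 0 :=
        Finset.single_le_sum (fun x _ => le_max_right (K x) 0) (Finset.mem_univ q)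
      have h3 : (0:ℝ) < Real.exp a := Real.exp_pos a
      rw [hSdef]; linarith
    have hSe : Real.exp a ≤ S := by
      rw [hSdef]; linarith
    have hS0 : (0:ℝ) < S := lt_of_lt_of_le (Real.exp_pos a) hSe
    have hC0 : (0:ℝ) < S * u ^ N + 1 := by positivity
    refine ⟨τs, hτs0, 1, one_pos, fun _ _ => M₀, fun _ _ _ => hM₀, S * u ^ N + 1, hC0, ?_⟩
    intro j p d hE hd hds hdu s hs hsu
    have hexpb : ∀ (q : P) (t : ℝ), 0 ≤ t → t ≤ 1 → ‖exp (t • A q)‖ ≤ Real.exp a := by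
      intro q t ht0 ht1
      refine (matNormExpLe _).trans (Real.exp_le_exp.mpr ?_)
      rw [norm_smul, Real.norm_eq_abs, abs_of_nonneg ht0]
      nlinarith [haA q, norm_nonneg (A q)]
    have runbound : ∀ i m : ℕ, m ≤ i → i ≤ j →
        (∀ k, k < i → i - m ≤ k → HasUnstableEigenvalue (A (p k))) → m ≤ N := by
      intro i m hmi hij hrun
      by_contra hltc
      push_neg at hltc
      have hcard : (Finset.univ : Finset P).card < (Finset.Ico (i-m) i).card := by
        rw [Nat.card_Ico, Finset.card_univ]
        omega
      obtain ⟨k1, hk1, k2, hk2, hkne, hkeq⟩ :=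
        Finset.exists_ne_map_eq_of_card_lt_of_maps_to hcard
          (fun x _ => Finset.mem_univ (p x))
      have main : ∀ x y : ℕ, x ∈ Finset.Ico (i-m) i → y ∈ Finset.Ico (i-m) i →
          x < y → p x = p y → False := by
        intro x y hx hy hxy hpeq
        simp only [Finset.mem_Ico] at hx hy
        have hedge : ∀ t, x ≤ t → t < y →
            (E (p t) (p (t+1)) ∧ HasUnstableEigenvalue (A (p t))) := by
          intro t h1 h2
          have htl : t < i := lt_of_lt_of_le h2 hy.2.le
          have htg : i - m ≤ t := le_trans hx.1 h1
          refine ⟨?_, hrun t htl htg⟩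
          have h5 := hE (t+1) (by omega) (by omega)
          simpa using h5
        have hpath : ∀ c : ℕ, x + 1 + c ≤ y →
            Relation.ReflTransGen (fun p1 q1 => E p1 q1 ∧ HasUnstableEigenvalue (A p1))
              (p (x+1)) (p (x+1+c)) := by
          intro c
          induction c with
          | zero => intro _; simpa using Relation.ReflTransGen.refl
          | succ c ih =>
            intro hc
            refine (ih (by omega)).tail ?_
            have h6 := hedge (x+1+c) (by omega) (by omega)
            have h7 : x+1+(c+1) = (x+1+c)+1 := by omega
            rw [h7]
            exact h6
        have hfin := hpath (y - (x+1)) (by omega)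
        rw [show x+1+(y-(x+1)) = y from by omega] at hfin
        rw [← hpeq] at hfin
        exact hEu (p x) (p (x+1)) (hedge x le_rfl hxy) hfin
      rcases lt_or_gt_of_ne hkne with h | h
      · exact main k1 k2 hk1 hk2 h hkeq
      · exact main k2 k1 hk2 hk1 h hkeq.symm
    have key : ∀ i : ℕ, i ≤ j → ∃ m : ℕ, m ≤ i ∧
        (∀ k, k < i → i - m ≤ k → HasUnstableEigenvalue (A (p k))) ∧
        ‖resetTransition A (fun _ _ => M₀) p d i‖ ≤ u ^ m := by
      intro i
      induction i with
      | zero =>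
        intro _
        refine ⟨0, le_rfl, fun k hk _ => absurd hk (by omega), ?_⟩
        have h1 : ‖resetTransition A (fun _ _ => M₀) p d 0‖ ≤ 1 := by
          simpa [resetTransition] using matNormOneLe ℝ (n := n)
        simpa using h1
      | succ i ih =>
        intro hij
        obtain ⟨m, hmi, hrun, hnorm⟩ := ih (by omega)
        have hΦ0 : (0:ℝ) ≤ ‖resetTransition A (fun _ _ => M₀) p d i‖ := norm_nonneg _
        have hnorm1 : ‖resetTransition A (fun _ _ => M₀) p d (i+1)‖ ≤
            r * ‖exp (d (i+1) • A (p i))‖ * u ^ m := by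
          have hsplit : resetTransition A (fun _ _ => M₀) p d (i+1) =
              M₀ * exp (d (i+1) • A (p i)) * resetTransition A (fun _ _ => M₀) p d i := rfl
          rw [hsplit]
          calc ‖M₀ * exp (d (i+1) • A (p i)) * resetTransition A (fun _ _ => M₀) p d i‖
              ≤ ‖M₀ * exp (d (i+1) • A (p i))‖ * ‖resetTransition A (fun _ _ => M₀) p d i‖ :=
                norm_mul_le _ _
            _ ≤ (‖M₀‖ * ‖exp (d (i+1) • A (p i))‖) *
                ‖resetTransition A (fun _ _ => M₀) p d i‖ :=
                mul_le_mul_of_nonneg_right (norm_mul_le _ _) hΦ0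
            _ ≤ r * ‖exp (d (i+1) • A (p i))‖ * u ^ m := by
                refine mul_le_mul ?_ hnorm hΦ0 ?_
                · exact mul_le_mul_of_nonneg_right (hrM M₀ hM₀) (norm_nonneg _)
                · positivity
        rcases hP (p i) with hst | hun
        · have hd5 := hds (i+1) (by omega) (by omega) (by simpa using hst)
          have hdle : τ (p i) ≤ d (i+1) := le_trans (hττs (p i)) hd5
          have hexple : ‖exp (d (i+1) • A (p i))‖ ≤ ε := hτb (p i) hst (d (i+1)) hdle
          have hmN : m ≤ N := runbound i m hmi (by omega) hrun
          refine ⟨0, by omega, fun k hk1 hk2 => absurd hk2 (by omega), ?_⟩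
          have hpow : u ^ m ≤ u ^ N := pow_le_pow_right₀ hu1 hmN
          have h9 : r * ‖exp (d (i+1) • A (p i))‖ * u ^ m ≤ r * ε * u ^ N := by
            refine mul_le_mul ?_ hpow (by positivity) (by positivity)
            exact mul_le_mul_of_nonneg_left hexple hr0'.le
          have h8 : (0:ℝ) < r * u ^ N + 1 := by positivity
          have h10 : r * ε * u ^ N ≤ 1 := by
            have h11 : r * ε * u ^ N = (r * u ^ N) * (r * u ^ N + 1)⁻¹ := by
              rw [hεdef]; ring
            rw [h11, ← div_eq_mul_inv, div_le_one h8]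
            linarith
          calc ‖resetTransition A (fun _ _ => M₀) p d (i+1)‖
              ≤ r * ‖exp (d (i+1) • A (p i))‖ * u ^ m := hnorm1
            _ ≤ r * ε * u ^ N := h9
            _ ≤ 1 := h10
            _ = u ^ 0 := (pow_zero u).symm
        · have hd1 : d (i+1) ≤ 1 := hdu (i+1) (by omega) (by omega) (by simpa using hun)
          have hd0 : 0 < d (i+1) := hd (i+1) (by omega) (by omega)
          have hexple : ‖exp (d (i+1) • A (p i))‖ ≤ Real.exp a :=
            hexpb (p i) _ hd0.le hd1
          refine ⟨m+1, by omega, ?_, ?_⟩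
          · intro k hk hk2
            rcases Nat.lt_or_ge k i with h | h
            · exact hrun k h (by omega)
            · have hki : k = i := by omega
              rw [hki]; exact hun
          · calc ‖resetTransition A (fun _ _ => M₀) p d (i+1)‖
                ≤ r * ‖exp (d (i+1) • A (p i))‖ * u ^ m := hnorm1
              _ ≤ r * Real.exp a * u ^ m := by
                  refine mul_le_mul_of_nonneg_right ?_ (by positivity)
                  exact mul_le_mul_of_nonneg_left hexple hr0'.le
              _ = u ^ (m+1) := by rw [hudef]; ring
    obtain ⟨m, hmj, hrun, hnorm⟩ := key j le_rfl
    have hmN : m ≤ N := runbound j m hmj le_rfl hrun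
    have hΦN : ‖resetTransition A (fun _ _ => M₀) p d j‖ ≤ u ^ N :=
      le_trans hnorm (pow_le_pow_right₀ hu1 hmN)
    have hlast : ‖exp (s • A (p j))‖ ≤ S := by
      rcases hP (p j) with hst | hun
      · exact le_trans (hKb (p j) hst s hs) (hSK (p j))
      · exact le_trans (hexpb (p j) s hs (hsu hun)) hSe
    calc ‖exp (s • A (p j)) * resetTransition A (fun _ _ => M₀) p d j‖
        ≤ ‖exp (s • A (p j))‖ * ‖resetTransition A (fun _ _ => M₀) p d j‖ := norm_mul_le _ _
      _ ≤ S * u ^ N := mul_le_mul hlast hΦN (norm_nonneg _) hS0.le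
      _ ≤ S * u ^ N + 1 := by linarith

end
end

section
/- Let P be a finite index set and (A_p)_{p∈P} n×n real matrices with P = 𝔰 ∪ 𝔲. Let E ⊆ P × P be a set of admissible switches such that the subrelation E_u = {(p,q) ∈ E : p ∈ 𝔲} contains no directed cycle, and let 𝕄 be a nonempty compact set of n×n real matrices not containing the zero matrix. Then there exist τ* ≥ 0, η* > 0, a nonempty subset 𝓘 ⊆ 𝕄, and a constant C > 0 such that for every j ≥ 0, every sequence p_0, …, p_j ∈ P with (p_{k−1},p_k) ∈ E for 1 ≤ k ≤ j, all durations d_1, …, d_j > 0 with d_k ≥ τ* whenever p_{k−1} ∈ 𝔰 and d_k ≤ η* whenever p_{k−1} ∈ 𝔲, every choice of impulses M_1, …, M_j ∈ 𝓘, and every s ≥ 0 with s ≤ η* whenever p_j ∈ 𝔲, one has ‖exp(s·A_{p_j})·Ψ_j‖ ≤ C; that is, the impulsive switched system governed by the graph E with impulses from 𝓘 is stable under arbitrary impulses for all E-admissible switching signals with dwell time τ* and flee time η*. -/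
open Matrix NormedSpace
open scoped Matrix.Norms.L2Operator ENNReal NNReal

noncomputable section

namespace ImpulseAux

variable {n : ℕ}

lemma norm_one_le : ‖(1 : Matrix (Fin n) (Fin n) ℂ)‖ ≤ 1 := by
  rw [Matrix.cstar_norm_def, _root_.map_one]
  exact ContinuousLinearMap.norm_id_le

lemma pow_mulVec (A : Matrix (Fin n) (Fin n) ℂ) {μ : ℂ} {v : Fin n → ℂ}
    (hv : A *ᵥ v = μ • v) (k : ℕ) : (A ^ k) *ᵥ v = (μ ^ k) • v := by
  induction k with
  | zero => simp
  | succ k ih =>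
    rw [pow_succ, ← Matrix.mulVec_mulVec, hv, Matrix.mulVec_smul, ih, pow_succ]
    rw [smul_smul, mul_comm]

lemma exp_mulVec (A : Matrix (Fin n) (Fin n) ℂ) {μ : ℂ} {v : Fin n → ℂ}
    (hv : A *ᵥ v = μ • v) : exp A *ᵥ v = Complex.exp μ • v := by
  classical
  let φ : Matrix (Fin n) (Fin n) ℂ →ₗ[ℂ] (Fin n → ℂ) :=
    { toFun := fun X => X *ᵥ v
      map_add' := fun X Y => Matrix.add_mulVec X Y v
      map_smul' := fun c X => Matrix.smul_mulVec c X v }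
  let Φ : Matrix (Fin n) (Fin n) ℂ →L[ℂ] (Fin n → ℂ) :=
    ⟨φ, φ.continuous_of_finiteDimensional⟩
  have h1 : exp A *ᵥ v = Φ (exp A) := rfl
  rw [h1, exp_eq_tsum (𝕂 := ℂ), Φ.map_tsum (expSeries_summable' (𝕂 := ℂ) A)]
  have h2 : ∀ k : ℕ, Φ (((k.factorial : ℂ))⁻¹ • A ^ k)
      = (((k.factorial : ℂ))⁻¹ • μ ^ k) • v := by
    intro k
    have : Φ (((k.factorial : ℂ))⁻¹ • A ^ k) = ((k.factorial : ℂ))⁻¹ • (A ^ k *ᵥ v) := by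
      simp [Φ, φ]
    rw [this, pow_mulVec A hv k, smul_smul, smul_eq_mul]
  rw [tsum_congr h2, (expSeries_summable' (𝕂 := ℂ) μ).tsum_smul_const]
  congr 1
  rw [Complex.exp_eq_exp_ℂ, exp_eq_tsum (𝕂 := ℂ)]

lemma spectrum_exp (A : Matrix (Fin n) (Fin n) ℂ) {ν : ℂ}
    (hν : ν ∈ spectrum ℂ (exp A)) : ∃ μ ∈ spectrum ℂ A, Complex.exp μ = ν := by
  classical
  have hν' : Module.End.HasEigenvalue (Matrix.toLinAlgEquiv' (exp A)) ν := by
    rw [Module.End.hasEigenvalue_iff_mem_spectrum, AlgEquiv.spectrum_eq]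
    exact hν
  set W := Module.End.eigenspace (Matrix.toLinAlgEquiv' (exp A)) ν with hWdef
  obtain ⟨v₀, hv₀⟩ := hν'.exists_hasEigenvector
  haveI : Nontrivial W := by
    refine ⟨⟨⟨v₀, hv₀.1⟩, 0, ?_⟩⟩
    simp only [ne_eq, Submodule.mk_eq_zero]
    exact hv₀.2
  have hcomm : exp A * A = A * exp A := ((Commute.refl A).exp_left).eq
  have hinv : ∀ x ∈ W, Matrix.toLinAlgEquiv' A x ∈ W := by
    intro x hx
    rw [hWdef, Module.End.mem_eigenspace_iff] at hx ⊢
    show Matrix.toLinAlgEquiv' (exp A) (A *ᵥ x) = ν • (A *ᵥ x)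
    show exp A *ᵥ (A *ᵥ x) = ν • (A *ᵥ x)
    have hx' : exp A *ᵥ x = ν • x := hx
    rw [Matrix.mulVec_mulVec, hcomm, ← Matrix.mulVec_mulVec, hx', Matrix.mulVec_smul]
  obtain ⟨μ, hμ⟩ := Module.End.exists_eigenvalue
    ((Matrix.toLinAlgEquiv' A).restrict hinv)
  obtain ⟨w, hw⟩ := hμ.exists_hasEigenvector
  have hw0 : (w : Fin n → ℂ) ≠ 0 := by
    intro h
    exact hw.2 (Subtype.coe_injective (by simpa using h))
  have hfw : A *ᵥ (w : Fin n → ℂ) = μ • (w : Fin n → ℂ) := by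
    have h1 : ((Matrix.toLinAlgEquiv' A).restrict hinv) w = μ • w :=
      Module.End.mem_eigenspace_iff.mp hw.1
    have h2 := congrArg (Subtype.val) h1
    rw [LinearMap.restrict_coe_apply] at h2
    exact h2
  have hexpw : exp A *ᵥ (w : Fin n → ℂ) = Complex.exp μ • (w : Fin n → ℂ) :=
    exp_mulVec A hfw
  have hνw : exp A *ᵥ (w : Fin n → ℂ) = ν • (w : Fin n → ℂ) :=
    Module.End.mem_eigenspace_iff.mp w.2
  have hμν : Complex.exp μ = ν := by
    by_contra hne
    have : (Complex.exp μ - ν) • (w : Fin n → ℂ) = 0 := by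
      rw [sub_smul, ← hexpw, ← hνw, sub_self]
    rcases smul_eq_zero.mp this with h | h
    · exact hne (by linear_combination h)
    · exact hw0 h
  refine ⟨μ, ?_, hμν⟩
  have : Module.End.HasEigenvalue (Matrix.toLinAlgEquiv' A) μ :=
    Module.End.hasEigenvalue_of_hasEigenvector ⟨Module.End.mem_eigenspace_iff.mpr hfw, hw0⟩
  rwa [Module.End.hasEigenvalue_iff_mem_spectrum, AlgEquiv.spectrum_eq] at this

lemma spectralRadius_exp_lt_one (A : Matrix (Fin n) (Fin n) ℂ)
    (hA : ∀ μ ∈ spectrum ℂ A, μ.re < 0) : spectralRadius ℂ (exp A) < 1 := by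
  rcases (spectrum ℂ A).eq_empty_or_nonempty with hs | hs
  · have h0 : spectrum ℂ (exp A) = ∅ := by
      ext ν
      simp only [Set.mem_empty_iff_false, iff_false]
      intro hν
      obtain ⟨μ, hμ, -⟩ := spectrum_exp A hν
      simp [hs] at hμ
    rw [spectralRadius, h0]
    simp
  · obtain ⟨μ₀, hμ₀, hmax⟩ := (spectrum.isCompact A).exists_isMaxOn hs
      Complex.continuous_re.continuousOn
    have hle : spectralRadius ℂ (exp A) ≤ ENNReal.ofReal (Real.exp μ₀.re) := by
      rw [spectralRadius]
      refine iSup₂_le fun ν hν => ?_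
      obtain ⟨μ, hμ, rfl⟩ := spectrum_exp A hν
      rw [show ((‖Complex.exp μ‖₊ : ℝ≥0) : ℝ≥0∞) = ENNReal.ofReal ‖Complex.exp μ‖ from (ENNReal.ofReal_eq_coe_nnreal _).symm]
      apply ENNReal.ofReal_le_ofReal
      rw [Complex.norm_exp]
      exact Real.exp_le_exp.mpr (hmax hμ)
    refine lt_of_le_of_lt hle ?_
    rw [← ENNReal.ofReal_one]
    refine ENNReal.ofReal_lt_ofReal_iff (by norm_num) |>.mpr ?_
    exact Real.exp_lt_one_iff.mpr (hA μ₀ hμ₀)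

lemma pow_decay (B : Matrix (Fin n) (Fin n) ℂ) (h : spectralRadius ℂ B < 1) :
    ∃ r : ℝ, 0 ≤ r ∧ r < 1 ∧ ∃ m₀ : ℕ, ∀ m, m₀ ≤ m → ‖B ^ m‖ ≤ r ^ m := by
  obtain ⟨r, hr1, hr2⟩ := ENNReal.lt_iff_exists_nnreal_btwn.mp h
  have h1 : ∀ᶠ m : ℕ in Filter.atTop, (‖B ^ m‖₊ : ℝ≥0∞) ^ (1 / (m : ℝ)) < r :=
    (spectrum.pow_nnnorm_pow_one_div_tendsto_nhds_spectralRadius B).eventually_lt_const hr1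
  obtain ⟨m₀, hm₀⟩ := Filter.eventually_atTop.mp (h1.and (Filter.eventually_ge_atTop 1))
  refine ⟨r, r.2, by exact_mod_cast hr2, m₀, fun m hm => ?_⟩
  obtain ⟨hlt, hm1⟩ := hm₀ m hm
  have hmpos : (0 : ℝ) < m := by exact_mod_cast hm1
  have h2 := ENNReal.rpow_le_rpow hlt.le (le_of_lt hmpos)
  rw [← ENNReal.rpow_mul, one_div, inv_mul_cancel₀ (ne_of_gt hmpos), ENNReal.rpow_one] at h2
  have h3 : ((r : ℝ≥0∞) ^ (m : ℝ)) = ((r ^ m : ℝ≥0) : ℝ≥0∞) := by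
    rw [← ENNReal.coe_rpow_of_nonneg r (Nat.cast_nonneg m), NNReal.rpow_natCast]
  rw [h3, ENNReal.coe_le_coe] at h2
  calc ‖B ^ m‖ = ((‖B ^ m‖₊ : ℝ≥0) : ℝ) := rfl
    _ ≤ ((r ^ m : ℝ≥0) : ℝ) := by exact_mod_cast h2
    _ = (r : ℝ) ^ m := by push_cast; ring

lemma cont_bound (A : Matrix (Fin n) (Fin n) ℂ) (c : ℝ) :
    ∃ K : ℝ, 0 ≤ K ∧ ∀ s ∈ Set.Icc (0 : ℝ) c, ‖exp (s • A)‖ ≤ K := by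
  by_cases hc : (0 : ℝ) ≤ c
  · have hcont : ContinuousOn (fun s : ℝ => ‖exp (s • A)‖) (Set.Icc 0 c) :=
      (((continuous_iff_continuousAt.2 fun x => (exp_analytic (𝕂 := ℂ) (𝔸 := Matrix (Fin n) (Fin n) ℂ) x).continuousAt).comp (continuous_id.smul continuous_const)).norm).continuousOn
    obtain ⟨s₀, -, hs₀⟩ := isCompact_Icc.exists_isMaxOn ⟨0, by simp [hc]⟩ hcont
    exact ⟨‖exp (s₀ • A)‖, norm_nonneg _, fun s hs => hs₀ hs⟩
  · exact ⟨0, le_rfl, fun s hs => absurd (le_trans hs.1 hs.2) hc⟩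

lemma exp_decay (A : Matrix (Fin n) (Fin n) ℂ)
    (hA : ∀ μ ∈ spectrum ℂ A, μ.re < 0) (ε : ℝ) (hε : 0 < ε) :
    ∃ τ : ℝ, 0 ≤ τ ∧ ∀ d : ℝ, τ ≤ d → ‖exp (d • A)‖ ≤ ε := by
  obtain ⟨r, hr0, hr1, m₀, hm₀⟩ := pow_decay (exp A) (spectralRadius_exp_lt_one A hA)
  obtain ⟨K, hK0, hK⟩ := cont_bound A 1
  have htend : Filter.Tendsto (fun m : ℕ => K * r ^ m) Filter.atTop (nhds 0) := by
    simpa using (tendsto_pow_atTop_nhds_zero_of_lt_one hr0 hr1).const_mul K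
  have hev : ∀ᶠ m : ℕ in Filter.atTop, K * r ^ m < ε := htend.eventually_lt_const hε
  obtain ⟨m₁, hm₁⟩ := Filter.eventually_atTop.mp (hev.and (Filter.eventually_ge_atTop m₀))
  obtain ⟨hm₁ε, hm₁₀⟩ := hm₁ m₁ le_rfl
  refine ⟨(m₁ : ℝ), Nat.cast_nonneg m₁, fun d hd => ?_⟩
  have hd0 : (0 : ℝ) ≤ d := le_trans (Nat.cast_nonneg m₁) hd
  set m := ⌊d⌋₊ with hmdef
  have hmm : m₁ ≤ m := Nat.le_floor hd
  have hdm : (m : ℝ) ≤ d := Nat.floor_le hd0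
  have hsm : d - (m : ℝ) < 1 := by
    have := Nat.lt_floor_add_one d
    simp only [← hmdef] at this
    linarith
  have hsplit : d • A = (d - (m : ℝ)) • A + (m : ℝ) • A := by
    rw [← add_smul]; ring_nf
  have hcomm : Commute ((d - (m : ℝ)) • A) ((m : ℝ) • A) :=
    ((Commute.refl A).smul_left _).smul_right _
  rw [hsplit, Matrix.exp_add_of_commute _ _ hcomm]
  rw [Nat.cast_smul_eq_nsmul ℝ m A, Matrix.exp_nsmul]
  calc ‖exp ((d - (m : ℝ)) • A) * (exp A) ^ m‖
      ≤ ‖exp ((d - (m : ℝ)) • A)‖ * ‖(exp A) ^ m‖ := norm_mul_le _ _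
    _ ≤ K * r ^ m :=
        mul_le_mul (hK _ ⟨by linarith, by linarith⟩) (hm₀ m (le_trans hm₁₀ hmm))
          (norm_nonneg _) hK0
    _ ≤ K * r ^ m₁ := by
        have h4 := pow_le_pow_of_le_one hr0 hr1.le hmm
        nlinarith
    _ ≤ ε := hm₁ε.le

lemma map_exp_ofReal (X : Matrix (Fin n) (Fin n) ℝ) :
    (exp X).map Complex.ofReal = exp (X.map Complex.ofReal) := by
  have hcont : Continuous (⇑(Complex.ofRealHom.mapMatrix :
      Matrix (Fin n) (Fin n) ℝ →+* Matrix (Fin n) (Fin n) ℂ)) := by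
    have : ⇑(Complex.ofRealHom.mapMatrix :
        Matrix (Fin n) (Fin n) ℝ →+* Matrix (Fin n) (Fin n) ℂ)
        = fun X : Matrix (Fin n) (Fin n) ℝ => X.map Complex.ofReal := by
      funext X; rw [RingHom.mapMatrix_apply]; rfl
    rw [this]
    exact continuous_id.matrix_map Complex.continuous_ofReal
  have h := map_exp_of_mem_ball (𝕂 := ℝ) (Complex.ofRealHom.mapMatrix :
      Matrix (Fin n) (Fin n) ℝ →+* Matrix (Fin n) (Fin n) ℂ) hcont X
      ((expSeries_radius_eq_top ℝ (Matrix (Fin n) (Fin n) ℝ)).symm ▸ edist_lt_top _ _)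
  rw [RingHom.mapMatrix_apply, RingHom.mapMatrix_apply] at h
  have h2 : exp (X.map ⇑Complex.ofRealHom) = exp (X.map ⇑Complex.ofRealHom) :=
    rfl
  rw [h2] at h
  exact h

lemma map_smul_ofReal (X : Matrix (Fin n) (Fin n) ℝ) (d : ℝ) :
    (d • X).map Complex.ofReal = d • (X.map Complex.ofReal) := by
  ext i j
  simp [Matrix.map_apply, Complex.real_smul]

lemma map_mul_ofReal (X Y : Matrix (Fin n) (Fin n) ℝ) :
    (X * Y).map Complex.ofReal = X.map Complex.ofReal * Y.map Complex.ofReal :=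
  Matrix.map_mul (f := Complex.ofRealHom)

lemma norm_le_norm_map (X : Matrix (Fin n) (Fin n) ℝ) :
    ‖X‖ ≤ ‖X.map Complex.ofReal‖ := by
  rw [Matrix.l2_opNorm_def]
  refine ContinuousLinearMap.opNorm_le_bound _ (norm_nonneg _) fun x => ?_
  set x' : EuclideanSpace ℂ (Fin n) := WithLp.toLp 2 (fun i => (x i : ℂ)) with hx'def
  have hx' : ‖x'‖ = ‖x‖ := by
    rw [EuclideanSpace.norm_eq, EuclideanSpace.norm_eq]
    congr 1
    refine Finset.sum_congr rfl fun i _ => ?_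
    simp [hx'def, Complex.norm_real]
  have hmv : (X.map Complex.ofReal) *ᵥ x' = fun i => ((X *ᵥ x) i : ℂ) := by
    funext i
    simp only [Matrix.mulVec, dotProduct, Matrix.map_apply, hx'def]
    push_cast
    rfl
  show ‖(EuclideanSpace.equiv (Fin n) ℝ).symm (X *ᵥ x)‖ ≤ ‖X.map Complex.ofReal‖ * ‖x‖
  have key : ‖(EuclideanSpace.equiv (Fin n) ℝ).symm (X *ᵥ x)‖
      = ‖(EuclideanSpace.equiv (Fin n) ℂ).symm ((X.map Complex.ofReal) *ᵥ x')‖ := by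
    rw [EuclideanSpace.norm_eq, EuclideanSpace.norm_eq]
    congr 1
    refine Finset.sum_congr rfl fun i _ => ?_
    rw [hmv]
    simp [Complex.norm_real]
  rw [key, ← hx']
  exact Matrix.l2_opNorm_mulVec _ _

end ImpulseAux

/-- The length of the maximal run of consecutive `U`-indices ending just before `j`. -/
def unstableRun {P : Type*} (U : P → Prop) [DecidablePred U] (p : ℕ → P) : ℕ → ℕ
  | 0 => 0
  | j + 1 => if U (p j) then unstableRun U p j + 1 else 0

namespace ImpulseAux

lemma unstableRun_le {P : Type*} (U : P → Prop) [DecidablePred U] (p : ℕ → P) (j : ℕ) :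
    unstableRun U p j ≤ j ∧ ∀ k, j - unstableRun U p j ≤ k → k < j → U (p k) := by
  induction j with
  | zero => exact ⟨le_rfl, fun k _ hk => absurd hk (Nat.not_lt_zero k)⟩
  | succ j ih =>
    by_cases hU : U (p j)
    · refine ⟨?_, ?_⟩
      · simp only [unstableRun, if_pos hU]
        omega
      · intro k hk1 hk2
        simp only [unstableRun, if_pos hU, Nat.succ_sub_succ] at hk1
        rcases Nat.lt_succ_iff_lt_or_eq.mp hk2 with h | h
        · exact ih.2 k hk1 h
        · rwa [h]
    · refine ⟨?_, ?_⟩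
      · simp only [unstableRun, if_neg hU]; omega
      · intro k hk1 hk2
        simp only [unstableRun, if_neg hU, Nat.sub_zero] at hk1
        omega

lemma unstableRun_le_card {P : Type*} [Fintype P] (U : P → Prop) [DecidablePred U]
    (E : P → P → Prop) (hEu : NoDirectedCycle (fun a b => E a b ∧ U a))
    (p : ℕ → P) (j : ℕ) (hE : ∀ k, 1 ≤ k → k ≤ j → E (p (k - 1)) (p k)) :
    unstableRun U p j ≤ Fintype.card P := by
  by_contra hcon
  push_neg at hcon
  obtain ⟨hrun_le, hunst⟩ := unstableRun_le U p j
  set m := unstableRun U p j with hm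
  set base := j - m with hbase
  have hbm : base + m = j := by omega
  set N := Fintype.card P with hN
  have hNm : N + 1 ≤ m := hcon
  have chain : ∀ a, base ≤ a → ∀ b, a ≤ b → b < j →
      Relation.ReflTransGen (fun x y => E x y ∧ U x) (p a) (p b) := by
    intro a hba b hab hbj
    induction b, hab using Nat.le_induction with
    | base => exact Relation.ReflTransGen.refl
    | succ b hab ih =>
      refine (ih (by omega)).tail ⟨?_, hunst b (by omega) (by omega)⟩
      simpa using hE (b + 1) (by omega) (by omega)
  have key : ∀ a b : ℕ, base ≤ a → a < b → b < j → p a = p b → False := by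
    intro a b hba hab hbj hpe
    have hedge : E (p a) (p (a + 1)) := by simpa using hE (a + 1) (by omega) (by omega)
    have hchain : Relation.ReflTransGen (fun x y => E x y ∧ U x) (p (a + 1)) (p a) := by
      rw [hpe]
      exact chain (a + 1) (by omega) b (by omega) hbj
    exact hEu (p a) (p (a + 1)) ⟨hedge, hunst a hba (by omega)⟩ hchain
  obtain ⟨i, i', hne, heq⟩ := Fintype.exists_ne_map_eq_of_card_lt
    (fun i : Fin (N + 1) => p (base + i)) (by simp [hN])
  have hi := i.isLt
  have hi' := i'.isLt
  rcases hne.lt_or_gt with hlt | hlt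
  · have hii : (i : ℕ) < (i' : ℕ) := hlt
    exact key (base + i) (base + i') (by omega) (by omega) (by omega) heq
  · have hii : (i' : ℕ) < (i : ℕ) := hlt
    exact key (base + i') (base + i) (by omega) (by omega) (by omega) heq.symm

end ImpulseAux



lemma ImpulseAux.norm_triple {α : Type*} [NormedRing α] {X Y Z : α} {a b c : ℝ}
    (hX : ‖X‖ ≤ a) (hY : ‖Y‖ ≤ b) (hZ : ‖Z‖ ≤ c) (ha : 0 ≤ a) (hc : 0 ≤ c) :
    ‖X * Y * Z‖ ≤ a * b * c :=
  le_trans (norm_mul_le _ _)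
    (mul_le_mul (le_trans (norm_mul_le _ _) (mul_le_mul hX hY (norm_nonneg _) ha)) hZ
      (norm_nonneg _) (mul_nonneg ha (le_trans (norm_nonneg _) hY)))

/-- Given a switching graph `E` whose unstable part is acyclic and a nonempty compact set
`𝕄` of nonzero matrices, there are a dwell time `τ* ≥ 0`, a flee time `η* > 0` and a
nonempty set `𝓘 ⊆ 𝕄` of impulses making the impulsive switched system governed by `E`
stable under arbitrary impulses for all `E`-admissible switching signals with dwell time
`τ*` and flee time `η*`. -/
theorem exists_time_constraints_and_impulses_from_compact {n : ℕ} {P : Type*} [Fintype P]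
    (A : P → Matrix (Fin n) (Fin n) ℝ)
    (hP : ∀ p, HurwitzStable (A p) ∨ HasUnstableEigenvalue (A p))
    (E : P → P → Prop)
    (hEu : NoDirectedCycle (fun p q => E p q ∧ HasUnstableEigenvalue (A p)))
    (𝕄 : Set (Matrix (Fin n) (Fin n) ℝ)) (h𝕄ne : 𝕄.Nonempty) (h𝕄 : IsCompact 𝕄)
    (h𝕄0 : (0 : Matrix (Fin n) (Fin n) ℝ) ∉ 𝕄) :
    ∃ τs : ℝ, 0 ≤ τs ∧ ∃ ηs : ℝ, 0 < ηs ∧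
      ∃ 𝓘 : Set (Matrix (Fin n) (Fin n) ℝ), 𝓘.Nonempty ∧ 𝓘 ⊆ 𝕄 ∧
      ∃ C > (0 : ℝ), ∀ (j : ℕ) (p : ℕ → P) (d : ℕ → ℝ) (M : ℕ → Matrix (Fin n) (Fin n) ℝ),
        (∀ k, 1 ≤ k → k ≤ j → E (p (k - 1)) (p k)) →
        (∀ k, 1 ≤ k → k ≤ j → 0 < d k) →
        (∀ k, 1 ≤ k → k ≤ j → HurwitzStable (A (p (k - 1))) → τs ≤ d k) →
        (∀ k, 1 ≤ k → k ≤ j → HasUnstableEigenvalue (A (p (k - 1))) → d k ≤ ηs) →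
        (∀ k, 1 ≤ k → k ≤ j → M k ∈ 𝓘) →
        ∀ s : ℝ, 0 ≤ s → (HasUnstableEigenvalue (A (p j)) → s ≤ ηs) →
          ‖exp (s • A (p j)) * impulsiveTransition A M p d j‖ ≤ C := by
  classical
  obtain ⟨M₀, hM₀⟩ := h𝕄ne
  have hA'eq : ∀ q : P, (A q).map (Complex.ofReal ·) = (A q).map Complex.ofReal :=
    fun q => rfl
  set m₀ : ℝ := ‖M₀.map Complex.ofReal‖ with hm₀def
  have hm₀0 : 0 ≤ m₀ := norm_nonneg _
  have hKex : ∀ q : P, ∃ K : ℝ, 0 ≤ K ∧ ∀ s ∈ Set.Icc (0:ℝ) 1,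
      ‖exp (s • (A q).map Complex.ofReal)‖ ≤ K :=
    fun q => ImpulseAux.cont_bound ((A q).map Complex.ofReal) 1
  choose Kf hKf0 hKf using hKex
  set K : ℝ := 1 + ∑ q : P, Kf q with hKdef
  have hKsum : ∀ q : P, Kf q ≤ K := by
    intro q
    have h1 : Kf q ≤ ∑ q : P, Kf q :=
      Finset.single_le_sum (fun q _ => hKf0 q) (Finset.mem_univ q)
    have h2 : (0:ℝ) ≤ ∑ q : P, Kf q := Finset.sum_nonneg fun q _ => hKf0 q
    simp only [hKdef]; linarith
  have hK1 : 1 ≤ K := by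
    have : (0:ℝ) ≤ ∑ q : P, Kf q := Finset.sum_nonneg fun q _ => hKf0 q
    simp only [hKdef]; linarith
  set B : ℝ := (1 + m₀) * K with hBdef
  have hB1 : 1 ≤ B := by nlinarith
  have hB0 : 0 < B := lt_of_lt_of_le one_pos hB1
  set N := Fintype.card P with hNdef
  have hBN0 : 0 < B ^ N := pow_pos hB0 N
  set ε : ℝ := (B ^ N)⁻¹ / (1 + m₀) with hεdef
  have hε : 0 < ε := div_pos (inv_pos.mpr hBN0) (by linarith)
  have hεB : (1 + m₀) * ε = (B ^ N)⁻¹ := by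
    rw [hεdef]; field_simp
  have hτex : ∀ q : P, ∃ t : ℝ, 0 ≤ t ∧
      (HurwitzStable (A q) → ∀ dd : ℝ, t ≤ dd →
        ‖exp (dd • (A q).map Complex.ofReal)‖ ≤ ε) := by
    intro q
    by_cases hq : HurwitzStable (A q)
    · obtain ⟨t, ht0, ht⟩ := ImpulseAux.exp_decay ((A q).map Complex.ofReal) hq ε hε
      exact ⟨t, ht0, fun _ => ht⟩
    · exact ⟨0, le_rfl, fun h => absurd h hq⟩
  choose τf hτf0 hτf using hτex
  set τs : ℝ := ∑ q : P, τf q with hτsdef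
  have hτs0 : 0 ≤ τs := Finset.sum_nonneg fun q _ => hτf0 q
  have hτsq : ∀ q : P, τf q ≤ τs :=
    fun q => Finset.single_le_sum (fun q _ => hτf0 q) (Finset.mem_univ q)
  have hGex : ∀ q : P, ∃ G : ℝ, 0 ≤ G ∧ ∀ s ∈ Set.Icc (0:ℝ) (τf q),
      ‖exp (s • (A q).map Complex.ofReal)‖ ≤ G :=
    fun q => ImpulseAux.cont_bound ((A q).map Complex.ofReal) (τf q)
  choose Gf hGf0 hGf using hGex
  have hGsum : ∀ q : P, Gf q ≤ ∑ q : P, Gf q :=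
    fun q => Finset.single_le_sum (fun q _ => hGf0 q) (Finset.mem_univ q)
  have hGs0 : (0:ℝ) ≤ ∑ q : P, Gf q := Finset.sum_nonneg fun q _ => hGf0 q
  set Cfin : ℝ := ε + K + ∑ q : P, Gf q with hCfindef
  have hCfin1 : 1 ≤ Cfin := by simp only [hCfindef]; linarith
  refine ⟨τs, hτs0, 1, one_pos, {M₀}, ⟨M₀, rfl⟩, by simpa using hM₀,
    Cfin * B ^ N, mul_pos (lt_of_lt_of_le one_pos hCfin1) hBN0, ?_⟩
  intro j p d M hE hd hτd hηd hM s hs hsη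
  have hMeq : ∀ k, 1 ≤ k → k ≤ j → M k = M₀ := fun k h1 h2 => hM k h1 h2
  have main : ∀ i, i ≤ j →
      ‖(impulsiveTransition A M p d i).map Complex.ofReal‖
        ≤ B ^ (unstableRun (fun q => HasUnstableEigenvalue (A q)) p i) := by
    intro i
    induction i with
    | zero =>
      intro _
      have h0 : impulsiveTransition A M p d 0 = 1 := rfl
      have h1 : unstableRun (fun q => HasUnstableEigenvalue (A q)) p 0 = 0 := rfl
      rw [h0, h1, pow_zero, Matrix.map_one Complex.ofReal Complex.ofReal_zero
        Complex.ofReal_one]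
      exact ImpulseAux.norm_one_le
    | succ i ih =>
      intro hij
      have hi : i ≤ j := by omega
      have ihi := ih hi
      have heq : impulsiveTransition A M p d (i+1)
          = M (i+1) * exp (d (i+1) • A (p i)) * impulsiveTransition A M p d i := rfl
      rw [heq, ImpulseAux.map_mul_ofReal, ImpulseAux.map_mul_ofReal,
        hMeq (i+1) (by omega) hij, ImpulseAux.map_exp_ofReal, ImpulseAux.map_smul_ofReal]
      have hd' : 0 < d (i+1) := hd (i+1) (by omega) hij
      by_cases hUi : HasUnstableEigenvalue (A (p i))
      · have hd1 : d (i+1) ≤ 1 := hηd (i+1) (by omega) hij hUi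
        have hexp : ‖exp (d (i+1) • (A (p i)).map Complex.ofReal)‖ ≤ K :=
          le_trans (hKf (p i) _ ⟨hd'.le, hd1⟩) (hKsum (p i))
        have hrs : unstableRun (fun q => HasUnstableEigenvalue (A q)) p (i+1)
            = unstableRun (fun q => HasUnstableEigenvalue (A q)) p i + 1 := by
          simp [unstableRun, hUi]
        calc ‖M₀.map Complex.ofReal * exp (d (i+1) • (A (p i)).map Complex.ofReal) *
              (impulsiveTransition A M p d i).map Complex.ofReal‖
            ≤ m₀ * K * B ^ (unstableRun (fun q => HasUnstableEigenvalue (A q)) p i) :=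
              ImpulseAux.norm_triple le_rfl hexp ihi hm₀0 (pow_nonneg hB0.le _)
          _ ≤ B * B ^ (unstableRun (fun q => HasUnstableEigenvalue (A q)) p i) := by
              have hmK : m₀ * K ≤ B := by nlinarith
              exact mul_le_mul_of_nonneg_right hmK (pow_nonneg hB0.le _)
          _ = B ^ (unstableRun (fun q => HasUnstableEigenvalue (A q)) p (i+1)) := by
              rw [hrs, pow_succ']
      · have hS : HurwitzStable (A (p i)) := (hP (p i)).resolve_right hUi
        have hds : τs ≤ d (i+1) := hτd (i+1) (by omega) hij hS
        have hexp : ‖exp (d (i+1) • (A (p i)).map Complex.ofReal)‖ ≤ ε :=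
          hτf (p i) hS (d (i+1)) (le_trans (hτsq (p i)) hds)
        have hrs : unstableRun (fun q => HasUnstableEigenvalue (A q)) p (i+1) = 0 := by
          simp [unstableRun, hUi]
        have hrun : unstableRun (fun q => HasUnstableEigenvalue (A q)) p i ≤ N :=
          ImpulseAux.unstableRun_le_card _ E hEu p i (fun k h1 h2 => hE k h1 (h2.trans hi))
        calc ‖M₀.map Complex.ofReal * exp (d (i+1) • (A (p i)).map Complex.ofReal) *
              (impulsiveTransition A M p d i).map Complex.ofReal‖
            ≤ m₀ * ε * B ^ (unstableRun (fun q => HasUnstableEigenvalue (A q)) p i) :=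
              ImpulseAux.norm_triple le_rfl hexp ihi hm₀0 (pow_nonneg hB0.le _)
          _ ≤ ((1 + m₀) * ε) * B ^ N := by
              refine mul_le_mul (by nlinarith) (pow_le_pow_right₀ hB1 hrun)
                (pow_nonneg hB0.le _) (mul_nonneg (by linarith) hε.le)
          _ = 1 := by rw [hεB, inv_mul_cancel₀ (ne_of_gt hBN0)]
          _ = B ^ (unstableRun (fun q => HasUnstableEigenvalue (A q)) p (i+1)) := by
              rw [hrs, pow_zero]
  have hrunj : unstableRun (fun q => HasUnstableEigenvalue (A q)) p j ≤ N :=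
    ImpulseAux.unstableRun_le_card _ E hEu p j hE
  have hmainj := main j le_rfl
  have hfin : ‖exp (s • (A (p j)).map Complex.ofReal)‖ ≤ Cfin := by
    by_cases hUj : HasUnstableEigenvalue (A (p j))
    · have h1 := hKf (p j) s ⟨hs, hsη hUj⟩
      have h2 := hKsum (p j)
      simp only [hCfindef]; linarith
    · have hS : HurwitzStable (A (p j)) := (hP (p j)).resolve_right hUj
      rcases le_or_gt (τf (p j)) s with h | h
      · have h1 := hτf (p j) hS s h
        simp only [hCfindef]; linarith
      · have h1 := hGf (p j) s ⟨hs, h.le⟩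
        have h2 := hGsum (p j)
        simp only [hCfindef]; linarith
  calc ‖exp (s • A (p j)) * impulsiveTransition A M p d j‖
      ≤ ‖(exp (s • A (p j)) * impulsiveTransition A M p d j).map Complex.ofReal‖ :=
        ImpulseAux.norm_le_norm_map _
    _ = ‖exp (s • (A (p j)).map Complex.ofReal) *
          (impulsiveTransition A M p d j).map Complex.ofReal‖ := by
        rw [ImpulseAux.map_mul_ofReal, ImpulseAux.map_exp_ofReal,
          ImpulseAux.map_smul_ofReal]
    _ ≤ Cfin * B ^ (unstableRun (fun q => HasUnstableEigenvalue (A q)) p j) :=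
        le_trans (norm_mul_le _ _)
          (mul_le_mul hfin hmainj (norm_nonneg _) (by linarith))
    _ ≤ Cfin * B ^ N :=
        mul_le_mul_of_nonneg_left (pow_le_pow_right₀ hB1 hrunj) (by linarith)
end
end

section
/- Let P be a finite index set and (A_p)_{p∈P} n×n real matrices with P = 𝔰 ∪ 𝔲. Suppose that for each p ∈ P there is a factorization A_p = P_p·J_p·P_p⁻¹ with P_p an invertible n×n complex matrix, together with constants c_p > 0 and rates λ_p > 0 for p ∈ 𝔰 and μ_p > 0 for p ∈ 𝔲 such that ‖exp(t·J_p)‖ ≤ c_p·e^{−λ_p·t} for all t ≥ 0 when p ∈ 𝔰 and ‖exp(t·J_p)‖ ≤ c_p·e^{μ_p·t} for all t ≥ 0 when p ∈ 𝔲. Let E ⊆ P × P be a set of admissible switches containing at least one pair with first coordinate in 𝔰 and at least one with first coordinate in 𝔲, and let (R_{(p,q)})_{(p,q)∈E} be nonzero n×n real reset matrices. Define τ_R = max{ ln(c_p·‖P_q⁻¹·R_{(p,q)}·P_p‖)/λ_p : (p,q) ∈ E, p ∈ 𝔰 } and η_R = −max{ ln(c_p·‖P_q⁻¹·R_{(p,q)}·P_p‖)/μ_p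 : (p,q) ∈ E, p ∈ 𝔲 }. Then there exists C > 0 such that for every j ≥ 0, every sequence p_0, …, p_j ∈ P with (p_{k−1},p_k) ∈ E for 1 ≤ k ≤ j, all durations d_1, …, d_j > 0 with d_k ≥ τ_R whenever p_{k−1} ∈ 𝔰 and d_k ≤ η_R whenever p_{k−1} ∈ 𝔲, and every s ≥ 0 with s ≤ η_R whenever p_j ∈ 𝔲, one has ‖exp(s·A_{p_j})·Φ_j‖ ≤ C; that is, the reset switched system governed by the graph E is stable for all E-admissible switching signals with dwell time τ_R and flee time η_R. -/
open Matrix NormedSpace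
open scoped Matrix.Norms.L2Operator

noncomputable section

lemma aux_norm_one_le {n : ℕ} : ‖(1 : Matrix (Fin n) (Fin n) ℂ)‖ ≤ 1 := by
  rw [Matrix.cstar_norm_def, _root_.map_one]
  exact ContinuousLinearMap.norm_id_le

lemma aux_map_mul {n : ℕ} (M N : Matrix (Fin n) (Fin n) ℝ) :
    (M * N).map (Complex.ofReal ·) = M.map (Complex.ofReal ·) * N.map (Complex.ofReal ·) :=
  Matrix.map_mul (f := Complex.ofRealHom)

lemma aux_exp_map {n : ℕ} (t : ℝ) (M : Matrix (Fin n) (Fin n) ℝ) :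
    (exp (t • M)).map (Complex.ofReal ·) = exp ((t : ℂ) • M.map (Complex.ofReal ·)) := by
  have hc : Continuous (Complex.ofRealHom.mapMatrix :
      Matrix (Fin n) (Fin n) ℝ → Matrix (Fin n) (Fin n) ℂ) :=
    Continuous.matrix_map continuous_id Complex.continuous_ofReal
  have h1 : (exp (t • M)).map (Complex.ofReal ·) =
      Complex.ofRealHom.mapMatrix (exp (t • M)) := rfl
  have h2 : Complex.ofRealHom.mapMatrix (exp (t • M)) =
      exp (Complex.ofRealHom.mapMatrix (t • M)) := by
    letI iR : NormedRing (Matrix (Fin n) (Fin n) ℝ) := Matrix.linftyOpNormedRing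
    letI : NormedAlgebra ℚ (Matrix (Fin n) (Fin n) ℝ) := Matrix.linftyOpNormedAlgebra
    letI : NormedRing (Matrix (Fin n) (Fin n) ℂ) := Matrix.linftyOpNormedRing
    letI : NormedAlgebra ℚ (Matrix (Fin n) (Fin n) ℂ) := Matrix.linftyOpNormedAlgebra
    haveI : @CompleteSpace (Matrix (Fin n) (Fin n) ℝ) iR.toUniformSpace :=
      (inferInstance : CompleteSpace (Fin n → Fin n → ℝ))
    exact map_exp _ hc _
  rw [h1, h2]
  congr 1
  ext i j
  simp [Matrix.map_apply, Complex.real_smul]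

lemma aux_norm_real_le {n : ℕ} (M : Matrix (Fin n) (Fin n) ℝ) :
    ‖M‖ ≤ ‖M.map (Complex.ofReal ·)‖ := by
  rw [Matrix.l2_opNorm_def]
  refine ContinuousLinearMap.opNorm_le_bound _ (norm_nonneg _) fun x => ?_
  set z : EuclideanSpace ℂ (Fin n) := (WithLp.equiv 2 _).symm fun i => ((x i : ℝ) : ℂ) with hzdef
  have hz : ‖z‖ = ‖x‖ := by
    simp [hzdef, EuclideanSpace.norm_eq]
  have key : ∀ i, ((M.map (Complex.ofReal ·)) *ᵥ (WithLp.equiv 2 _ z)) i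
      = ((M *ᵥ (WithLp.equiv 2 _ x)) i : ℂ) := by
    intro i
    simp [Matrix.mulVec, dotProduct, Matrix.map_apply, hzdef]
  have hb := Matrix.l2_opNorm_mulVec (M.map (Complex.ofReal ·)) z
  have heq : ‖(EuclideanSpace.equiv (Fin n) ℂ).symm ((M.map (Complex.ofReal ·)) *ᵥ z)‖
      = ‖(Matrix.toEuclideanLin ≪≫ₗ LinearMap.toContinuousLinearMap) M x‖ := by
    rw [EuclideanSpace.norm_eq, EuclideanSpace.norm_eq]
    congr 1
    refine Finset.sum_congr rfl fun i _ => ?_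
    have : ((M.map (Complex.ofReal ·)) *ᵥ z) i = ((M *ᵥ (WithLp.equiv 2 _ x)) i : ℂ) := key i
    rw [show ((EuclideanSpace.equiv (Fin n) ℂ).symm ((M.map (Complex.ofReal ·)) *ᵥ z)) i
        = ((M.map (Complex.ofReal ·)) *ᵥ z) i from rfl, this]
    simp [Matrix.toEuclideanLin_apply]
  calc ‖(Matrix.toEuclideanLin ≪≫ₗ LinearMap.toContinuousLinearMap) M x‖
      = ‖(EuclideanSpace.equiv (Fin n) ℂ).symm ((M.map (Complex.ofReal ·)) *ᵥ z)‖ := heq.symm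
    _ ≤ ‖M.map (Complex.ofReal ·)‖ * ‖z‖ := hb
    _ = ‖M.map (Complex.ofReal ·)‖ * ‖x‖ := by rw [hz]

set_option maxHeartbeats 2000000

/-- Dwell time and flee time computed from Jordan-type factorizations `A_p = P_p J_p P_p⁻¹`
stabilize the reset switched system governed by a graph `E`: with
`τ_R = max{ ln(c_p ‖P_q⁻¹ R_{(p,q)} P_p‖)/λ_p : (p,q) ∈ E, p stable }` and
`η_R = −max{ ln(c_p ‖P_q⁻¹ R_{(p,q)} P_p‖)/μ_p : (p,q) ∈ E, p unstable }` (each maximum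
expressed as an upper bound that is attained), the system is stable for all `E`-admissible
signals with dwell time `τ_R` and flee time `η_R`. -/
theorem reset_system_stable_of_dwell_flee {n : ℕ} {P : Type*} [Fintype P]
    (A : P → Matrix (Fin n) (Fin n) ℝ)
    (hP : ∀ p, HurwitzStable (A p) ∨ HasUnstableEigenvalue (A p))
    (Pm J : P → Matrix (Fin n) (Fin n) ℂ)
    (hPm : ∀ p, IsUnit (Pm p))
    (hfact : ∀ p, (A p).map (Complex.ofReal ·) = Pm p * J p * (Pm p)⁻¹)
    (c lam mu : P → ℝ) (hc : ∀ p, 0 < c p)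
    (hlam : ∀ p, HurwitzStable (A p) → 0 < lam p)
    (hmu : ∀ p, HasUnstableEigenvalue (A p) → 0 < mu p)
    (hJs : ∀ p, HurwitzStable (A p) → ∀ t : ℝ, 0 ≤ t →
      ‖exp ((t : ℂ) • J p)‖ ≤ c p * Real.exp (-(lam p) * t))
    (hJu : ∀ p, HasUnstableEigenvalue (A p) → ∀ t : ℝ, 0 ≤ t →
      ‖exp ((t : ℂ) • J p)‖ ≤ c p * Real.exp (mu p * t))
    (E : P → P → Prop)
    (hEs : ∃ p q, E p q ∧ HurwitzStable (A p))
    (hEu : ∃ p q, E p q ∧ HasUnstableEigenvalue (A p))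
    (R : P → P → Matrix (Fin n) (Fin n) ℝ) (hR : ∀ p q, E p q → R p q ≠ 0)
    (τR ηR : ℝ)
    (hτR_ub : ∀ p q, E p q → HurwitzStable (A p) →
      Real.log (c p * ‖(Pm q)⁻¹ * (R p q).map (Complex.ofReal ·) * Pm p‖) / lam p ≤ τR)
    (hτR_mem : ∃ p q, E p q ∧ HurwitzStable (A p) ∧
      τR = Real.log (c p * ‖(Pm q)⁻¹ * (R p q).map (Complex.ofReal ·) * Pm p‖) / lam p)
    (hηR_ub : ∀ p q, E p q → HasUnstableEigenvalue (A p) →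
      Real.log (c p * ‖(Pm q)⁻¹ * (R p q).map (Complex.ofReal ·) * Pm p‖) / mu p ≤ -ηR)
    (hηR_mem : ∃ p q, E p q ∧ HasUnstableEigenvalue (A p) ∧
      -ηR = Real.log (c p * ‖(Pm q)⁻¹ * (R p q).map (Complex.ofReal ·) * Pm p‖) / mu p) :
    ∃ C > (0 : ℝ), ∀ (j : ℕ) (p : ℕ → P) (d : ℕ → ℝ),
      (∀ k, 1 ≤ k → k ≤ j → E (p (k - 1)) (p k)) →
      (∀ k, 1 ≤ k → k ≤ j → 0 < d k) →
      (∀ k, 1 ≤ k → k ≤ j → HurwitzStable (A (p (k - 1))) → τR ≤ d k) →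
      (∀ k, 1 ≤ k → k ≤ j → HasUnstableEigenvalue (A (p (k - 1))) → d k ≤ ηR) →
      ∀ s : ℝ, 0 ≤ s → (HasUnstableEigenvalue (A (p j)) → s ≤ ηR) →
        ‖exp (s • A (p j)) * resetTransition A R p d j‖ ≤ C := by
  classical
  have hinv1 : ∀ q, Pm q * (Pm q)⁻¹ = 1 := fun q =>
    Matrix.mul_nonsing_inv _ ((Matrix.isUnit_iff_isUnit_det _).mp (hPm q))
  have hinv2 : ∀ q, (Pm q)⁻¹ * Pm q = 1 := fun q =>
    Matrix.nonsing_inv_mul _ ((Matrix.isUnit_iff_isUnit_det _).mp (hPm q))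
  have hexpA : ∀ (q : P) (t : ℝ), (exp (t • A q)).map (Complex.ofReal ·)
      = Pm q * exp ((t : ℂ) • J q) * (Pm q)⁻¹ := by
    intro q t
    rw [aux_exp_map, hfact]
    have h : (t : ℂ) • (Pm q * J q * (Pm q)⁻¹) = Pm q * ((t : ℂ) • J q) * (Pm q)⁻¹ := by
      simp [smul_mul_assoc, mul_smul_comm]
    rw [h, Matrix.exp_conj (Pm q) _ (hPm q)]
  have hBpos : ∀ p q, E p q →
      0 < ‖(Pm q)⁻¹ * (R p q).map (Complex.ofReal ·) * Pm p‖ := by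
    intro p q hpq
    rw [norm_pos_iff]
    intro h0
    apply hR p q hpq
    have h1 : Pm q * ((Pm q)⁻¹ * (R p q).map (Complex.ofReal ·) * Pm p) * (Pm p)⁻¹
        = (R p q).map (Complex.ofReal ·) := by
      calc Pm q * ((Pm q)⁻¹ * (R p q).map (Complex.ofReal ·) * Pm p) * (Pm p)⁻¹
          = (Pm q * (Pm q)⁻¹) * (R p q).map (Complex.ofReal ·) * (Pm p * (Pm p)⁻¹) := by
            simp only [mul_assoc]
        _ = (R p q).map (Complex.ofReal ·) := by rw [hinv1, hinv1, one_mul, mul_one]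
    have h2 : (R p q).map (Complex.ofReal ·) = 0 := by
      rw [← h1, h0, mul_zero, zero_mul]
    ext i k
    simpa [Matrix.map_apply, Complex.ofReal_eq_zero] using
      (congrFun (congrFun h2 i) k)
  -- the constant
  set D : P → ℝ := fun q => c q * max 1 (Real.exp (mu q * ηR)) with hDdef
  have hD : ∀ q, 0 ≤ D q := fun q =>
    mul_nonneg (hc q).le (le_trans zero_le_one (le_max_left _ _))
  set S : ℝ := ∑ a : P, ∑ b : P, ‖Pm a‖ * D a * ‖(Pm b)⁻¹‖ with hSdef
  have hterm : ∀ a b : P, ‖Pm a‖ * D a * ‖(Pm b)⁻¹‖ ≤ S := by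
    intro a b
    have hnn : ∀ x y : P, 0 ≤ ‖Pm x‖ * D x * ‖(Pm y)⁻¹‖ := fun x y =>
      mul_nonneg (mul_nonneg (norm_nonneg _) (hD x)) (norm_nonneg _)
    calc ‖Pm a‖ * D a * ‖(Pm b)⁻¹‖
        ≤ ∑ y : P, ‖Pm a‖ * D a * ‖(Pm y)⁻¹‖ :=
          Finset.single_le_sum (fun y _ => hnn a y) (Finset.mem_univ b)
      _ ≤ S := Finset.single_le_sum
          (fun x _ => Finset.sum_nonneg fun y _ => hnn x y) (Finset.mem_univ a)
  refine ⟨S + 1, ?_, ?_⟩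
  · obtain ⟨a, b, _, _⟩ := hEs
    have := hterm a b
    nlinarith [mul_nonneg (mul_nonneg (norm_nonneg (Pm a)) (hD a)) (norm_nonneg ((Pm b)⁻¹))]
  intro j p d hE hd hτ hη s hs hsη
  -- key product bound
  have key : ∀ i, i ≤ j →
      ‖(Pm (p i))⁻¹ * (resetTransition A R p d i).map (Complex.ofReal ·) * Pm (p 0)‖ ≤ 1 := by
    intro i
    induction i with
    | zero =>
      intro _
      have h1 : (resetTransition A R p d 0).map ((Complex.ofReal ·) : ℝ → ℂ) = 1 := by
        show (1 : Matrix (Fin n) (Fin n) ℝ).map (Complex.ofReal ·) = 1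
        exact Matrix.map_one _ Complex.ofReal_zero Complex.ofReal_one
      rw [h1, mul_one, hinv2]
      exact aux_norm_one_le
    | succ i ih =>
      intro hij
      have hij' : i ≤ j := le_trans (Nat.le_succ i) hij
      have hone : 1 ≤ i + 1 := Nat.succ_le_succ (Nat.zero_le i)
      have hE' : E (p i) (p (i + 1)) := hE (i + 1) hone hij
      have hd' : 0 < d (i + 1) := hd (i + 1) hone hij
      have hfactor : (Pm (p (i + 1)))⁻¹ *
          (resetTransition A R p d (i + 1)).map (Complex.ofReal ·) * Pm (p 0)
          = ((Pm (p (i + 1)))⁻¹ * (R (p i) (p (i + 1))).map (Complex.ofReal ·) * Pm (p i)) *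
            (exp ((d (i + 1) : ℂ) • J (p i)) *
              ((Pm (p i))⁻¹ * (resetTransition A R p d i).map (Complex.ofReal ·) * Pm (p 0))) := by
        show (Pm (p (i + 1)))⁻¹ *
          (R (p i) (p (i + 1)) * exp (d (i + 1) • A (p i)) *
            resetTransition A R p d i).map (Complex.ofReal ·) * Pm (p 0) = _
        rw [aux_map_mul, aux_map_mul, hexpA]
        simp only [mul_assoc]
      have hBE : ‖(Pm (p (i + 1)))⁻¹ * (R (p i) (p (i + 1))).map (Complex.ofReal ·) * Pm (p i)‖ *
          ‖exp ((d (i + 1) : ℂ) • J (p i))‖ ≤ 1 := by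
        set b := ‖(Pm (p (i + 1)))⁻¹ * (R (p i) (p (i + 1))).map (Complex.ofReal ·) * Pm (p i)‖
          with hbdef
        have hbpos : 0 < b := hBpos _ _ hE'
        have hcb : 0 < c (p i) * b := mul_pos (hc _) hbpos
        rcases hP (p i) with hst | hun
        · have hJ := hJs (p i) hst (d (i + 1)) hd'.le
          have hτ' : τR ≤ d (i + 1) := hτ (i + 1) hone hij hst
          have hub := hτR_ub (p i) (p (i + 1)) hE' hst
          have hlam' := hlam (p i) hst
          have hlog : Real.log (c (p i) * b) ≤ lam (p i) * d (i + 1) := by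
            have h := (div_le_iff₀ hlam').mp (le_trans hub hτ')
            nlinarith
          have hcb2 : c (p i) * b ≤ Real.exp (lam (p i) * d (i + 1)) := by
            rw [← Real.exp_log hcb]
            exact Real.exp_le_exp.mpr hlog
          calc b * ‖exp ((d (i + 1) : ℂ) • J (p i))‖
              ≤ b * (c (p i) * Real.exp (-(lam (p i)) * d (i + 1))) :=
                mul_le_mul_of_nonneg_left hJ hbpos.le
            _ = (c (p i) * b) * Real.exp (-(lam (p i)) * d (i + 1)) := by ring
            _ ≤ Real.exp (lam (p i) * d (i + 1)) * Real.exp (-(lam (p i)) * d (i + 1)) :=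
                mul_le_mul_of_nonneg_right hcb2 (Real.exp_nonneg _)
            _ = 1 := by rw [← Real.exp_add]; ring_nf; exact Real.exp_zero
        · have hJ := hJu (p i) hun (d (i + 1)) hd'.le
          have hη' : d (i + 1) ≤ ηR := hη (i + 1) hone hij hun
          have hub := hηR_ub (p i) (p (i + 1)) hE' hun
          have hmu' := hmu (p i) hun
          have hlog : Real.log (c (p i) * b) ≤ -(mu (p i) * d (i + 1)) := by
            have h := (div_le_iff₀ hmu').mp hub
            nlinarith
          have hcb2 : c (p i) * b ≤ Real.exp (-(mu (p i) * d (i + 1))) := by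
            rw [← Real.exp_log hcb]
            exact Real.exp_le_exp.mpr hlog
          calc b * ‖exp ((d (i + 1) : ℂ) • J (p i))‖
              ≤ b * (c (p i) * Real.exp (mu (p i) * d (i + 1))) :=
                mul_le_mul_of_nonneg_left hJ hbpos.le
            _ = (c (p i) * b) * Real.exp (mu (p i) * d (i + 1)) := by ring
            _ ≤ Real.exp (-(mu (p i) * d (i + 1))) * Real.exp (mu (p i) * d (i + 1)) :=
                mul_le_mul_of_nonneg_right hcb2 (Real.exp_nonneg _)
            _ = 1 := by rw [← Real.exp_add]; ring_nf; exact Real.exp_zero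
      have hprev := ih hij'
      rw [hfactor]
      calc ‖_ * (exp ((d (i + 1) : ℂ) • J (p i)) * _)‖
          ≤ ‖(Pm (p (i + 1)))⁻¹ * (R (p i) (p (i + 1))).map (Complex.ofReal ·) * Pm (p i)‖ *
            ‖exp ((d (i + 1) : ℂ) • J (p i)) *
              ((Pm (p i))⁻¹ * (resetTransition A R p d i).map (Complex.ofReal ·) * Pm (p 0))‖ :=
            norm_mul_le _ _
        _ ≤ ‖(Pm (p (i + 1)))⁻¹ * (R (p i) (p (i + 1))).map (Complex.ofReal ·) * Pm (p i)‖ *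
            (‖exp ((d (i + 1) : ℂ) • J (p i))‖ *
              ‖(Pm (p i))⁻¹ * (resetTransition A R p d i).map (Complex.ofReal ·) * Pm (p 0)‖) :=
            mul_le_mul_of_nonneg_left (norm_mul_le _ _) (norm_nonneg _)
        _ ≤ ‖(Pm (p (i + 1)))⁻¹ * (R (p i) (p (i + 1))).map (Complex.ofReal ·) * Pm (p i)‖ *
            (‖exp ((d (i + 1) : ℂ) • J (p i))‖ * 1) := by
            gcongr
        _ = ‖(Pm (p (i + 1)))⁻¹ * (R (p i) (p (i + 1))).map (Complex.ofReal ·) * Pm (p i)‖ *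
            ‖exp ((d (i + 1) : ℂ) • J (p i))‖ := by ring
        _ ≤ 1 := hBE
  -- bound on the last exponential
  have hEJ : ‖exp ((s : ℂ) • J (p j))‖ ≤ D (p j) := by
    rcases hP (p j) with hst | hun
    · have hJ := hJs (p j) hst s hs
      have : Real.exp (-(lam (p j)) * s) ≤ 1 := by
        rw [← Real.exp_zero]
        apply Real.exp_le_exp.mpr
        nlinarith [hlam (p j) hst]
      calc ‖exp ((s : ℂ) • J (p j))‖ ≤ c (p j) * Real.exp (-(lam (p j)) * s) := hJ
        _ ≤ c (p j) * 1 := mul_le_mul_of_nonneg_left this (hc _).le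
        _ ≤ D (p j) := mul_le_mul_of_nonneg_left (le_max_left _ _) (hc _).le
    · have hJ := hJu (p j) hun s hs
      have hsη' := hsη hun
      have : Real.exp (mu (p j) * s) ≤ Real.exp (mu (p j) * ηR) := by
        apply Real.exp_le_exp.mpr
        nlinarith [hmu (p j) hun]
      calc ‖exp ((s : ℂ) • J (p j))‖ ≤ c (p j) * Real.exp (mu (p j) * s) := hJ
        _ ≤ c (p j) * Real.exp (mu (p j) * ηR) := mul_le_mul_of_nonneg_left this (hc _).le
        _ ≤ D (p j) := mul_le_mul_of_nonneg_left (le_max_right _ _) (hc _).le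
  -- final chain
  have hexpand : (exp (s • A (p j)) * resetTransition A R p d j).map (Complex.ofReal ·)
      = Pm (p j) * (exp ((s : ℂ) • J (p j)) *
        (((Pm (p j))⁻¹ * (resetTransition A R p d j).map (Complex.ofReal ·) * Pm (p 0)) *
          (Pm (p 0))⁻¹)) := by
    rw [aux_map_mul, hexpA]
    conv_lhs => rw [show (resetTransition A R p d j).map ((Complex.ofReal ·) : ℝ → ℂ)
      = (resetTransition A R p d j).map (Complex.ofReal ·) * (Pm (p 0) * (Pm (p 0))⁻¹) by
        rw [hinv1, mul_one]]
    simp only [mul_assoc]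
  calc ‖exp (s • A (p j)) * resetTransition A R p d j‖
      ≤ ‖(exp (s • A (p j)) * resetTransition A R p d j).map (Complex.ofReal ·)‖ :=
        aux_norm_real_le _
    _ = ‖Pm (p j) * (exp ((s : ℂ) • J (p j)) *
        (((Pm (p j))⁻¹ * (resetTransition A R p d j).map (Complex.ofReal ·) * Pm (p 0)) *
          (Pm (p 0))⁻¹))‖ := by rw [hexpand]
    _ ≤ ‖Pm (p j)‖ * (‖exp ((s : ℂ) • J (p j))‖ *
        (‖(Pm (p j))⁻¹ * (resetTransition A R p d j).map (Complex.ofReal ·) * Pm (p 0)‖ *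
          ‖(Pm (p 0))⁻¹‖)) := by
        calc ‖Pm (p j) * _‖ ≤ ‖Pm (p j)‖ * ‖exp ((s : ℂ) • J (p j)) *
              (((Pm (p j))⁻¹ * (resetTransition A R p d j).map (Complex.ofReal ·) * Pm (p 0)) *
                (Pm (p 0))⁻¹)‖ := norm_mul_le _ _
          _ ≤ ‖Pm (p j)‖ * (‖exp ((s : ℂ) • J (p j))‖ *
              ‖((Pm (p j))⁻¹ * (resetTransition A R p d j).map (Complex.ofReal ·) * Pm (p 0)) *
                (Pm (p 0))⁻¹‖) :=
              mul_le_mul_of_nonneg_left (norm_mul_le _ _) (norm_nonneg _)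
          _ ≤ _ := by
              gcongr
              exact norm_mul_le _ _
    _ ≤ ‖Pm (p j)‖ * (D (p j) * (1 * ‖(Pm (p 0))⁻¹‖)) := by
        gcongr <;>
          first
            | exact hD (p j)
            | exact hEJ
            | exact key j le_rfl
            | positivity
    _ = ‖Pm (p j)‖ * D (p j) * ‖(Pm (p 0))⁻¹‖ := by ring
    _ ≤ S := hterm (p j) (p 0)
    _ ≤ S + 1 := by linarith
end
end

section
/- Let P be a finite index set and (A_p)_{p∈P} n×n real matrices with P = 𝔰 ∪ 𝔲. Suppose that for each p ∈ P there is a factorization A_p = P_p·J_p·P_p⁻¹ with P_p an invertible n×n complex matrix, together with constants c_p > 0 and rates λ_p > 0 for p ∈ 𝔰 and μ_p > 0 for p ∈ 𝔲 such that ‖exp(t·J_p)‖ ≤ c_p·e^{−λ_p·t} for all t ≥ 0 when p ∈ 𝔰 and ‖exp(t·J_p)‖ ≤ c_p·e^{μ_p·t} for all t ≥ 0 when p ∈ 𝔲. Let E ⊆ P × P be a set of admissible switches containing at least one pair with first coordinate in 𝔰 and at least one with first coordinate in 𝔲, and let 𝓘 be a nonempty compact set of n×n real matrices not containing the zero matrix.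 Define τ_I = max{ ln(c_p·‖P_q⁻¹·M·P_p‖)/λ_p : (p,q) ∈ E, p ∈ 𝔰, M ∈ 𝓘 } and η_I = −max{ ln(c_p·‖P_q⁻¹·M·P_p‖)/μ_p : (p,q) ∈ E, p ∈ 𝔲, M ∈ 𝓘 }. Then there exists C > 0 such that for every j ≥ 0, every sequence p_0, …, p_j ∈ P with (p_{k−1},p_k) ∈ E for 1 ≤ k ≤ j, all durations d_1, …, d_j > 0 with d_k ≥ τ_I whenever p_{k−1} ∈ 𝔰 and d_k ≤ η_I whenever p_{k−1} ∈ 𝔲, every choice of impulses M_1, …, M_j ∈ 𝓘, and every s ≥ 0 with s ≤ η_I whenever p_j ∈ 𝔲, one has ‖exp(s·A_{p_j})·Ψ_j‖ ≤ C; that is, the impulsive switched system governed by E is stable under arbitrary impulses for all E-admissible switching signals with dwell time τ_I and flee time η_I. -/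
open Matrix NormedSpace
open scoped Matrix.Norms.L2Operator

noncomputable section

namespace ImpulsiveAuxLemmas

variable {n : ℕ}

lemma cplx_continuous :
    Continuous (fun X : Matrix (Fin n) (Fin n) ℝ => X.map (Complex.ofReal ·)) :=
  (AlgHom.toLinearMap ((Algebra.ofId ℝ ℂ).mapMatrix :
    Matrix (Fin n) (Fin n) ℝ →ₐ[ℝ] Matrix (Fin n) (Fin n) ℂ)).continuous_of_finiteDimensional

lemma cplx_exp (X : Matrix (Fin n) (Fin n) ℝ) :
    (exp X).map (Complex.ofReal ·) = exp (X.map (Complex.ofReal ·)) := by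
  have h1 := map_exp_of_mem_ball (𝕂 := ℝ) (Complex.ofRealHom.mapMatrix :
    Matrix (Fin n) (Fin n) ℝ →+* Matrix (Fin n) (Fin n) ℂ) cplx_continuous X
    ((expSeries_radius_eq_top ℝ (Matrix (Fin n) (Fin n) ℝ)).symm ▸ edist_lt_top _ _)
  exact h1

lemma cplx_mul (X Y : Matrix (Fin n) (Fin n) ℝ) :
    (X * Y).map (Complex.ofReal ·) = X.map (Complex.ofReal ·) * Y.map (Complex.ofReal ·) :=
  Matrix.map_mul (f := Complex.ofRealHom)

lemma cplx_smul (t : ℝ) (X : Matrix (Fin n) (Fin n) ℝ) :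
    (t • X).map (Complex.ofReal ·) = (t : ℂ) • X.map (Complex.ofReal ·) := by
  ext i j
  simp [Matrix.map_apply]

lemma cplx_exp_smul (A : Matrix (Fin n) (Fin n) ℝ) (Pm J : Matrix (Fin n) (Fin n) ℂ)
    (h : IsUnit Pm) (hfact : A.map (Complex.ofReal ·) = Pm * J * Pm⁻¹) (t : ℝ) :
    (exp (t • A)).map (Complex.ofReal ·) = Pm * exp ((t : ℂ) • J) * Pm⁻¹ := by
  rw [cplx_exp, cplx_smul]
  have hm : ((t : ℂ) • A.map (Complex.ofReal ·)) =
      (↑h.unit : Matrix (Fin n) (Fin n) ℂ) * ((t : ℂ) • J) *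
        (↑h.unit⁻¹ : Matrix (Fin n) (Fin n) ℂ) := by
    rw [Matrix.coe_units_inv, h.unit_spec, hfact, mul_smul_comm, smul_mul_assoc]
  rw [hm, Matrix.exp_units_conj, Matrix.coe_units_inv, h.unit_spec]

lemma norm_le_norm_cplx (X : Matrix (Fin n) (Fin n) ℝ) :
    ‖X‖ ≤ ‖X.map (Complex.ofReal ·)‖ := by
  rw [Matrix.l2_opNorm_def]
  apply ContinuousLinearMap.opNorm_le_bound _ (norm_nonneg _)
  intro x
  set y : Fin n → ℝ := WithLp.equiv 2 _ x with hy
  set xc : EuclideanSpace ℂ (Fin n) := (WithLp.equiv 2 _).symm (fun i => (y i : ℂ)) with hxc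
  have hnx : ‖xc‖ = ‖x‖ := by
    rw [EuclideanSpace.norm_eq, EuclideanSpace.norm_eq]
    congr 1
    apply Finset.sum_congr rfl
    intro i _
    simp [hxc, hy]
  have hmv : (X.map (Complex.ofReal ·)) *ᵥ (fun i => (y i : ℂ)) = fun i => ((X *ᵥ y) i : ℂ) := by
    funext i
    simp [Matrix.mulVec, dotProduct, Matrix.map_apply]
  have h2 := (X.map (Complex.ofReal ·)).l2_opNorm_mulVec xc
  rw [hnx] at h2
  refine le_trans ?_ h2
  apply le_of_eq
  rw [EuclideanSpace.norm_eq, EuclideanSpace.norm_eq]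
  congr 1
  apply Finset.sum_congr rfl
  intro i _
  have hxcy : (WithLp.equiv 2 (Fin n → ℂ)) xc = fun i => (y i : ℂ) := rfl
  simp only [LinearEquiv.trans_apply, Matrix.toEuclideanLin_apply]
  show ‖(X *ᵥ y) i‖ ^ 2 = ‖((X.map (Complex.ofReal ·)) *ᵥ ((WithLp.equiv 2 (Fin n → ℂ)) xc)) i‖ ^ 2
  rw [hxcy, hmv]
  simp

lemma cplx_ne_zero {M : Matrix (Fin n) (Fin n) ℝ} (h : M ≠ 0) :
    M.map (Complex.ofReal ·) ≠ 0 := by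
  intro h0
  apply h
  ext i j
  have h1 : (M.map (Complex.ofReal ·)) i j = 0 := by rw [h0]; rfl
  simpa [Matrix.map_apply] using h1

lemma conj_ne_zero {Q P X : Matrix (Fin n) (Fin n) ℂ} (hQ : IsUnit Q) (hP : IsUnit P)
    (hX : X ≠ 0) : Q⁻¹ * X * P ≠ 0 := by
  intro h0
  apply hX
  have hQd := (Matrix.isUnit_iff_isUnit_det Q).mp hQ
  have hPd := (Matrix.isUnit_iff_isUnit_det P).mp hP
  have key : Q * (Q⁻¹ * X * P) * P⁻¹ = X := by
    rw [← mul_assoc, ← mul_assoc, Matrix.mul_nonsing_inv _ hQd, one_mul,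
      Matrix.mul_nonsing_inv_cancel_right _ _ hPd]
  rw [h0, mul_zero, zero_mul] at key
  exact key.symm

lemma factor_le_one {cc r : ℝ} {K : Matrix (Fin n) (Fin n) ℂ} (hc : 0 < cc) (hK : K ≠ 0)
    (h : Real.log (cc * ‖K‖) ≤ -r) : ‖K‖ * (cc * Real.exp r) ≤ 1 := by
  have hKpos : (0 : ℝ) < ‖K‖ := norm_pos_iff.mpr hK
  have h2 : cc * ‖K‖ ≤ Real.exp (-r) := by
    rw [← Real.exp_log (mul_pos hc hKpos)]
    exact Real.exp_le_exp.mpr h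
  have h3 : (0 : ℝ) < Real.exp r := Real.exp_pos r
  calc ‖K‖ * (cc * Real.exp r) = (cc * ‖K‖) * Real.exp r := by ring
    _ ≤ Real.exp (-r) * Real.exp r := mul_le_mul_of_nonneg_right h2 h3.le
    _ = 1 := by rw [← Real.exp_add]; simp

lemma norm_mul4_le (a b c d : Matrix (Fin n) (Fin n) ℂ) :
    ‖a * b * c * d‖ ≤ ‖a‖ * ‖b‖ * ‖c‖ * ‖d‖ := by
  calc ‖a * b * c * d‖ ≤ ‖a * b * c‖ * ‖d‖ := norm_mul_le _ _
    _ ≤ (‖a * b‖ * ‖c‖) * ‖d‖ := mul_le_mul_of_nonneg_right (norm_mul_le _ _) (norm_nonneg _)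
    _ ≤ ((‖a‖ * ‖b‖) * ‖c‖) * ‖d‖ := by
        apply mul_le_mul_of_nonneg_right _ (norm_nonneg _)
        exact mul_le_mul_of_nonneg_right (norm_mul_le _ _) (norm_nonneg _)

lemma norm_one_le_one : ‖(1 : Matrix (Fin n) (Fin n) ℂ)‖ ≤ 1 := by
  rw [Matrix.cstar_norm_def, _root_.map_one]
  exact ContinuousLinearMap.norm_id_le

end ImpulsiveAuxLemmas

open ImpulsiveAuxLemmas in
set_option maxHeartbeats 2000000 in

/-- Dwell time and flee time computed from Jordan-type factorizations `A_p = P_p J_p P_p⁻¹`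
make the impulsive switched system governed by a graph `E`, with impulses in the nonempty
compact set `𝓘` of nonzero matrices, stable under arbitrary impulses: with
`τ_I = max{ ln(c_p ‖P_q⁻¹ M P_p‖)/λ_p : (p,q) ∈ E, p stable, M ∈ 𝓘 }` and
`η_I = −max{ ln(c_p ‖P_q⁻¹ M P_p‖)/μ_p : (p,q) ∈ E, p unstable, M ∈ 𝓘 }` (each maximum
expressed as an upper bound that is attained), the system is stable for all `E`-admissible
signals with dwell time `τ_I` and flee time `η_I`. -/

theorem impulsive_system_stable_of_dwell_flee {n : ℕ} {P : Type*} [Fintype P]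
    (A : P → Matrix (Fin n) (Fin n) ℝ)
    (hP : ∀ p, HurwitzStable (A p) ∨ HasUnstableEigenvalue (A p))
    (Pm J : P → Matrix (Fin n) (Fin n) ℂ)
    (hPm : ∀ p, IsUnit (Pm p))
    (hfact : ∀ p, (A p).map (Complex.ofReal ·) = Pm p * J p * (Pm p)⁻¹)
    (c lam mu : P → ℝ) (hc : ∀ p, 0 < c p)
    (hlam : ∀ p, HurwitzStable (A p) → 0 < lam p)
    (hmu : ∀ p, HasUnstableEigenvalue (A p) → 0 < mu p)
    (hJs : ∀ p, HurwitzStable (A p) → ∀ t : ℝ, 0 ≤ t →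
      ‖exp ((t : ℂ) • J p)‖ ≤ c p * Real.exp (-(lam p) * t))
    (hJu : ∀ p, HasUnstableEigenvalue (A p) → ∀ t : ℝ, 0 ≤ t →
      ‖exp ((t : ℂ) • J p)‖ ≤ c p * Real.exp (mu p * t))
    (E : P → P → Prop)
    (hEs : ∃ p q, E p q ∧ HurwitzStable (A p))
    (hEu : ∃ p q, E p q ∧ HasUnstableEigenvalue (A p))
    (𝓘 : Set (Matrix (Fin n) (Fin n) ℝ)) (h𝓘ne : 𝓘.Nonempty) (h𝓘 : IsCompact 𝓘)
    (h𝓘0 : (0 : Matrix (Fin n) (Fin n) ℝ) ∉ 𝓘)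
    (τI ηI : ℝ)
    (hτI_ub : ∀ p q, E p q → HurwitzStable (A p) → ∀ M ∈ 𝓘,
      Real.log (c p * ‖(Pm q)⁻¹ * M.map (Complex.ofReal ·) * Pm p‖) / lam p ≤ τI)
    (hτI_mem : ∃ p q, E p q ∧ HurwitzStable (A p) ∧ ∃ M ∈ 𝓘,
      τI = Real.log (c p * ‖(Pm q)⁻¹ * M.map (Complex.ofReal ·) * Pm p‖) / lam p)
    (hηI_ub : ∀ p q, E p q → HasUnstableEigenvalue (A p) → ∀ M ∈ 𝓘,
      Real.log (c p * ‖(Pm q)⁻¹ * M.map (Complex.ofReal ·) * Pm p‖) / mu p ≤ -ηI)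
    (hηI_mem : ∃ p q, E p q ∧ HasUnstableEigenvalue (A p) ∧ ∃ M ∈ 𝓘,
      -ηI = Real.log (c p * ‖(Pm q)⁻¹ * M.map (Complex.ofReal ·) * Pm p‖) / mu p) :
    ∃ C > (0 : ℝ), ∀ (j : ℕ) (p : ℕ → P) (d : ℕ → ℝ) (M : ℕ → Matrix (Fin n) (Fin n) ℝ),
      (∀ k, 1 ≤ k → k ≤ j → E (p (k - 1)) (p k)) →
      (∀ k, 1 ≤ k → k ≤ j → 0 < d k) →
      (∀ k, 1 ≤ k → k ≤ j → HurwitzStable (A (p (k - 1))) → τI ≤ d k) →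
      (∀ k, 1 ≤ k → k ≤ j → HasUnstableEigenvalue (A (p (k - 1))) → d k ≤ ηI) →
      (∀ k, 1 ≤ k → k ≤ j → M k ∈ 𝓘) →
      ∀ s : ℝ, 0 ≤ s → (HasUnstableEigenvalue (A (p j)) → s ≤ ηI) →
        ‖exp (s • A (p j)) * impulsiveTransition A M p d j‖ ≤ C := by
  classical
  obtain ⟨ps, qs, hEps, hstps⟩ := hEs
  haveI : Nonempty P := ⟨ps⟩
  have huniv : (Finset.univ : Finset P).Nonempty := Finset.univ_nonempty
  set CP := Finset.univ.sup' huniv (fun q => ‖Pm q‖) with hCPdef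
  set CQ := Finset.univ.sup' huniv (fun q => ‖(Pm q)⁻¹‖) with hCQdef
  set CE := Finset.univ.sup' huniv (fun q => c q * Real.exp (|mu q| * |ηI|)) with hCEdef
  have hCPle : ∀ q, ‖Pm q‖ ≤ CP := fun q => by
    rw [hCPdef]; exact Finset.le_sup' (fun q => ‖Pm q‖) (Finset.mem_univ q)
  have hCQle : ∀ q, ‖(Pm q)⁻¹‖ ≤ CQ := fun q => by
    rw [hCQdef]; exact Finset.le_sup' (fun q => ‖(Pm q)⁻¹‖) (Finset.mem_univ q)
  have hCEle : ∀ q, c q * Real.exp (|mu q| * |ηI|) ≤ CE := fun q => by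
    rw [hCEdef]; exact Finset.le_sup' (fun q => c q * Real.exp (|mu q| * |ηI|)) (Finset.mem_univ q)
  have hCP0 : 0 ≤ CP := le_trans (norm_nonneg (Pm ps)) (hCPle ps)
  have hCQ0 : 0 ≤ CQ := le_trans (norm_nonneg ((Pm ps)⁻¹)) (hCQle ps)
  have hCE0 : 0 ≤ CE :=
    le_trans (le_of_lt (mul_pos (hc ps) (Real.exp_pos _))) (hCEle ps)
  have hprod : 0 ≤ CP * CE * CQ := mul_nonneg (mul_nonneg hCP0 hCE0) hCQ0
  refine ⟨CP * CE * CQ + 1, by linarith, ?_⟩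
  intro j p d M hE hd hτ hη hM s hs hsη
  have hPdet : ∀ q, IsUnit (Pm q).det := fun q => (Matrix.isUnit_iff_isUnit_det _).mp (hPm q)
  -- the conjugated partial products are bounded by 1
  have key : ∀ k, k ≤ j →
      ‖(Pm (p k))⁻¹ * (impulsiveTransition A M p d k).map (Complex.ofReal ·) * Pm (p 0)‖ ≤ 1 := by
    intro k
    induction k with
    | zero =>
      intro _
      have h1 : (Pm (p 0))⁻¹ * (impulsiveTransition A M p d 0).map (Complex.ofReal ·) * Pm (p 0)
          = 1 := by
        show (Pm (p 0))⁻¹ * (1 : Matrix (Fin n) (Fin n) ℝ).map (Complex.ofReal ·) * Pm (p 0) = 1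
        rw [Matrix.map_one _ Complex.ofReal_zero Complex.ofReal_one, mul_one,
          Matrix.nonsing_inv_mul _ (hPdet _)]
      rw [h1]
      exact norm_one_le_one
    | succ k ih =>
      intro hkj
      have hk : k ≤ j := le_trans (Nat.le_succ k) hkj
      have hk1 : 1 ≤ k + 1 := Nat.succ_le_succ (Nat.zero_le k)
      have hEk : E (p k) (p (k + 1)) := hE (k + 1) hk1 hkj
      have hMk : M (k + 1) ∈ 𝓘 := hM (k + 1) hk1 hkj
      have hdk : 0 < d (k + 1) := hd (k + 1) hk1 hkj
      set K : Matrix (Fin n) (Fin n) ℂ :=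
        (Pm (p (k + 1)))⁻¹ * (M (k + 1)).map (Complex.ofReal ·) * Pm (p k) with hKdef
      have hMne : M (k + 1) ≠ 0 := by
        intro h0; exact h𝓘0 (h0 ▸ hMk)
      have hKne : K ≠ 0 := conj_ne_zero (hPm _) (hPm _) (cplx_ne_zero hMne)
      have hdec : (Pm (p (k + 1)))⁻¹ *
            (impulsiveTransition A M p d (k + 1)).map (Complex.ofReal ·) * Pm (p 0)
          = K * exp ((d (k + 1) : ℂ) • J (p k)) *
            ((Pm (p k))⁻¹ * (impulsiveTransition A M p d k).map (Complex.ofReal ·) * Pm (p 0)) := by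
        have hstep : impulsiveTransition A M p d (k + 1)
            = M (k + 1) * exp (d (k + 1) • A (p k)) * impulsiveTransition A M p d k := rfl
        rw [hstep, cplx_mul, cplx_mul,
          cplx_exp_smul (A (p k)) (Pm (p k)) (J (p k)) (hPm _) (hfact _), hKdef]
        simp only [mul_assoc]
      have hfac : ‖K‖ * ‖exp ((d (k + 1) : ℂ) • J (p k))‖ ≤ 1 := by
        rcases hP (p k) with hst | hun
        · have hEb := hJs (p k) hst (d (k + 1)) hdk.le
          have hlog := hτI_ub (p k) (p (k + 1)) hEk hst (M (k + 1)) hMk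
          have hτd : τI ≤ d (k + 1) := hτ (k + 1) hk1 hkj hst
          have hlampos := hlam (p k) hst
          have hlog2 : Real.log (c (p k) * ‖K‖) ≤ -(-(lam (p k)) * d (k + 1)) := by
            have := (div_le_iff₀ hlampos).mp hlog
            nlinarith
          calc ‖K‖ * ‖exp ((d (k + 1) : ℂ) • J (p k))‖
              ≤ ‖K‖ * (c (p k) * Real.exp (-(lam (p k)) * d (k + 1))) :=
                mul_le_mul_of_nonneg_left hEb (norm_nonneg K)
            _ ≤ 1 := factor_le_one (hc _) hKne hlog2
        · have hEb := hJu (p k) hun (d (k + 1)) hdk.le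
          have hlog := hηI_ub (p k) (p (k + 1)) hEk hun (M (k + 1)) hMk
          have hηd : d (k + 1) ≤ ηI := hη (k + 1) hk1 hkj hun
          have hmupos := hmu (p k) hun
          have hlog2 : Real.log (c (p k) * ‖K‖) ≤ -(mu (p k) * d (k + 1)) := by
            have := (div_le_iff₀ hmupos).mp hlog
            nlinarith
          calc ‖K‖ * ‖exp ((d (k + 1) : ℂ) • J (p k))‖
              ≤ ‖K‖ * (c (p k) * Real.exp (mu (p k) * d (k + 1))) :=
                mul_le_mul_of_nonneg_left hEb (norm_nonneg K)
            _ ≤ 1 := factor_le_one (hc _) hKne hlog2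
      rw [hdec]
      calc ‖K * exp ((d (k + 1) : ℂ) • J (p k)) *
            ((Pm (p k))⁻¹ * (impulsiveTransition A M p d k).map (Complex.ofReal ·) * Pm (p 0))‖
          ≤ ‖K * exp ((d (k + 1) : ℂ) • J (p k))‖ *
            ‖(Pm (p k))⁻¹ * (impulsiveTransition A M p d k).map (Complex.ofReal ·) * Pm (p 0)‖ :=
            norm_mul_le _ _
        _ ≤ (‖K‖ * ‖exp ((d (k + 1) : ℂ) • J (p k))‖) * 1 :=
            mul_le_mul (norm_mul_le _ _) (ih hk) (norm_nonneg _)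
              (mul_nonneg (norm_nonneg _) (norm_nonneg _))
        _ ≤ 1 := by rw [mul_one]; exact hfac
  -- bound on the final exponential factor
  have hEfin : ‖exp ((s : ℂ) • J (p j))‖ ≤ CE := by
    have hle : c (p j) * Real.exp (|mu (p j)| * |ηI|) ≤ CE := hCEle (p j)
    rcases hP (p j) with hst | hun
    · have h1 := hJs (p j) hst s hs
      have hlampos := hlam (p j) hst
      have h2 : Real.exp (-(lam (p j)) * s) ≤ Real.exp (|mu (p j)| * |ηI|) := by
        apply Real.exp_le_exp.mpr
        have : -(lam (p j)) * s ≤ 0 := by nlinarith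
        have : 0 ≤ |mu (p j)| * |ηI| := mul_nonneg (abs_nonneg _) (abs_nonneg _)
        linarith
      calc ‖exp ((s : ℂ) • J (p j))‖ ≤ c (p j) * Real.exp (-(lam (p j)) * s) := h1
        _ ≤ c (p j) * Real.exp (|mu (p j)| * |ηI|) :=
            mul_le_mul_of_nonneg_left h2 (hc _).le
        _ ≤ CE := hle
    · have h1 := hJu (p j) hun s hs
      have hmupos := hmu (p j) hun
      have hsη2 : s ≤ ηI := hsη hun
      have h2 : Real.exp (mu (p j) * s) ≤ Real.exp (|mu (p j)| * |ηI|) := by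
        apply Real.exp_le_exp.mpr
        have ha : mu (p j) * s ≤ mu (p j) * ηI := by nlinarith
        have hb : mu (p j) * ηI ≤ |mu (p j) * ηI| := le_abs_self _
        rw [abs_mul] at hb
        linarith
      calc ‖exp ((s : ℂ) • J (p j))‖ ≤ c (p j) * Real.exp (mu (p j) * s) := h1
        _ ≤ c (p j) * Real.exp (|mu (p j)| * |ηI|) :=
            mul_le_mul_of_nonneg_left h2 (hc _).le
        _ ≤ CE := hle
  -- decompose the full complexified product
  have hfin : (exp (s • A (p j)) * impulsiveTransition A M p d j).map (Complex.ofReal ·)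
      = Pm (p j) * exp ((s : ℂ) • J (p j)) *
        ((Pm (p j))⁻¹ * (impulsiveTransition A M p d j).map (Complex.ofReal ·) * Pm (p 0)) *
        (Pm (p 0))⁻¹ := by
    have h0 : Pm (p 0) * (Pm (p 0))⁻¹ = 1 := Matrix.mul_nonsing_inv _ (hPdet _)
    rw [cplx_mul, cplx_exp_smul (A (p j)) (Pm (p j)) (J (p j)) (hPm _) (hfact _)]
    simp only [mul_assoc]
    rw [h0, mul_one]
  have hkey := key j le_rfl
  set Bj : Matrix (Fin n) (Fin n) ℂ :=
    (Pm (p j))⁻¹ * (impulsiveTransition A M p d j).map (Complex.ofReal ·) * Pm (p 0) with hBj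
  have h4 := norm_mul4_le (Pm (p j)) (exp ((s : ℂ) • J (p j))) Bj ((Pm (p 0))⁻¹)
  have h5 : ‖Pm (p j)‖ * ‖exp ((s : ℂ) • J (p j))‖ * ‖Bj‖ * ‖(Pm (p 0))⁻¹‖
      ≤ CP * CE * 1 * CQ := by
    refine mul_le_mul (mul_le_mul (mul_le_mul (hCPle (p j)) hEfin (norm_nonneg _) hCP0)
      hkey (norm_nonneg _) (mul_nonneg hCP0 hCE0)) (hCQle (p 0)) (norm_nonneg _) ?_
    exact mul_nonneg (mul_nonneg hCP0 hCE0) zero_le_one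
  have h6 : ‖exp (s • A (p j)) * impulsiveTransition A M p d j‖
      ≤ ‖(exp (s • A (p j)) * impulsiveTransition A M p d j).map (Complex.ofReal ·)‖ :=
    norm_le_norm_cplx _
  rw [hfin] at h6
  have h7 : CP * CE * 1 * CQ ≤ CP * CE * CQ + 1 := by rw [mul_one]; linarith
  exact le_trans h6 (le_trans h4 (le_trans h5 h7))
end
end

section
/- Let P be a finite index set, (A_p)_{p∈P} a family of n×n real matrices, and (R_{(p,q)})_{p,q∈P} reset matrices. Suppose that for some τ > 0 there exists a collection of symmetric positive definite matrices (Q_p)_{p∈P} such that Q_p·A_p + A_pᵀ·Q_p is negative definite for all p ∈ P, and exp(τ·A_q)ᵀ·R_{(q,p)}ᵀ·Q_p·R_{(q,p)}·exp(τ·A_q) ⪯ Q_q for all p, q ∈ P. Then there exists C > 0 such that for every j ≥ 0, every switching sequence p_0, …, p_j ∈ P, all durations d_1, …, d_j ≥ τ, and every s ≥ 0, one has ‖exp(s·A_{p_j})·Φ_j‖ ≤ C; that is, the reset switched system is stable for every switching signal with dwell time τ. -/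
open Matrix NormedSpace
open scoped Matrix.Norms.L2Operator

noncomputable section

namespace ResetAux
variable {n : ℕ}

lemma real_conjT {m l : Type*} (B : Matrix m l ℝ) : Bᴴ = Bᵀ := by
  ext i j; simp [conjTranspose_apply]

lemma psd_conj {A : Matrix (Fin n) (Fin n) ℝ} (hA : A.PosSemidef)
    (B : Matrix (Fin n) (Fin n) ℝ) : (Bᵀ * A * B).PosSemidef := by
  simpa [real_conjT] using hA.conjTranspose_mul_mul_same B

lemma psd_trans {X Y Z : Matrix (Fin n) (Fin n) ℝ} (h1 : (X - Y).PosSemidef)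
    (h2 : (Y - Z).PosSemidef) : (X - Z).PosSemidef := by
  simpa [sub_add_sub_cancel] using h1.add h2

lemma dot_trans (M N : Matrix (Fin n) (Fin n) ℝ) (x y : Fin n → ℝ) :
    x ⬝ᵥ ((Mᵀ * N) *ᵥ y) = (M *ᵥ x) ⬝ᵥ (N *ᵥ y) := by
  rw [← mulVec_mulVec, dotProduct_mulVec, vecMul_transpose]

lemma psd_dot_le {M N : Matrix (Fin n) (Fin n) ℝ} (h : (N - M).PosSemidef)
    (x : Fin n → ℝ) : x ⬝ᵥ (M *ᵥ x) ≤ x ⬝ᵥ (N *ᵥ x) := by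
  have := h.dotProduct_mulVec_nonneg x
  simp only [star_trivial, sub_mulVec, dotProduct_sub] at this
  linarith

/-- transpose as a CLM -/
def transCLM : Matrix (Fin n) (Fin n) ℝ →L[ℝ] Matrix (Fin n) (Fin n) ℝ :=
  LinearMap.toContinuousLinearMap
    { toFun := fun M => Mᵀ
      map_add' := fun M N => transpose_add M N
      map_smul' := fun c M => transpose_smul c M }

/-- quadratic form evaluation as a CLM in the matrix -/
def quadCLM (x : Fin n → ℝ) : Matrix (Fin n) (Fin n) ℝ →L[ℝ] ℝ :=
  LinearMap.toContinuousLinearMap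
    { toFun := fun M => x ⬝ᵥ (M *ᵥ x)
      map_add' := fun M N => by simp [add_mulVec]
      map_smul' := fun c M => by simp [smul_mulVec] }

lemma lyap_decay {A Q : Matrix (Fin n) (Fin n) ℝ}
    (hQ : Q.IsHermitian) (hQA : (-(Q * A + Aᵀ * Q)).PosSemidef) :
    ∀ s : ℝ, 0 ≤ s →
      (Q - (exp (s • A))ᵀ * Q * exp (s • A)).PosSemidef := by
  intro s hs
  refine Matrix.PosSemidef.of_dotProduct_mulVec_nonneg ?_ ?_
  · have h1 : ((exp (s • A))ᵀ * Q * exp (s • A)).IsHermitian := by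
      have := isHermitian_conjTranspose_mul_mul (exp (s • A)) hQ
      simpa [real_conjT] using this
    exact hQ.sub h1
  intro x
  simp only [star_trivial, sub_mulVec, dotProduct_sub]
  rw [sub_nonneg]
  set g : ℝ → ℝ := fun u => quadCLM x ((exp (u • A))ᵀ * (Q * exp (u • A))) with hg
  have hderiv : ∀ u : ℝ, HasDerivAt g
      (quadCLM x ((exp (u • A) * A)ᵀ * (Q * exp (u • A))
        + (exp (u • A))ᵀ * (Q * (exp (u • A) * A)))) u := by
    intro u
    have hE : HasDerivAt (fun t : ℝ => exp (t • A)) (exp (u • A) * A) u :=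
      hasDerivAt_exp_smul_const A u
    have hET : HasDerivAt (fun t : ℝ => (exp (t • A))ᵀ) ((exp (u • A) * A)ᵀ) u :=
      (transCLM.hasFDerivAt.comp_hasDerivAt u hE)
    have hQE : HasDerivAt (fun t : ℝ => Q * exp (t • A)) (Q * (exp (u • A) * A)) u :=
      hE.const_mul Q
    have hF := hET.mul hQE
    exact (quadCLM x).hasFDerivAt.comp_hasDerivAt u hF
  have hd_nonpos : ∀ u : ℝ,
      quadCLM x ((exp (u • A) * A)ᵀ * (Q * exp (u • A))
        + (exp (u • A))ᵀ * (Q * (exp (u • A) * A))) ≤ 0 := by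
    intro u
    set E := exp (u • A) with hE
    set y := E *ᵥ x with hy
    have hcomm : E * A = A * E := by
      have : Commute (u • A) A := (Commute.refl A).smul_left u
      exact (this.exp_left).symm ▸ rfl
    have h1 : x ⬝ᵥ (((E * A)ᵀ * (Q * E)) *ᵥ x) = (A *ᵥ y) ⬝ᵥ (Q *ᵥ y) := by
      rw [dot_trans]
      congr 1
      · rw [hcomm, ← mulVec_mulVec]
      · rw [← mulVec_mulVec]
    have h2 : x ⬝ᵥ ((Eᵀ * (Q * (E * A))) *ᵥ x) = y ⬝ᵥ ((Q * A) *ᵥ y) := by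
      rw [dot_trans]
      congr 1
      rw [hcomm, ← Matrix.mul_assoc, ← mulVec_mulVec]
    have h3 : (A *ᵥ y) ⬝ᵥ (Q *ᵥ y) = y ⬝ᵥ ((Aᵀ * Q) *ᵥ y) := (dot_trans A Q y y).symm
    have hq : quadCLM x ((E * A)ᵀ * (Q * E) + Eᵀ * (Q * (E * A)))
        = y ⬝ᵥ ((Aᵀ * Q + Q * A) *ᵥ y) := by
      show x ⬝ᵥ (((E * A)ᵀ * (Q * E) + Eᵀ * (Q * (E * A))) *ᵥ x) = _
      rw [add_mulVec, dotProduct_add, h1, h2, h3, add_mulVec, dotProduct_add]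
    rw [hq]
    have := hQA.dotProduct_mulVec_nonneg y
    simp only [star_trivial, neg_mulVec, dotProduct_neg, add_mulVec, dotProduct_add] at this ⊢
    linarith
  have hanti : AntitoneOn g (Set.Ici (0:ℝ)) := by
    apply antitoneOn_of_deriv_nonpos (convex_Ici 0)
    · exact (fun u _ => (hderiv u).differentiableAt.continuousAt.continuousWithinAt)
    · exact fun u _ => (hderiv u).differentiableAt.differentiableWithinAt
    · intro u _
      rw [(hderiv u).deriv]
      exact hd_nonpos u
  have hle : g s ≤ g 0 := hanti Set.self_mem_Ici hs hs
  have hg0 : g 0 = x ⬝ᵥ (Q *ᵥ x) := by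
    show x ⬝ᵥ (((exp ((0:ℝ) • A))ᵀ * (Q * exp ((0:ℝ) • A))) *ᵥ x) = _
    simp [exp_zero]
  have hgs : g s = x ⬝ᵥ (((exp (s • A))ᵀ * Q * exp (s • A)) *ᵥ x) := by
    show x ⬝ᵥ (((exp (s • A))ᵀ * (Q * exp (s • A))) *ᵥ x) = _
    rw [Matrix.mul_assoc]
  rw [← hg0, ← hgs]
  exact hle

lemma dot_self_eq_norm_sq (v : EuclideanSpace ℝ (Fin n)) :
    (WithLp.equiv 2 _ v) ⬝ᵥ (WithLp.equiv 2 _ v) = ‖v‖ ^ 2 := by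
  rw [← real_inner_self_eq_norm_sq, PiLp.inner_apply]
  simp [dotProduct, mul_comm, sq]

lemma inner_eq_dot (v w : EuclideanSpace ℝ (Fin n)) :
    inner ℝ v w = (WithLp.equiv 2 _ v) ⬝ᵥ (WithLp.equiv 2 _ w : Fin n → ℝ) := by
  simp [PiLp.inner_apply, dotProduct, mul_comm]

lemma posdef_lower {Q : Matrix (Fin n) (Fin n) ℝ} (hQ : Q.PosDef) :
    ∃ a > (0:ℝ), ∀ x : Fin n → ℝ, a * (x ⬝ᵥ x) ≤ x ⬝ᵥ (Q *ᵥ x) := by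
  rcases Nat.eq_zero_or_pos n with hn | hn
  · subst hn
    exact ⟨1, one_pos, fun x => by simp [dotProduct]⟩
  · haveI : Nonempty (Fin n) := ⟨⟨0, hn⟩⟩
    set f : EuclideanSpace ℝ (Fin n) → ℝ :=
      fun v => (WithLp.equiv 2 _ v) ⬝ᵥ (Q *ᵥ (WithLp.equiv 2 _ v)) with hf
    have hcont : Continuous f := by
      apply Continuous.dotProduct
      · exact (PiLp.continuous_ofLp 2 _)
      · exact (continuous_const.matrix_mulVec (PiLp.continuous_ofLp 2 _))
    have hsph : IsCompact (Metric.sphere (0 : EuclideanSpace ℝ (Fin n)) 1) :=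
      isCompact_sphere 0 1
    have hne : (Metric.sphere (0 : EuclideanSpace ℝ (Fin n)) 1).Nonempty := by
      apply NormedSpace.sphere_nonempty.mpr
      norm_num
    obtain ⟨v₀, hv₀, hmin⟩ := hsph.exists_isMinOn hne hcont.continuousOn
    have hv₀norm : ‖v₀‖ = 1 := by simpa using hv₀
    have ha : 0 < f v₀ := by
      have hpos := fun h => hQ.dotProduct_mulVec_pos (x := WithLp.equiv 2 (Fin n → ℝ) v₀) h
      simp only [star_trivial] at hpos
      apply hpos
      intro h0
      have : v₀ = 0 := by
        have : WithLp.equiv 2 (Fin n → ℝ) v₀ = 0 := h0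
        simpa using congrArg (WithLp.equiv 2 (Fin n → ℝ)).symm this
      rw [this] at hv₀norm
      simp at hv₀norm
    refine ⟨f v₀, ha, fun x => ?_⟩
    rcases eq_or_ne x 0 with rfl | hx
    · simp
    · set v : EuclideanSpace ℝ (Fin n) := (WithLp.equiv 2 _).symm x with hv
      have hxv : WithLp.equiv 2 (Fin n → ℝ) v = x := by simp [hv]
      have hvne : v ≠ 0 := by
        intro h
        apply hx
        rw [← hxv, h]
        simp
      have hnv : 0 < ‖v‖ := norm_pos_iff.mpr hvne
      set u : EuclideanSpace ℝ (Fin n) := ‖v‖⁻¹ • v with hu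
      have hus : u ∈ Metric.sphere (0 : EuclideanSpace ℝ (Fin n)) 1 := by
        simp [hu, norm_smul, abs_of_pos (inv_pos.mpr hnv), inv_mul_cancel₀ hnv.ne']
      have hfu : f v₀ ≤ f u := hmin hus
      have hfu_eq : f u = ‖v‖⁻¹ * ‖v‖⁻¹ * f v := by
        simp only [hf, hu, WithLp.equiv_apply, WithLp.ofLp_smul, smul_dotProduct, dotProduct_smul, mulVec_smul,
          smul_eq_mul]
        ring
      have hfv : f v = x ⬝ᵥ (Q *ᵥ x) := by simp only [hf]; rw [hxv]
      have hvv : x ⬝ᵥ x = ‖v‖ ^ 2 := by rw [← hxv]; exact dot_self_eq_norm_sq v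
      have h1 : f v₀ * ‖v‖ ^ 2 ≤ f v := by
        have := mul_le_mul_of_nonneg_right hfu (le_of_lt (pow_pos hnv 2))
        rw [hfu_eq] at this
        calc f v₀ * ‖v‖ ^ 2 ≤ ‖v‖⁻¹ * ‖v‖⁻¹ * f v * ‖v‖ ^ 2 := this
          _ = f v := by
            rw [show ‖v‖⁻¹ * ‖v‖⁻¹ * f v * ‖v‖ ^ 2 = f v * ((‖v‖ * ‖v‖⁻¹) * (‖v‖ * ‖v‖⁻¹)) by ring,
              mul_inv_cancel₀ hnv.ne']
            ring
      rw [hvv, ← hfv]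
      exact h1

lemma dot_upper (Q : Matrix (Fin n) (Fin n) ℝ) (x : Fin n → ℝ) :
    x ⬝ᵥ (Q *ᵥ x) ≤ ‖Q‖ * (x ⬝ᵥ x) := by
  set v : EuclideanSpace ℝ (Fin n) := (WithLp.equiv 2 _).symm x with hv
  set w : EuclideanSpace ℝ (Fin n) := (WithLp.equiv 2 _).symm (Q *ᵥ x) with hw
  have h1 : x ⬝ᵥ (Q *ᵥ x) = inner ℝ v w := by
    rw [inner_eq_dot]; simp [hv, hw]
  have h2 : inner ℝ v w ≤ ‖v‖ * ‖w‖ := real_inner_le_norm v w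
  have h3 : ‖w‖ ≤ ‖Q‖ * ‖v‖ := by
    have := Q.l2_opNorm_mulVec v
    simpa [hw, hv] using this
  have h4 : x ⬝ᵥ x = ‖v‖ ^ 2 := by
    have := dot_self_eq_norm_sq v
    simpa [hv] using this
  have hvn : (0:ℝ) ≤ ‖v‖ := norm_nonneg v
  calc x ⬝ᵥ (Q *ᵥ x) = inner ℝ v w := h1
    _ ≤ ‖v‖ * ‖w‖ := h2
    _ ≤ ‖v‖ * (‖Q‖ * ‖v‖) := by nlinarith [norm_nonneg w]
    _ = ‖Q‖ * (x ⬝ᵥ x) := by rw [h4]; ring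

lemma norm_le_of_quad {M : Matrix (Fin n) (Fin n) ℝ} {a b : ℝ} (ha : 0 < a) (hb : 0 ≤ b)
    (h : ∀ x : Fin n → ℝ, a * ((M *ᵥ x) ⬝ᵥ (M *ᵥ x)) ≤ b * (x ⬝ᵥ x)) :
    ‖M‖ ≤ Real.sqrt (b / a) := by
  rw [Matrix.cstar_norm_def]
  apply ContinuousLinearMap.opNorm_le_bound _ (Real.sqrt_nonneg _)
  intro v
  set x : Fin n → ℝ := WithLp.equiv 2 _ v with hx
  set W := toEuclideanCLM (𝕜 := ℝ) M v with hW
  have hWx : (WithLp.equiv 2 _ W : Fin n → ℝ) = M *ᵥ x := by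
    rw [hW, WithLp.equiv_apply, Matrix.ofLp_toEuclideanCLM]
    simp [Matrix.toLin'_apply, hx]
  have hW2 : ‖W‖ ^ 2 = (M *ᵥ x) ⬝ᵥ (M *ᵥ x) := by
    rw [← hWx]; exact (dot_self_eq_norm_sq W).symm
  have hv2 : x ⬝ᵥ x = ‖v‖ ^ 2 := by
    have := dot_self_eq_norm_sq v
    simpa [hx] using this
  have key : ‖W‖ ^ 2 ≤ (b / a) * ‖v‖ ^ 2 := by
    rw [hW2, ← hv2]
    rw [div_mul_eq_mul_div, le_div_iff₀ ha]
    have := h x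
    nlinarith
  calc ‖W‖ = Real.sqrt (‖W‖ ^ 2) := (Real.sqrt_sq (norm_nonneg W)).symm
    _ ≤ Real.sqrt ((b / a) * ‖v‖ ^ 2) := Real.sqrt_le_sqrt key
    _ = Real.sqrt (b / a) * ‖v‖ := by
        rw [Real.sqrt_mul (div_nonneg hb ha.le), Real.sqrt_sq (norm_nonneg v)]

end ResetAux

/-- Multiple-Lyapunov-function dwell time criterion for reset switched systems: if there are
symmetric positive definite `Q_p` with `Q_p A_p + A_pᵀ Q_p` negative definite and
`exp(τ A_q)ᵀ R_{(q,p)}ᵀ Q_p R_{(q,p)} exp(τ A_q) ⪯ Q_q` for all `p, q`, then the reset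
switched system is stable for every switching signal with dwell time `τ`. -/
theorem reset_system_stable_of_MLF_dwell {n : ℕ} {P : Type*} [Fintype P]
    (A : P → Matrix (Fin n) (Fin n) ℝ)
    (R : P → P → Matrix (Fin n) (Fin n) ℝ)
    (τ : ℝ) (hτ : 0 < τ)
    (Q : P → Matrix (Fin n) (Fin n) ℝ)
    (hQ : ∀ p, (Q p).PosDef)
    (hQA : ∀ p, (-(Q p * A p + (A p)ᵀ * Q p)).PosDef)
    (hLMI : ∀ p q, (Q q -
      (exp (τ • A q))ᵀ * (R q p)ᵀ * Q p * R q p * exp (τ • A q)).PosSemidef) :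
    ∃ C > (0 : ℝ), ∀ (j : ℕ) (p : ℕ → P) (d : ℕ → ℝ),
      (∀ k, 1 ≤ k → k ≤ j → τ ≤ d k) →
      ∀ s : ℝ, 0 ≤ s →
        ‖exp (s • A (p j)) * resetTransition A R p d j‖ ≤ C := by
  classical
  rcases isEmpty_or_nonempty P with hP | hP
  · exact ⟨1, one_pos, fun j p d _ s _ => (hP.false (p 0)).elim⟩
  choose a ha0 ha using fun p : P => ResetAux.posdef_lower (hQ p)
  set alo : ℝ := Finset.univ.inf' Finset.univ_nonempty a with halo
  have halo_pos : 0 < alo := by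
    rw [halo, Finset.lt_inf'_iff]
    exact fun p _ => ha0 p
  have halo_le : ∀ p : P, alo ≤ a p := fun p => Finset.inf'_le _ (Finset.mem_univ p)
  set b : ℝ := Finset.univ.sup' Finset.univ_nonempty (fun p => ‖Q p‖) with hb
  have hble : ∀ p : P, ‖Q p‖ ≤ b := fun p =>
    Finset.le_sup' (f := fun p : P => ‖Q p‖) (Finset.mem_univ p)
  have hb0 : 0 ≤ b := le_trans (norm_nonneg (Q (Classical.arbitrary P))) (hble _)
  have step : ∀ (q p' : P) (dd : ℝ), τ ≤ dd →
      (Q q - (exp (dd • A q))ᵀ * ((R q p')ᵀ * Q p' * R q p') * exp (dd • A q)).PosSemidef := by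
    intro q p' dd hdd
    have hcomm : Commute (τ • A q) ((dd - τ) • A q) :=
      ((Commute.refl (A q)).smul_left τ).smul_right (dd - τ)
    have hsplit : exp (dd • A q) = exp (τ • A q) * exp ((dd - τ) • A q) := by
      rw [← Matrix.exp_add_of_commute _ _ hcomm, ← add_smul]
      ring_nf
    have hτd : (0:ℝ) ≤ dd - τ := by linarith
    have hdecay := ResetAux.lyap_decay (hQ q).1 (hQA q).posSemidef (dd - τ) hτd
    have hLMIc := ResetAux.psd_conj (hLMI p' q) (exp ((dd - τ) • A q))
    rw [Matrix.mul_sub, Matrix.sub_mul] at hLMIc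
    have htr := ResetAux.psd_trans hdecay hLMIc
    have hEq : (exp (dd • A q))ᵀ * ((R q p')ᵀ * Q p' * R q p') * exp (dd • A q)
        = (exp ((dd - τ) • A q))ᵀ *
            ((exp (τ • A q))ᵀ * (R q p')ᵀ * Q p' * R q p' * exp (τ • A q)) *
            exp ((dd - τ) • A q) := by
      rw [hsplit]
      simp only [Matrix.transpose_mul, Matrix.mul_assoc]
    rw [hEq]
    exact htr
  have key : ∀ (j : ℕ) (p : ℕ → P) (d : ℕ → ℝ), (∀ k, 1 ≤ k → k ≤ j → τ ≤ d k) →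
      (Q (p 0) - (resetTransition A R p d j)ᵀ * Q (p j) *
        resetTransition A R p d j).PosSemidef := by
    intro j
    induction j with
    | zero =>
      intro p d _
      simp only [resetTransition, Matrix.transpose_one, Matrix.one_mul, Matrix.mul_one, sub_self]
      exact Matrix.PosSemidef.zero
    | succ j ih =>
      intro p d hd
      have hIH := ih p d (fun k h1 h2 => hd k h1 (h2.trans (Nat.le_succ j)))
      have hdj : τ ≤ d (j+1) := hd (j+1) (Nat.le_add_left 1 j) (le_refl _)
      have hstep := step (p j) (p (j+1)) (d (j+1)) hdj
      have hconj := ResetAux.psd_conj hstep (resetTransition A R p d j)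
      rw [Matrix.mul_sub, Matrix.sub_mul] at hconj
      have htr := ResetAux.psd_trans hIH hconj
      have hEq : (resetTransition A R p d (j+1))ᵀ * Q (p (j+1)) * resetTransition A R p d (j+1)
          = (resetTransition A R p d j)ᵀ *
              ((exp (d (j+1) • A (p j)))ᵀ *
                ((R (p j) (p (j+1)))ᵀ * Q (p (j+1)) * R (p j) (p (j+1))) *
                exp (d (j+1) • A (p j))) * resetTransition A R p d j := by
        show (R (p j) (p (j+1)) * exp (d (j+1) • A (p j)) * resetTransition A R p d j)ᵀ *
            Q (p (j+1)) *
            (R (p j) (p (j+1)) * exp (d (j+1) • A (p j)) * resetTransition A R p d j) = _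
        simp only [Matrix.transpose_mul, Matrix.mul_assoc]
      rw [hEq]
      exact htr
  refine ⟨Real.sqrt (b / alo) + 1, by positivity, ?_⟩
  intro j p d hd s hs
  set G := exp (s • A (p j)) * resetTransition A R p d j with hG
  have hdecay := ResetAux.lyap_decay (hQ (p j)).1 (hQA (p j)).posSemidef s hs
  have hconj := ResetAux.psd_conj hdecay (resetTransition A R p d j)
  rw [Matrix.mul_sub, Matrix.sub_mul] at hconj
  have htr := ResetAux.psd_trans (key j p d hd) hconj
  have hquad : ∀ x : Fin n → ℝ, alo * ((G *ᵥ x) ⬝ᵥ (G *ᵥ x)) ≤ b * (x ⬝ᵥ x) := by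
    intro x
    have hww : (0:ℝ) ≤ (G *ᵥ x) ⬝ᵥ (G *ᵥ x) :=
      Finset.sum_nonneg fun i _ => mul_self_nonneg _
    have hxx : (0:ℝ) ≤ x ⬝ᵥ x := Finset.sum_nonneg fun i _ => mul_self_nonneg _
    have e1 : alo * ((G *ᵥ x) ⬝ᵥ (G *ᵥ x)) ≤ a (p j) * ((G *ᵥ x) ⬝ᵥ (G *ᵥ x)) :=
      mul_le_mul_of_nonneg_right (halo_le _) hww
    have e2 : a (p j) * ((G *ᵥ x) ⬝ᵥ (G *ᵥ x)) ≤ (G *ᵥ x) ⬝ᵥ (Q (p j) *ᵥ (G *ᵥ x)) :=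
      ha (p j) (G *ᵥ x)
    have e3 : (G *ᵥ x) ⬝ᵥ (Q (p j) *ᵥ (G *ᵥ x)) = x ⬝ᵥ ((Gᵀ * Q (p j) * G) *ᵥ x) := by
      rw [Matrix.mul_assoc, ResetAux.dot_trans, mulVec_mulVec]
    have e3' : Gᵀ * Q (p j) * G
        = (resetTransition A R p d j)ᵀ *
            ((exp (s • A (p j)))ᵀ * Q (p j) * exp (s • A (p j))) *
            resetTransition A R p d j := by
      rw [hG]
      simp only [Matrix.transpose_mul, Matrix.mul_assoc]
    have e4 : x ⬝ᵥ ((Gᵀ * Q (p j) * G) *ᵥ x) ≤ x ⬝ᵥ (Q (p 0) *ᵥ x) := by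
      rw [e3']
      exact ResetAux.psd_dot_le htr x
    have e5 : x ⬝ᵥ (Q (p 0) *ᵥ x) ≤ b * (x ⬝ᵥ x) :=
      le_trans (ResetAux.dot_upper _ x) (mul_le_mul_of_nonneg_right (hble _) hxx)
    linarith
  have hnorm := ResetAux.norm_le_of_quad halo_pos hb0 hquad
  calc ‖G‖ ≤ Real.sqrt (b / alo) := hnorm
    _ ≤ Real.sqrt (b / alo) + 1 := by linarith
end
end

section
/- Let P be a finite index set, (A_p)_{p∈P} a family of n×n real matrices, and 𝓘 a compact set of n×n real matrices. Suppose that for some τ > 0 there exists a collection of symmetric positive definite matrices (Q_p)_{p∈P} such that Q_p·A_p + A_pᵀ·Q_p is negative definite for all p ∈ P, and exp(τ·A_q)ᵀ·Mᵀ·Q_p·M·exp(τ·A_q) ⪯ Q_q for all p, q ∈ P and all M ∈ 𝓘. Then there exists C > 0 such that for every j ≥ 0, every switching sequence p_0, …, p_j ∈ P, all durations d_1, …, d_j ≥ τ, every choice of impulses M_1, …, M_j ∈ 𝓘, and every s ≥ 0, one has ‖exp(s·A_{p_j})·Ψ_j‖ ≤ C; that is, the impulsive switched system is stable under arbitrary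 impulses for every switching signal with dwell time τ. -/
open Matrix NormedSpace
open scoped Matrix.Norms.L2Operator

noncomputable section

/-- helper: quadratic form identity -/
lemma dot_conj {n : ℕ} (X N : Matrix (Fin n) (Fin n) ℝ) (x : Fin n → ℝ) :
    x ⬝ᵥ ((Xᵀ * N * X) *ᵥ x) = (X *ᵥ x) ⬝ᵥ (N *ᵥ (X *ᵥ x)) := by
  rw [Matrix.mul_assoc, ← Matrix.mulVec_mulVec, Matrix.dotProduct_mulVec x Xᵀ,
    Matrix.vecMul_transpose, Matrix.mulVec_mulVec]

lemma lyapunov_psd {n : ℕ} (A Q : Matrix (Fin n) (Fin n) ℝ) (hQsym : Q.IsHermitian)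
    (hS : (-(Q * A + Aᵀ * Q)).PosSemidef) (t : ℝ) (ht : 0 ≤ t) :
    (Q - (exp (t • A))ᵀ * Q * exp (t • A)).PosSemidef := by
  have hexpT : ∀ u : ℝ, (exp (u • A))ᵀ = exp (u • Aᵀ) := by
    intro u
    rw [← Matrix.exp_transpose, Matrix.transpose_smul]
  refine Matrix.PosSemidef.of_dotProduct_mulVec_nonneg ?_ ?_
  · -- Hermitian
    have h1 : ((exp (t • A))ᵀ * Q * exp (t • A)).IsHermitian := by
      have := Matrix.isHermitian_conjTranspose_mul_mul (exp (t • A)) hQsym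
      rwa [Matrix.conjTranspose_eq_transpose_of_trivial] at this
    exact hQsym.sub h1
  · intro x
    have hstar : star x = x := by simp
    rw [hstar]
    -- the scalar Lyapunov function
    set g : ℝ → ℝ := fun u => x ⬝ᵥ ((exp (u • Aᵀ) * Q * exp (u • A)) *ᵥ x) with hg
    -- the linear functional M ↦ x ⬝ᵥ (M *ᵥ x)
    let L₀ : Matrix (Fin n) (Fin n) ℝ →ₗ[ℝ] ℝ :=
      { toFun := fun M => x ⬝ᵥ (M *ᵥ x)
        map_add' := fun M N => by simp [Matrix.add_mulVec, dotProduct_add]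
        map_smul' := fun c M => by simp [Matrix.smul_mulVec, dotProduct_smul] }
    let L : Matrix (Fin n) (Fin n) ℝ →L[ℝ] ℝ := LinearMap.toContinuousLinearMap L₀
    have hL : ∀ M, L M = x ⬝ᵥ (M *ᵥ x) := fun M => rfl
    have hderiv : ∀ u : ℝ, HasDerivAt g
        (x ⬝ᵥ (((Aᵀ * exp (u • Aᵀ) * Q) * exp (u • A)
          + (exp (u • Aᵀ) * Q) * (exp (u • A) * A)) *ᵥ x)) u := by
      intro u
      have h1 : HasDerivAt (fun v : ℝ => exp (v • Aᵀ)) (Aᵀ * exp (u • Aᵀ)) u :=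
        hasDerivAt_exp_smul_const' Aᵀ u
      have h2 : HasDerivAt (fun v : ℝ => exp (v • A)) (exp (u • A) * A) u :=
        hasDerivAt_exp_smul_const A u
      have hF : HasDerivAt (fun v : ℝ => exp (v • Aᵀ) * Q * exp (v • A))
          ((Aᵀ * exp (u • Aᵀ) * Q) * exp (u • A)
            + (exp (u • Aᵀ) * Q) * (exp (u • A) * A)) u :=
        (h1.mul_const Q).mul h2
      have := L.hasFDerivAt.comp_hasDerivAt u hF
      exact this
    have hderiv2 : ∀ u : ℝ, HasDerivAt g
        (-((exp (u • A) *ᵥ x) ⬝ᵥ ((-(Q * A + Aᵀ * Q)) *ᵥ (exp (u • A) *ᵥ x)))) u := by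
      intro u
      have hcommA : Commute A (exp (u • A)) := ((Commute.refl A).smul_right u).exp_right
      have hcommAT : Commute Aᵀ (exp (u • Aᵀ)) := ((Commute.refl Aᵀ).smul_right u).exp_right
      have hmat : Aᵀ * exp (u • Aᵀ) * Q * exp (u • A)
            + exp (u • Aᵀ) * Q * (exp (u • A) * A)
          = (exp (u • A))ᵀ * (Aᵀ * Q + Q * A) * exp (u • A) := by
        rw [show exp (u • A) * A = A * exp (u • A) from hcommA.eq.symm]
        rw [hexpT, hcommAT.eq]
        noncomm_ring
      have hval : x ⬝ᵥ (((Aᵀ * exp (u • Aᵀ) * Q) * exp (u • A)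
            + (exp (u • Aᵀ) * Q) * (exp (u • A) * A)) *ᵥ x)
          = -((exp (u • A) *ᵥ x) ⬝ᵥ ((-(Q * A + Aᵀ * Q)) *ᵥ (exp (u • A) *ᵥ x))) := by
        rw [show (Aᵀ * exp (u • Aᵀ) * Q) * exp (u • A)
              + (exp (u • Aᵀ) * Q) * (exp (u • A) * A)
            = (exp (u • A))ᵀ * (Aᵀ * Q + Q * A) * exp (u • A) from hmat]
        rw [dot_conj]
        rw [Matrix.neg_mulVec, dotProduct_neg, neg_neg, Matrix.add_mulVec, dotProduct_add,
          Matrix.add_mulVec, dotProduct_add]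
        ring
      exact hval ▸ hderiv u
    have hdiff : Differentiable ℝ g := fun u => (hderiv2 u).differentiableAt
    have hmono : Antitone g := by
      apply antitone_of_deriv_nonpos hdiff
      intro u
      rw [(hderiv2 u).deriv]
      have h0 := hS.dotProduct_mulVec_nonneg (exp (u • A) *ᵥ x)
      simp only [star_trivial] at h0
      linarith
    have hle : g t ≤ g 0 := hmono ht
    have hg0 : g 0 = x ⬝ᵥ (Q *ᵥ x) := by
      simp [hg, exp_zero]
    have hgt : g t = x ⬝ᵥ (((exp (t • A))ᵀ * Q * exp (t • A)) *ᵥ x) := by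
      rw [hg, hexpT]
    rw [Matrix.sub_mulVec, dotProduct_sub]
    rw [hg0, hgt] at hle
    linarith

/-- congruence preserves the PSD order -/
lemma psd_conj {n : ℕ} {B C : Matrix (Fin n) (Fin n) ℝ} (h : (B - C).PosSemidef)
    (X : Matrix (Fin n) (Fin n) ℝ) :
    (Xᵀ * B * X - Xᵀ * C * X).PosSemidef := by
  have := h.conjTranspose_mul_mul_same X
  rw [Matrix.conjTranspose_eq_transpose_of_trivial] at this
  rw [Matrix.mul_sub, Matrix.sub_mul] at this
  exact this

/-- lower bound for the quadratic form of a positive definite real matrix -/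
lemma quad_continuous {n : ℕ} (Q : Matrix (Fin n) (Fin n) ℝ) :
    Continuous fun v : EuclideanSpace ℝ (Fin n) =>
      (WithLp.equiv 2 (Fin n → ℝ) v) ⬝ᵥ (Q *ᵥ (WithLp.equiv 2 (Fin n → ℝ) v)) := by
  have hcont : ∀ i, Continuous fun v : EuclideanSpace ℝ (Fin n) => v i :=
    fun i => (EuclideanSpace.proj i).continuous
  simp only [dotProduct, Matrix.mulVec, dotProduct]
  exact continuous_finset_sum _ fun i _ => (hcont i).mul
    (continuous_finset_sum _ fun j _ => continuous_const.mul (hcont j))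

lemma dot_self_eq_norm_sq {n : ℕ} (v : EuclideanSpace ℝ (Fin n)) :
    (WithLp.equiv 2 (Fin n → ℝ) v) ⬝ᵥ (WithLp.equiv 2 (Fin n → ℝ) v) = ‖v‖ ^ 2 := by
  rw [EuclideanSpace.norm_eq, Real.sq_sqrt (by positivity)]
  exact Finset.sum_congr rfl fun i _ => by
    rw [Real.norm_eq_abs, sq_abs, sq]; rfl

lemma posdef_lower {n : ℕ} {Q : Matrix (Fin n) (Fin n) ℝ} (hQ : Q.PosDef) :
    ∃ c > (0 : ℝ), ∀ x : Fin n → ℝ, c * (x ⬝ᵥ x) ≤ x ⬝ᵥ (Q *ᵥ x) := by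
  cases n with
  | zero =>
    exact ⟨1, one_pos, fun x => by simp [dotProduct]⟩
  | succ m =>
    set f : EuclideanSpace ℝ (Fin (m + 1)) → ℝ := fun v =>
      (WithLp.equiv 2 (Fin (m + 1) → ℝ) v) ⬝ᵥ (Q *ᵥ (WithLp.equiv 2 (Fin (m + 1) → ℝ) v)) with hf
    have hcont : Continuous f := quad_continuous Q
    have hsne : (Metric.sphere (0 : EuclideanSpace ℝ (Fin (m + 1))) 1).Nonempty :=
      NormedSpace.sphere_nonempty.mpr zero_le_one
    obtain ⟨v₀, hv₀s, hmin⟩ := (isCompact_sphere (0 : EuclideanSpace ℝ (Fin (m + 1))) 1)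
      |>.exists_isMinOn hsne hcont.continuousOn
    have hv₀n : ‖v₀‖ = 1 := mem_sphere_zero_iff_norm.mp hv₀s
    have hv₀0 : (WithLp.equiv 2 (Fin (m + 1) → ℝ) v₀) ≠ 0 := by
      intro h
      have : v₀ = 0 := by
        have := congrArg (WithLp.equiv 2 (Fin (m + 1) → ℝ)).symm h
        simpa using this
      rw [this] at hv₀n; simp at hv₀n
    have hc : 0 < f v₀ := hQ.dotProduct_mulVec_pos (by simpa using hv₀0)
    refine ⟨f v₀, hc, fun x => ?_⟩
    by_cases hx : x = 0
    · simp [hx]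
    · set v : EuclideanSpace ℝ (Fin (m + 1)) := (WithLp.equiv 2 (Fin (m + 1) → ℝ)).symm x with hv
      have hvne : v ≠ 0 := by
        intro h; apply hx
        have := congrArg (WithLp.equiv 2 (Fin (m + 1) → ℝ)) h
        simpa [hv] using this
      have hr : (0 : ℝ) < ‖v‖ := norm_pos_iff.mpr hvne
      set r : ℝ := ‖v‖ with hrdef
      have hu : (r⁻¹ • v) ∈ Metric.sphere (0 : EuclideanSpace ℝ (Fin (m + 1))) 1 := by
        rw [mem_sphere_zero_iff_norm, norm_smul, norm_inv, norm_norm, ← hrdef,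
          inv_mul_cancel₀ hr.ne']
      have hfu : f (r⁻¹ • v) = r⁻¹ * (r⁻¹ * (x ⬝ᵥ (Q *ᵥ x))) := by
        rw [hf]
        simp only [show WithLp.equiv 2 (Fin (m + 1) → ℝ) (r⁻¹ • v) = r⁻¹ • WithLp.equiv 2 (Fin (m + 1) → ℝ) v from rfl]
        have : WithLp.equiv 2 (Fin (m + 1) → ℝ) v = x := by simp [hv]
        rw [this, Matrix.mulVec_smul, smul_dotProduct, dotProduct_smul]
        simp [smul_eq_mul]
      have hmin' : f v₀ ≤ f (r⁻¹ • v) := hmin hu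
      rw [hfu] at hmin'
      have hxx : x ⬝ᵥ x = r ^ 2 := by
        have := dot_self_eq_norm_sq v
        rw [show WithLp.equiv 2 (Fin (m + 1) → ℝ) v = x from by simp [hv]] at this
        rw [this]
      rw [hxx]
      have hr2 : (0 : ℝ) < r ^ 2 := by positivity
      have heq : (r⁻¹ * (r⁻¹ * (x ⬝ᵥ (Q *ᵥ x)))) * r ^ 2 = x ⬝ᵥ (Q *ᵥ x) := by
        field_simp
      have h2 : f v₀ * r ^ 2 ≤ x ⬝ᵥ (Q *ᵥ x) := by
        calc f v₀ * r ^ 2 ≤ (r⁻¹ * (r⁻¹ * (x ⬝ᵥ (Q *ᵥ x)))) * r ^ 2 :=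
              mul_le_mul_of_nonneg_right hmin' hr2.le
          _ = x ⬝ᵥ (Q *ᵥ x) := heq
      linarith

/-- upper bound for the quadratic form of any real matrix -/
lemma quad_upper {n : ℕ} (Q : Matrix (Fin n) (Fin n) ℝ) :
    ∃ c > (0 : ℝ), ∀ x : Fin n → ℝ, x ⬝ᵥ (Q *ᵥ x) ≤ c * (x ⬝ᵥ x) := by
  cases n with
  | zero =>
    exact ⟨1, one_pos, fun x => by simp [dotProduct]⟩
  | succ m =>
    set f : EuclideanSpace ℝ (Fin (m + 1)) → ℝ := fun v =>
      (WithLp.equiv 2 (Fin (m + 1) → ℝ) v) ⬝ᵥ (Q *ᵥ (WithLp.equiv 2 (Fin (m + 1) → ℝ) v)) with hf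
    have hcont : Continuous f := quad_continuous Q
    have hsne : (Metric.sphere (0 : EuclideanSpace ℝ (Fin (m + 1))) 1).Nonempty :=
      NormedSpace.sphere_nonempty.mpr zero_le_one
    obtain ⟨v₀, hv₀s, hmax⟩ := (isCompact_sphere (0 : EuclideanSpace ℝ (Fin (m + 1))) 1)
      |>.exists_isMaxOn hsne hcont.continuousOn
    refine ⟨max (f v₀) 1, lt_of_lt_of_le one_pos (le_max_right _ _), fun x => ?_⟩
    by_cases hx : x = 0
    · simp [hx]
    · set v : EuclideanSpace ℝ (Fin (m + 1)) := (WithLp.equiv 2 (Fin (m + 1) → ℝ)).symm x with hv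
      have hvne : v ≠ 0 := by
        intro h; apply hx
        have := congrArg (WithLp.equiv 2 (Fin (m + 1) → ℝ)) h
        simpa [hv] using this
      have hr : (0 : ℝ) < ‖v‖ := norm_pos_iff.mpr hvne
      set r : ℝ := ‖v‖ with hrdef
      have hu : (r⁻¹ • v) ∈ Metric.sphere (0 : EuclideanSpace ℝ (Fin (m + 1))) 1 := by
        rw [mem_sphere_zero_iff_norm, norm_smul, norm_inv, norm_norm, ← hrdef,
          inv_mul_cancel₀ hr.ne']
      have hfu : f (r⁻¹ • v) = r⁻¹ * (r⁻¹ * (x ⬝ᵥ (Q *ᵥ x))) := by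
        rw [hf]
        simp only [show WithLp.equiv 2 (Fin (m + 1) → ℝ) (r⁻¹ • v) = r⁻¹ • WithLp.equiv 2 (Fin (m + 1) → ℝ) v from rfl]
        have : WithLp.equiv 2 (Fin (m + 1) → ℝ) v = x := by simp [hv]
        rw [this, Matrix.mulVec_smul, smul_dotProduct, dotProduct_smul]
        simp [smul_eq_mul]
      have hmax' : f (r⁻¹ • v) ≤ f v₀ := hmax hu
      rw [hfu] at hmax'
      have hxx : x ⬝ᵥ x = r ^ 2 := by
        have := dot_self_eq_norm_sq v
        rw [show WithLp.equiv 2 (Fin (m + 1) → ℝ) v = x from by simp [hv]] at this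
        rw [this]
      rw [hxx]
      have hr2 : (0 : ℝ) < r ^ 2 := by positivity
      have heq : (r⁻¹ * (r⁻¹ * (x ⬝ᵥ (Q *ᵥ x)))) * r ^ 2 = x ⬝ᵥ (Q *ᵥ x) := by
        field_simp
      have h1 : x ⬝ᵥ (Q *ᵥ x) ≤ f v₀ * r ^ 2 := by
        calc x ⬝ᵥ (Q *ᵥ x) = (r⁻¹ * (r⁻¹ * (x ⬝ᵥ (Q *ᵥ x)))) * r ^ 2 := heq.symm
          _ ≤ f v₀ * r ^ 2 := mul_le_mul_of_nonneg_right hmax' hr2.le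
      have h2 : f v₀ * r ^ 2 ≤ max (f v₀) 1 * r ^ 2 := by
        nlinarith [le_max_left (f v₀) 1]
      linarith

lemma key_psd {n : ℕ} {P : Type*} (A : P → Matrix (Fin n) (Fin n) ℝ)
    (𝓘 : Set (Matrix (Fin n) (Fin n) ℝ)) (τ : ℝ)
    (Q : P → Matrix (Fin n) (Fin n) ℝ)
    (hQ : ∀ p, (Q p).PosDef)
    (hQA : ∀ p, (-(Q p * A p + (A p)ᵀ * Q p)).PosSemidef)
    (hLMI : ∀ p q, ∀ M ∈ 𝓘, (Q q -
      (exp (τ • A q))ᵀ * Mᵀ * Q p * M * exp (τ • A q)).PosSemidef) :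
    ∀ (j : ℕ) (p : ℕ → P) (d : ℕ → ℝ) (M : ℕ → Matrix (Fin n) (Fin n) ℝ),
      (∀ k, 1 ≤ k → k ≤ j → τ ≤ d k) →
      (∀ k, 1 ≤ k → k ≤ j → M k ∈ 𝓘) →
      ∀ s : ℝ, 0 ≤ s →
      (Q (p 0) - (exp (s • A (p j)) * impulsiveTransition A M p d j)ᵀ * Q (p j) *
        (exp (s • A (p j)) * impulsiveTransition A M p d j)).PosSemidef := by
  intro j
  induction j with
  | zero =>
    intro p d M _ _ s hs
    simp only [impulsiveTransition, mul_one]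
    exact lyapunov_psd (A (p 0)) (Q (p 0)) (hQ _).isHermitian (hQA _) s hs
  | succ j ih =>
    intro p d M hd hM s hs
    have hdj : τ ≤ d (j + 1) := hd (j + 1) (by omega) le_rfl
    have P1 := ih p d M (fun k h1 h2 => hd k h1 (by omega)) (fun k h1 h2 => hM k h1 (by omega))
      (d (j + 1) - τ) (by linarith)
    have hsplit : exp (d (j + 1) • A (p j))
        = exp (τ • A (p j)) * exp ((d (j + 1) - τ) • A (p j)) := by
      rw [← Matrix.exp_add_of_commute _ _ (((Commute.refl (A (p j))).smul_left τ).smul_right (d (j + 1) - τ))]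
      congr 1
      rw [← add_smul]
      ring_nf
    have P3 := psd_conj (hLMI (p (j + 1)) (p j) (M (j + 1)) (hM (j + 1) (by omega) le_rfl))
      (exp ((d (j + 1) - τ) • A (p j)) * impulsiveTransition A M p d j)
    have P2 := psd_conj
      (lyapunov_psd (A (p (j + 1))) (Q (p (j + 1))) (hQ _).isHermitian (hQA _) s hs)
      (M (j + 1) * exp (τ • A (p j)) *
        (exp ((d (j + 1) - τ) • A (p j)) * impulsiveTransition A M p d j))
    have hsum := (P1.add P3).add P2
    simp only [impulsiveTransition, hsplit]
    simp only [Matrix.transpose_mul, Matrix.mul_assoc] at hsum ⊢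
    convert hsum using 1
    abel


lemma norm_eq_sqrt_dot {n : ℕ} (w : Fin n → ℝ) :
    ‖(WithLp.equiv 2 (Fin n → ℝ)).symm w‖ = Real.sqrt (w ⬝ᵥ w) := by
  have := dot_self_eq_norm_sq ((WithLp.equiv 2 (Fin n → ℝ)).symm w)
  simp only [Equiv.apply_symm_apply] at this
  rw [this, Real.sqrt_sq (norm_nonneg _)]


/-- Multiple-Lyapunov-function dwell time criterion for impulsive switched systems with a
compact set `𝓘` of impulses: if there are symmetric positive definite `Q_p` with
`Q_p A_p + A_pᵀ Q_p` negative definite and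
`exp(τ A_q)ᵀ Mᵀ Q_p M exp(τ A_q) ⪯ Q_q` for all `p, q` and `M ∈ 𝓘`, then the impulsive
switched system is stable under arbitrary impulses for every switching signal with dwell
time `τ`. -/
theorem impulsive_system_stable_of_MLF_dwell {n : ℕ} {P : Type*} [Fintype P]
    (A : P → Matrix (Fin n) (Fin n) ℝ)
    (𝓘 : Set (Matrix (Fin n) (Fin n) ℝ)) (h𝓘 : IsCompact 𝓘)
    (τ : ℝ) (hτ : 0 < τ)
    (Q : P → Matrix (Fin n) (Fin n) ℝ)
    (hQ : ∀ p, (Q p).PosDef)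
    (hQA : ∀ p, (-(Q p * A p + (A p)ᵀ * Q p)).PosDef)
    (hLMI : ∀ p q, ∀ M ∈ 𝓘, (Q q -
      (exp (τ • A q))ᵀ * Mᵀ * Q p * M * exp (τ • A q)).PosSemidef) :
    ∃ C > (0 : ℝ), ∀ (j : ℕ) (p : ℕ → P) (d : ℕ → ℝ) (M : ℕ → Matrix (Fin n) (Fin n) ℝ),
      (∀ k, 1 ≤ k → k ≤ j → τ ≤ d k) →
      (∀ k, 1 ≤ k → k ≤ j → M k ∈ 𝓘) →
      ∀ s : ℝ, 0 ≤ s →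
        ‖exp (s • A (p j)) * impulsiveTransition A M p d j‖ ≤ C := by
  by_cases hP : Nonempty P
  swap
  · exact ⟨1, one_pos, fun j p d M _ _ _ _ => absurd ⟨p 0⟩ hP⟩
  choose c hc hcs using fun p => posdef_lower (hQ p)
  choose u hu hus using fun p => quad_upper (Q p)
  set cmin : ℝ := Finset.univ.inf' Finset.univ_nonempty c with hcmindef
  have hcmin : 0 < cmin := by
    rw [hcmindef, Finset.lt_inf'_iff]
    exact fun p _ => hc p
  have hcminle : ∀ p, cmin ≤ c p := fun p => Finset.inf'_le _ (Finset.mem_univ p)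
  set umax : ℝ := Finset.univ.sup' Finset.univ_nonempty u with humaxdef
  have humaxle : ∀ p, u p ≤ umax := fun p => Finset.le_sup' _ (Finset.mem_univ p)
  have humax : 0 < umax := lt_of_lt_of_le (hu (Classical.arbitrary P)) (humaxle _)
  set K : ℝ := umax / cmin with hK
  have hK0 : 0 < K := div_pos humax hcmin
  refine ⟨Real.sqrt K + 1, by positivity, ?_⟩
  intro j p d M hd hM s hs
  have hkey := key_psd A 𝓘 τ Q hQ (fun p => (hQA p).posSemidef) hLMI j p d M hd hM s hs
  set X := exp (s • A (p j)) * impulsiveTransition A M p d j with hX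
  have hquad : ∀ x : Fin n → ℝ, (X *ᵥ x) ⬝ᵥ (X *ᵥ x) ≤ K * (x ⬝ᵥ x) := by
    intro x
    have h1 := hkey.dotProduct_mulVec_nonneg x
    simp only [star_trivial] at h1
    rw [Matrix.sub_mulVec, dotProduct_sub, dot_conj] at h1
    have h2 := hcs (p j) (X *ᵥ x)
    have h3 := hus (p 0) x
    have hyy : (0 : ℝ) ≤ (X *ᵥ x) ⬝ᵥ (X *ᵥ x) :=
      Finset.sum_nonneg fun i _ => mul_self_nonneg _
    have hxx : (0 : ℝ) ≤ x ⬝ᵥ x := Finset.sum_nonneg fun i _ => mul_self_nonneg _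
    have hstep1 : cmin * ((X *ᵥ x) ⬝ᵥ (X *ᵥ x)) ≤ c (p j) * ((X *ᵥ x) ⬝ᵥ (X *ᵥ x)) :=
      mul_le_mul_of_nonneg_right (hcminle (p j)) hyy
    have hstep2 : u (p 0) * (x ⬝ᵥ x) ≤ umax * (x ⬝ᵥ x) :=
      mul_le_mul_of_nonneg_right (humaxle (p 0)) hxx
    rw [hK, div_mul_eq_mul_div, le_div_iff₀ hcmin]
    nlinarith
  rw [Matrix.l2_opNorm_def]
  apply ContinuousLinearMap.opNorm_le_bound _ (by positivity)
  intro v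
  have happ : ((Matrix.toEuclideanLin.trans LinearMap.toContinuousLinearMap) X) v
      = (WithLp.equiv 2 (Fin n → ℝ)).symm (X *ᵥ (WithLp.equiv 2 (Fin n → ℝ) v)) := rfl
  rw [happ, norm_eq_sqrt_dot]
  have hv : v = (WithLp.equiv 2 (Fin n → ℝ)).symm (WithLp.equiv 2 (Fin n → ℝ) v) :=
    (Equiv.symm_apply_apply _ _).symm
  rw [show ‖v‖ = Real.sqrt ((WithLp.equiv 2 (Fin n → ℝ) v) ⬝ᵥ (WithLp.equiv 2 (Fin n → ℝ) v))
    from by rw [hv, norm_eq_sqrt_dot]; simp]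
  set xv := WithLp.equiv 2 (Fin n → ℝ) v
  have hb := hquad xv
  have hxx : (0 : ℝ) ≤ xv ⬝ᵥ xv := Finset.sum_nonneg fun i _ => mul_self_nonneg _
  calc Real.sqrt ((X *ᵥ xv) ⬝ᵥ (X *ᵥ xv)) ≤ Real.sqrt (K * (xv ⬝ᵥ xv)) :=
        Real.sqrt_le_sqrt hb
    _ = Real.sqrt K * Real.sqrt (xv ⬝ᵥ xv) := Real.sqrt_mul hK0.le _
    _ ≤ (Real.sqrt K + 1) * Real.sqrt (xv ⬝ᵥ xv) := by
        nlinarith [Real.sqrt_nonneg (xv ⬝ᵥ xv), Real.sqrt_nonneg K]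
end
end

section
/- Let P be a finite index set partitioned into nonempty sets 𝔰 and 𝔲 (the indices of the stable and unstable subsystems), let (A_p)_{p∈P} be n×n real matrices and (R_{(p,q)})_{p,q∈P} reset matrices. Suppose there exist symmetric positive definite matrices (Q_p)_{p∈P} and positive constants λ_p (p ∈ 𝔰), μ_p (p ∈ 𝔲), and γ_{(p,q)} (p,q ∈ P) such that Q_p·A_p + A_pᵀ·Q_p ⪯ −λ_p·Q_p for all p ∈ 𝔰, Q_p·A_p + A_pᵀ·Q_p ⪯ μ_p·Q_p for all p ∈ 𝔲, and R_{(p,q)}ᵀ·Q_q·R_{(p,q)} ⪯ γ_{(p,q)}·Q_p for all p, q ∈ P. Set λ = min_{p∈𝔰} λ_p, μ = max_{p∈𝔲} μ_p and γ = max_{p,q∈P} γ_{(p,q)}. Let τ, η > 0, let p : ℕ → P be an infinite switching sequence and d_1, d_2, … positive durations with d_k ≥ τ whenever p_{k−1} ∈ 𝔰 and d_k ≤ η whenever p_{k−1} ∈ 𝔲, and set N_s(j) = #{0 ≤ i < j : p_i ∈ 𝔰} and N_u(j) = #{0 ≤ i < j : p_i ∈ 𝔲}. If limsup_{j→∞}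 ( −λ·N_s(j)·τ + μ·N_u(j)·η + j·ln γ ) < 0, then there exists C > 0 such that ‖exp(s·A_{p_j})·Φ_j‖ ≤ C for every j ≥ 0 and every s with 0 ≤ s ≤ d_{j+1}; that is, the reset switched system is stable along this switching signal. -/
open Matrix NormedSpace
open scoped Matrix.Norms.L2Operator

noncomputable section

namespace ResetAux

variable {n : ℕ}

lemma quad_nonneg {Q : Matrix (Fin n) (Fin n) ℝ} (h : Q.PosSemidef) (x : Fin n → ℝ) :
    0 ≤ x ⬝ᵥ (Q *ᵥ x) := by
  have := h.dotProduct_mulVec_nonneg x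
  simpa using this

lemma hasDerivAt_quad (Q : Matrix (Fin n) (Fin n) ℝ) {y : ℝ → (Fin n → ℝ)} {y' : Fin n → ℝ} {t : ℝ}
    (hy : HasDerivAt y y' t) :
    HasDerivAt (fun u => y u ⬝ᵥ (Q *ᵥ y u)) (y' ⬝ᵥ (Q *ᵥ y t) + y t ⬝ᵥ (Q *ᵥ y')) t := by
  have hyi : ∀ i : Fin n, HasDerivAt (fun u => y u i) (y' i) t := fun i =>
    ((ContinuousLinearMap.proj (R := ℝ) (φ := fun _ : Fin n => ℝ) i).hasFDerivAt.comp_hasDerivAt t hy)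
  have key : HasDerivAt (fun u => ∑ i, ∑ j, y u i * (Q i j * y u j))
      (∑ i, ∑ j, (y' i * (Q i j * y t j) + y t i * (Q i j * y' j))) t := by
    apply HasDerivAt.fun_sum
    intro i _
    apply HasDerivAt.fun_sum
    intro j _
    exact (hyi i).mul ((hyi j).const_mul (Q i j))
  have e1 : (fun u => ∑ i, ∑ j, y u i * (Q i j * y u j)) = fun u => y u ⬝ᵥ (Q *ᵥ y u) := by
    funext u
    simp [dotProduct, Matrix.mulVec, Finset.mul_sum]
  have e2 : (∑ i, ∑ j, (y' i * (Q i j * y t j) + y t i * (Q i j * y' j)))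
      = y' ⬝ᵥ (Q *ᵥ y t) + y t ⬝ᵥ (Q *ᵥ y') := by
    simp [dotProduct, Matrix.mulVec, Finset.mul_sum, Finset.sum_add_distrib]
  rw [e1, e2] at key
  exact key

lemma flow_bound (A Q : Matrix (Fin n) (Fin n) ℝ) (c : ℝ)
    (h : (c • Q - (Q * A + Aᵀ * Q)).PosSemidef) (x : Fin n → ℝ) {t : ℝ} (ht : 0 ≤ t) :
    (exp (t • A) *ᵥ x) ⬝ᵥ (Q *ᵥ (exp (t • A) *ᵥ x))
      ≤ Real.exp (c * t) * (x ⬝ᵥ (Q *ᵥ x)) := by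
  set y : ℝ → (Fin n → ℝ) := fun u => exp (u • A) *ᵥ x with hy_def
  let L : Matrix (Fin n) (Fin n) ℝ →ₗ[ℝ] (Fin n → ℝ) :=
    { toFun := fun M => M *ᵥ x
      map_add' := fun M N => Matrix.add_mulVec M N x
      map_smul' := fun r M => Matrix.smul_mulVec r M x }
  have hy : ∀ u : ℝ, HasDerivAt y (A *ᵥ y u) u := by
    intro u
    have h1 : HasDerivAt (fun v : ℝ => exp (v • A)) (A * exp (u • A)) u :=
      hasDerivAt_exp_smul_const' A u
    have h2 := (L.toContinuousLinearMap.hasFDerivAt).comp_hasDerivAt u h1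
    have e : ∀ M : Matrix (Fin n) (Fin n) ℝ, L.toContinuousLinearMap M = M *ᵥ x := fun M => rfl
    simp only [Function.comp_def, e] at h2
    simpa [hy_def, ← Matrix.mulVec_mulVec] using h2
  set f : ℝ → ℝ := fun u => y u ⬝ᵥ (Q *ᵥ y u) with hf_def
  have hf : ∀ u, HasDerivAt f ((A *ᵥ y u) ⬝ᵥ (Q *ᵥ y u) + y u ⬝ᵥ (Q *ᵥ (A *ᵥ y u))) u :=
    fun u => hasDerivAt_quad Q (hy u)
  have hDle : ∀ u, (A *ᵥ y u) ⬝ᵥ (Q *ᵥ y u) + y u ⬝ᵥ (Q *ᵥ (A *ᵥ y u)) ≤ c * f u := by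
    intro u
    have h0 := quad_nonneg h (y u)
    set z := y u
    have e1 : z ⬝ᵥ ((c • Q - (Q * A + Aᵀ * Q)) *ᵥ z)
        = c * (z ⬝ᵥ (Q *ᵥ z)) - ((A *ᵥ z) ⬝ᵥ (Q *ᵥ z) + z ⬝ᵥ (Q *ᵥ (A *ᵥ z))) := by
      rw [Matrix.sub_mulVec, Matrix.add_mulVec, dotProduct_sub, dotProduct_add,
        Matrix.smul_mulVec, dotProduct_smul]
      have e2 : z ⬝ᵥ ((Aᵀ * Q) *ᵥ z) = (A *ᵥ z) ⬝ᵥ (Q *ᵥ z) := by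
        rw [← Matrix.mulVec_mulVec, Matrix.dotProduct_mulVec, Matrix.vecMul_transpose]
      have e3 : z ⬝ᵥ ((Q * A) *ᵥ z) = z ⬝ᵥ (Q *ᵥ (A *ᵥ z)) := by
        rw [← Matrix.mulVec_mulVec]
      rw [e2, e3, smul_eq_mul]
      ring
    rw [e1] at h0
    simp only [hf_def]
    linarith
  set g : ℝ → ℝ := fun u => Real.exp (-c * u) * f u with hg_def
  have hg : ∀ u, HasDerivAt g
      (Real.exp (-c * u) * (-c) * f u +
        Real.exp (-c * u) * ((A *ᵥ y u) ⬝ᵥ (Q *ᵥ y u) + y u ⬝ᵥ (Q *ᵥ (A *ᵥ y u)))) u := by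
    intro u
    have he : HasDerivAt (fun u : ℝ => Real.exp (-c * u)) (Real.exp (-c * u) * (-c)) u := by
      have : HasDerivAt (fun u : ℝ => -c * u) (-c) u := by
        simpa using (hasDerivAt_id u).const_mul (-c)
      exact this.exp
    exact he.mul (hf u)
  have hanti : Antitone g := by
    apply antitone_of_deriv_nonpos
    · exact fun u => (hg u).differentiableAt
    · intro u
      rw [(hg u).deriv]
      have h1 := hDle u
      have h2 : (0:ℝ) < Real.exp (-c * u) := Real.exp_pos _
      nlinarith
  have hgt : g t ≤ g 0 := hanti ht
  have hy0 : y 0 = x := by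
    simp [hy_def, exp_zero]
  have hg0 : g 0 = x ⬝ᵥ (Q *ᵥ x) := by
    simp [hg_def, hf_def, hy0]
  rw [hg0] at hgt
  have h2 : (0:ℝ) < Real.exp (c * t) := Real.exp_pos _
  have h3 : Real.exp (c * t) * Real.exp (-c * t) = 1 := by
    rw [← Real.exp_add]; ring_nf; exact Real.exp_zero
  have h4 := mul_le_mul_of_nonneg_left hgt h2.le
  calc f t = Real.exp (c * t) * Real.exp (-c * t) * f t := by rw [h3]; ring
    _ = Real.exp (c * t) * (Real.exp (-c * t) * f t) := by ring
    _ ≤ Real.exp (c * t) * (x ⬝ᵥ (Q *ᵥ x)) := h4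

variable {n : ℕ}

lemma dot_self_nonneg (x : Fin n → ℝ) : 0 ≤ x ⬝ᵥ x :=
  Finset.sum_nonneg fun i _ => mul_self_nonneg _

lemma mulVec_dot_le (M : Matrix (Fin n) (Fin n) ℝ) (x : Fin n → ℝ) :
    (M *ᵥ x) ⬝ᵥ (M *ᵥ x) ≤ (∑ i, ∑ j, (M i j) ^ 2) * (x ⬝ᵥ x) := by
  have h1 : ∀ i : Fin n, (M *ᵥ x) i * (M *ᵥ x) i ≤ (∑ j, (M i j) ^ 2) * (x ⬝ᵥ x) := by
    intro i
    have h := Finset.sum_mul_sq_le_sq_mul_sq Finset.univ (fun j => M i j) x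
    have e : (M *ᵥ x) i = ∑ j, M i j * x j := rfl
    have e2 : x ⬝ᵥ x = ∑ j, x j ^ 2 := by
      simp [dotProduct, sq]
    rw [e, e2, ← sq]
    exact h
  calc (M *ᵥ x) ⬝ᵥ (M *ᵥ x) = ∑ i, (M *ᵥ x) i * (M *ᵥ x) i := rfl
    _ ≤ ∑ i, (∑ j, (M i j) ^ 2) * (x ⬝ᵥ x) := Finset.sum_le_sum fun i _ => h1 i
    _ = (∑ i, ∑ j, (M i j) ^ 2) * (x ⬝ᵥ x) := by rw [Finset.sum_mul]

lemma sq_sum_nonneg (M : Matrix (Fin n) (Fin n) ℝ) : 0 ≤ ∑ i, ∑ j, (M i j) ^ 2 :=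
  Finset.sum_nonneg fun i _ => Finset.sum_nonneg fun j _ => sq_nonneg _

open scoped MatrixOrder

/-- Square root decomposition of a positive definite matrix. -/
lemma posdef_sqrt_facts {Q : Matrix (Fin n) (Fin n) ℝ} (hQ : Q.PosDef) :
    ∃ S : Matrix (Fin n) (Fin n) ℝ,
      (∀ x : Fin n → ℝ, x ⬝ᵥ (Q *ᵥ x) = (S *ᵥ x) ⬝ᵥ (S *ᵥ x)) ∧
      (∀ x : Fin n → ℝ, S⁻¹ *ᵥ (S *ᵥ x) = x) := by
  have hps := hQ.posSemidef
  set S := CFC.sqrt Q with hS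
  have hherm : Sᴴ = S := (CFC.sqrt_nonneg Q).posSemidef.1
  have hsym : Sᵀ = S := by
    rw [← Matrix.conjTranspose_eq_transpose_of_trivial]; exact hherm
  have hmul : S * S = Q := CFC.sqrt_mul_sqrt_self Q hps.nonneg
  refine ⟨S, ?_, ?_⟩
  · intro x
    calc x ⬝ᵥ (Q *ᵥ x) = x ⬝ᵥ ((S * S) *ᵥ x) := by rw [hmul]
      _ = x ⬝ᵥ (S *ᵥ (S *ᵥ x)) := by rw [← Matrix.mulVec_mulVec]
      _ = (x ᵥ* S) ⬝ᵥ (S *ᵥ x) := by rw [Matrix.dotProduct_mulVec]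
      _ = (S *ᵥ x) ⬝ᵥ (S *ᵥ x) := by rw [← Matrix.mulVec_transpose, hsym]
  · intro x
    have hdet : S.det ≠ 0 := by
      intro h0
      have : Q.det = S.det * S.det := by rw [← hmul, Matrix.det_mul]
      rw [h0, mul_zero] at this
      exact (ne_of_gt hQ.det_pos) this
    rw [Matrix.mulVec_mulVec, Matrix.nonsing_inv_mul S (Ne.isUnit hdet), Matrix.one_mulVec]

lemma euclidean_norm_sq (v : EuclideanSpace ℝ (Fin n)) :
    ‖v‖ ^ 2 = (WithLp.equiv 2 (Fin n → ℝ) v) ⬝ᵥ (WithLp.equiv 2 (Fin n → ℝ) v) := by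
  rw [EuclideanSpace.norm_eq, Real.sq_sqrt (by positivity)]
  simp [dotProduct, sq]

lemma opNorm_le_of_quad (M : Matrix (Fin n) (Fin n) ℝ) (C : ℝ) (hC : 0 ≤ C)
    (h : ∀ x : Fin n → ℝ, (M *ᵥ x) ⬝ᵥ (M *ᵥ x) ≤ C ^ 2 * (x ⬝ᵥ x)) : ‖M‖ ≤ C := by
  rw [Matrix.l2_opNorm_def]
  refine ContinuousLinearMap.opNorm_le_bound _ hC fun x => ?_
  have hval : (((Matrix.toEuclideanLin (𝕜 := ℝ) (m := Fin n) (n := Fin n)).trans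
      LinearMap.toContinuousLinearMap) M) x
      = (WithLp.equiv 2 (Fin n → ℝ)).symm (M *ᵥ (WithLp.equiv 2 (Fin n → ℝ)) x) := by
    simpa using Matrix.toEuclideanLin_apply M x
  rw [hval]
  have h1 : ‖(WithLp.equiv 2 (Fin n → ℝ)).symm (M *ᵥ (WithLp.equiv 2 (Fin n → ℝ)) x)‖ ^ 2
      ≤ (C * ‖x‖) ^ 2 := by
    rw [euclidean_norm_sq]
    have h2 := h ((WithLp.equiv 2 (Fin n → ℝ)) x)
    have h3 : ‖x‖ ^ 2 = ((WithLp.equiv 2 (Fin n → ℝ)) x) ⬝ᵥ ((WithLp.equiv 2 (Fin n → ℝ)) x) :=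
      euclidean_norm_sq x
    have e : (WithLp.equiv 2 (Fin n → ℝ)) ((WithLp.equiv 2 (Fin n → ℝ)).symm
        (M *ᵥ (WithLp.equiv 2 (Fin n → ℝ)) x)) = M *ᵥ (WithLp.equiv 2 (Fin n → ℝ)) x :=
      (WithLp.equiv 2 (Fin n → ℝ)).apply_symm_apply _
    rw [e, mul_pow]
    rw [h3]
    exact h2
  have h4 : (0:ℝ) ≤ C * ‖x‖ := mul_nonneg hC (norm_nonneg _)
  nlinarith [norm_nonneg ((WithLp.equiv 2 (Fin n → ℝ)).symm (M *ᵥ (WithLp.equiv 2 (Fin n → ℝ)) x))]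

lemma bounded_of_limsup_neg {W : ℕ → ℝ} (h : Filter.limsup W Filter.atTop < 0) :
    ∃ B : ℝ, ∀ j, W j ≤ B := by
  rw [Filter.limsup_eq] at h
  have hex : ∃ a ∈ {a : ℝ | ∀ᶠ j in Filter.atTop, W j ≤ a}, a < 0 := by
    by_contra hc
    push_neg at hc
    rcases Set.eq_empty_or_nonempty {a : ℝ | ∀ᶠ j in Filter.atTop, W j ≤ a} with he | hne
    · rw [he, Real.sInf_empty] at h
      exact absurd h (lt_irrefl 0)
    · have := le_csInf hne hc
      linarith
  obtain ⟨a, ha, _⟩ := hex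
  obtain ⟨N, hN⟩ := Filter.eventually_atTop.mp ha
  obtain ⟨M, hM⟩ := ((Finset.range N).image W).exists_le
  refine ⟨max a M, fun j => ?_⟩
  by_cases hj : N ≤ j
  · exact le_max_of_le_left (hN j hj)
  · exact le_max_of_le_right (hM _ (Finset.mem_image_of_mem W (Finset.mem_range.mpr (by omega))))

end ResetAux

open ResetAux

/-- MLF criterion for reset switched systems with both stable and unstable modes: under the
Lyapunov inequalities with rates `λ_p`, `μ_p` and reset gains `γ_{(p,q)}`, and the limsup
condition `limsup_j (−λ N_s(j) τ + μ N_u(j) η + j ln γ) < 0` along a switching signal with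
dwell time `τ` in stable modes and flee time `η` in unstable modes, the reset switched
system is stable along this signal. -/
theorem reset_system_stable_of_MLF_mixed {n : ℕ} {P : Type*} [Fintype P] [DecidableEq P]
    (S U : Finset P) (hSU : S ∪ U = Finset.univ) (hdisj : Disjoint S U)
    (hS : S.Nonempty) (hU : U.Nonempty)
    (A : P → Matrix (Fin n) (Fin n) ℝ)
    (R : P → P → Matrix (Fin n) (Fin n) ℝ)
    (Q : P → Matrix (Fin n) (Fin n) ℝ) (hQ : ∀ p, (Q p).PosDef)
    (lamf muf : P → ℝ) (γf : P → P → ℝ)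
    (hlamf : ∀ p ∈ S, 0 < lamf p) (hmuf : ∀ p ∈ U, 0 < muf p)
    (hγf : ∀ p q, 0 < γf p q)
    (hQA_s : ∀ p ∈ S, ((-(lamf p)) • Q p - (Q p * A p + (A p)ᵀ * Q p)).PosSemidef)
    (hQA_u : ∀ p ∈ U, ((muf p) • Q p - (Q p * A p + (A p)ᵀ * Q p)).PosSemidef)
    (hR : ∀ p q, (γf p q • Q p - (R p q)ᵀ * Q q * R p q).PosSemidef)
    (lam mu γ : ℝ)
    (hlam_lb : ∀ p ∈ S, lam ≤ lamf p) (hlam_mem : ∃ p ∈ S, lam = lamf p)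
    (hmu_ub : ∀ p ∈ U, muf p ≤ mu) (hmu_mem : ∃ p ∈ U, mu = muf p)
    (hγ_ub : ∀ p q, γf p q ≤ γ) (hγ_mem : ∃ p q, γ = γf p q)
    (τ η : ℝ) (hτ : 0 < τ) (hη : 0 < η)
    (p : ℕ → P) (d : ℕ → ℝ)
    (hd : ∀ k, 1 ≤ k → 0 < d k)
    (hdS : ∀ k, 1 ≤ k → p (k - 1) ∈ S → τ ≤ d k)
    (hdU : ∀ k, 1 ≤ k → p (k - 1) ∈ U → d k ≤ η)
    (hlimsup : Filter.limsup (fun j : ℕ =>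
        -lam * (((Finset.range j).filter fun i => p i ∈ S).card : ℝ) * τ +
          mu * (((Finset.range j).filter fun i => p i ∈ U).card : ℝ) * η +
          (j : ℝ) * Real.log γ) Filter.atTop < 0) :
    ∃ C > (0 : ℝ), ∀ (j : ℕ) (s : ℝ), 0 ≤ s → s ≤ d (j + 1) →
      ‖exp (s • A (p j)) * resetTransition A R p d j‖ ≤ C := by
  -- basic positivity
  obtain ⟨ps, hpsS, hlam_eq⟩ := hlam_mem
  have hlam_pos : 0 < lam := hlam_eq ▸ hlamf ps hpsS
  obtain ⟨pu, hpuU, hmu_eq⟩ := hmu_mem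
  have hmu_pos : 0 < mu := hmu_eq ▸ hmuf pu hpuU
  obtain ⟨pg, qg, hγ_eq⟩ := hγ_mem
  have hγ_pos : 0 < γ := hγ_eq ▸ hγf pg qg
  have hcases : ∀ j : ℕ, (p j ∈ S) ∨ (p j ∈ U) := by
    intro j
    have h := Finset.mem_univ (p j)
    rw [← hSU] at h
    exact Finset.mem_union.mp h
  -- square roots
  choose Sq hSq1 hSq2 using fun q : P => posdef_sqrt_facts (hQ q)
  -- abbreviations
  set V : P → (Fin n → ℝ) → ℝ := fun q x => x ⬝ᵥ (Q q *ᵥ x) with hV_def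
  have hV : ∀ (q : P) (x : Fin n → ℝ), V q x = x ⬝ᵥ (Q q *ᵥ x) := fun _ _ => rfl
  have hV_nonneg : ∀ q x, 0 ≤ V q x := fun q x => quad_nonneg (hQ q).posSemidef x
  -- upper bound for V (p 0)
  set b0 : ℝ := ∑ i, ∑ j, (Sq (p 0)) i j ^ 2 with hb0_def
  have hb0_nonneg : 0 ≤ b0 := sq_sum_nonneg _
  have hVub : ∀ x : Fin n → ℝ, V (p 0) x ≤ b0 * (x ⬝ᵥ x) := by
    intro x
    rw [hV, hSq1 (p 0) x]
    exact mulVec_dot_le _ x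
  -- lower bound
  set binv : P → ℝ := fun q => ∑ i, ∑ j, ((Sq q)⁻¹) i j ^ 2 with hbinv_def
  have hbinv_nonneg : ∀ q, 0 ≤ binv q := fun q => sq_sum_nonneg _
  have hVlb : ∀ (q : P) (x : Fin n → ℝ), x ⬝ᵥ x ≤ binv q * V q x := by
    intro q x
    have h1 : x ⬝ᵥ x = ((Sq q)⁻¹ *ᵥ (Sq q *ᵥ x)) ⬝ᵥ ((Sq q)⁻¹ *ᵥ (Sq q *ᵥ x)) := by
      rw [hSq2 q x]
    rw [h1, hV, hSq1 q x]
    exact mulVec_dot_le _ _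
  set binvsum : ℝ := ∑ q : P, binv q with hbinvsum_def
  have hbinvsum_nonneg : 0 ≤ binvsum := Finset.sum_nonneg fun q _ => hbinv_nonneg q
  have hbinv_le : ∀ q, binv q ≤ binvsum :=
    fun q => Finset.single_le_sum (fun r _ => hbinv_nonneg r) (Finset.mem_univ q)
  -- exponent sequence
  set W : ℕ → ℝ := fun j =>
      -lam * (((Finset.range j).filter fun i => p i ∈ S).card : ℝ) * τ +
        mu * (((Finset.range j).filter fun i => p i ∈ U).card : ℝ) * η +
        (j : ℝ) * Real.log γ with hW_def
  obtain ⟨B, hB⟩ := bounded_of_limsup_neg (W := W) hlimsup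
  -- counting identities
  have hWsuccS : ∀ j, p j ∈ S → W (j + 1) = W j + (-(lam * τ)) + Real.log γ := by
    intro j hj
    have hnotU : p j ∉ U := Finset.disjoint_left.mp hdisj hj
    have c1 : ((Finset.range (j + 1)).filter fun i => p i ∈ S).card
        = ((Finset.range j).filter fun i => p i ∈ S).card + 1 := by
      rw [Finset.range_add_one, Finset.filter_insert, if_pos hj,
        Finset.card_insert_of_notMem (by simp)]
    have c2 : ((Finset.range (j + 1)).filter fun i => p i ∈ U).card
        = ((Finset.range j).filter fun i => p i ∈ U).card := by
      rw [Finset.range_add_one, Finset.filter_insert, if_neg hnotU]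
    simp only [hW_def, c1, c2]
    push_cast
    ring
  have hWsuccU : ∀ j, p j ∈ U → W (j + 1) = W j + mu * η + Real.log γ := by
    intro j hj
    have hnotS : p j ∉ S := Finset.disjoint_right.mp hdisj hj
    have c1 : ((Finset.range (j + 1)).filter fun i => p i ∈ S).card
        = ((Finset.range j).filter fun i => p i ∈ S).card := by
      rw [Finset.range_add_one, Finset.filter_insert, if_neg hnotS]
    have c2 : ((Finset.range (j + 1)).filter fun i => p i ∈ U).card
        = ((Finset.range j).filter fun i => p i ∈ U).card + 1 := by
      rw [Finset.range_add_one, Finset.filter_insert, if_pos hj,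
        Finset.card_insert_of_notMem (by simp)]
    simp only [hW_def, c1, c2]
    push_cast
    ring
  -- reset step
  have hres : ∀ (q r : P) (w : Fin n → ℝ), V r (R q r *ᵥ w) ≤ γ * V q w := by
    intro q r w
    have h0 := quad_nonneg (hR q r) w
    have e1 : w ⬝ᵥ ((γf q r • Q q - (R q r)ᵀ * Q r * R q r) *ᵥ w)
        = γf q r * (w ⬝ᵥ (Q q *ᵥ w)) - (R q r *ᵥ w) ⬝ᵥ (Q r *ᵥ (R q r *ᵥ w)) := by
      have h4 : ((R q r)ᵀ * Q r * R q r) *ᵥ w = (R q r)ᵀ *ᵥ (Q r *ᵥ (R q r *ᵥ w)) := by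
        rw [← Matrix.mulVec_mulVec, ← Matrix.mulVec_mulVec]
      have h5 : w ⬝ᵥ ((R q r)ᵀ *ᵥ (Q r *ᵥ (R q r *ᵥ w)))
          = (R q r *ᵥ w) ⬝ᵥ (Q r *ᵥ (R q r *ᵥ w)) := by
        rw [Matrix.dotProduct_mulVec, Matrix.vecMul_transpose]
      rw [Matrix.sub_mulVec, dotProduct_sub, Matrix.smul_mulVec, dotProduct_smul, h4, h5,
        smul_eq_mul]
    rw [e1] at h0
    have h2 : V r (R q r *ᵥ w) ≤ γf q r * V q w := by
      rw [hV, hV]; linarith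
    have h3 : γf q r * V q w ≤ γ * V q w :=
      mul_le_mul_of_nonneg_right (hγ_ub q r) (hV_nonneg q w)
    linarith
  -- main induction
  have key : ∀ (j : ℕ) (x : Fin n → ℝ),
      V (p j) (resetTransition A R p d j *ᵥ x) ≤ Real.exp (W j) * V (p 0) x := by
    intro j
    induction j with
    | zero =>
      intro x
      have hW0 : W 0 = 0 := by simp [hW_def]
      have h0 : resetTransition A R p d 0 = (1 : Matrix (Fin n) (Fin n) ℝ) := rfl
      rw [hW0, Real.exp_zero, one_mul, h0, Matrix.one_mulVec]
    | succ j ih =>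
      intro x
      have hd1 : 0 < d (j + 1) := hd (j + 1) (by omega)
      set z := resetTransition A R p d j *ᵥ x with hz
      have hΦ : resetTransition A R p d (j + 1) *ᵥ x
          = R (p j) (p (j + 1)) *ᵥ (exp (d (j + 1) • A (p j)) *ᵥ z) := by
        show (R (p j) (p (j + 1)) * exp (d (j + 1) • A (p j)) * resetTransition A R p d j) *ᵥ x
          = _
        rw [← Matrix.mulVec_mulVec, ← Matrix.mulVec_mulVec]
      obtain ⟨e, hflow, hWsucc⟩ : ∃ e : ℝ,
          V (p j) (exp (d (j + 1) • A (p j)) *ᵥ z) ≤ Real.exp e * V (p j) z ∧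
          W (j + 1) = W j + e + Real.log γ := by
        rcases hcases j with hj | hj
        · refine ⟨-(lam * τ), ?_, hWsuccS j hj⟩
          have h1 := flow_bound (A (p j)) (Q (p j)) (-(lamf (p j))) (hQA_s _ hj) z hd1.le
          have h2 : Real.exp (-(lamf (p j)) * d (j + 1)) ≤ Real.exp (-(lam * τ)) := by
            apply Real.exp_le_exp.mpr
            have hτd : τ ≤ d (j + 1) := hdS (j + 1) (by omega) (by simpa using hj)
            have hll : lam ≤ lamf (p j) := hlam_lb _ hj
            nlinarith
          calc V (p j) (exp (d (j + 1) • A (p j)) *ᵥ z)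
              ≤ Real.exp (-(lamf (p j)) * d (j + 1)) * V (p j) z := h1
            _ ≤ Real.exp (-(lam * τ)) * V (p j) z :=
                mul_le_mul_of_nonneg_right h2 (hV_nonneg _ _)
        · refine ⟨mu * η, ?_, hWsuccU j hj⟩
          have h1 := flow_bound (A (p j)) (Q (p j)) (muf (p j)) (hQA_u _ hj) z hd1.le
          have h2 : Real.exp (muf (p j) * d (j + 1)) ≤ Real.exp (mu * η) := by
            apply Real.exp_le_exp.mpr
            have hdη : d (j + 1) ≤ η := hdU (j + 1) (by omega) (by simpa using hj)
            have hmm : muf (p j) ≤ mu := hmu_ub _ hj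
            have hmp : 0 < muf (p j) := hmuf _ hj
            nlinarith
          calc V (p j) (exp (d (j + 1) • A (p j)) *ᵥ z)
              ≤ Real.exp (muf (p j) * d (j + 1)) * V (p j) z := h1
            _ ≤ Real.exp (mu * η) * V (p j) z :=
                mul_le_mul_of_nonneg_right h2 (hV_nonneg _ _)
      calc V (p (j + 1)) (resetTransition A R p d (j + 1) *ᵥ x)
          = V (p (j + 1)) (R (p j) (p (j + 1)) *ᵥ (exp (d (j + 1) • A (p j)) *ᵥ z)) := by
            rw [hΦ]
        _ ≤ γ * V (p j) (exp (d (j + 1) • A (p j)) *ᵥ z) := hres _ _ _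
        _ ≤ γ * (Real.exp e * V (p j) z) := mul_le_mul_of_nonneg_left hflow hγ_pos.le
        _ ≤ γ * (Real.exp e * (Real.exp (W j) * V (p 0) x)) := by
            refine mul_le_mul_of_nonneg_left ?_ hγ_pos.le
            exact mul_le_mul_of_nonneg_left (ih x) (Real.exp_nonneg _)
        _ = Real.exp (W (j + 1)) * V (p 0) x := by
            rw [hWsucc]
            generalize W j = wj
            rw [Real.exp_add, Real.exp_add, Real.exp_log hγ_pos]
            ring
  -- in-interval bound
  have hfin : ∀ (j : ℕ) (s : ℝ), 0 ≤ s → s ≤ d (j + 1) →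
      ∀ z : Fin n → ℝ,
        V (p j) (exp (s • A (p j)) *ᵥ z) ≤ Real.exp (mu * η) * V (p j) z := by
    intro j s hs0 hs1 z
    rcases hcases j with hj | hj
    · have h1 := flow_bound (A (p j)) (Q (p j)) (-(lamf (p j))) (hQA_s _ hj) z hs0
      have h2 : Real.exp (-(lamf (p j)) * s) ≤ Real.exp (mu * η) := by
        apply Real.exp_le_exp.mpr
        have := hlamf _ hj
        nlinarith
      calc V (p j) (exp (s • A (p j)) *ᵥ z)
          ≤ Real.exp (-(lamf (p j)) * s) * V (p j) z := h1
        _ ≤ Real.exp (mu * η) * V (p j) z := mul_le_mul_of_nonneg_right h2 (hV_nonneg _ _)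
    · have h1 := flow_bound (A (p j)) (Q (p j)) (muf (p j)) (hQA_u _ hj) z hs0
      have hsη : s ≤ η := le_trans hs1 (hdU (j + 1) (by omega) (by simpa using hj))
      have h2 : Real.exp (muf (p j) * s) ≤ Real.exp (mu * η) := by
        apply Real.exp_le_exp.mpr
        have h3 := hmuf _ hj
        have h4 := hmu_ub _ hj
        nlinarith
      calc V (p j) (exp (s • A (p j)) *ᵥ z)
          ≤ Real.exp (muf (p j) * s) * V (p j) z := h1
        _ ≤ Real.exp (mu * η) * V (p j) z := mul_le_mul_of_nonneg_right h2 (hV_nonneg _ _)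
  -- final constant
  set K : ℝ := binvsum * (Real.exp (mu * η) * (Real.exp B * b0)) with hK_def
  have hK_nonneg : 0 ≤ K := by
    apply mul_nonneg hbinvsum_nonneg
    apply mul_nonneg (Real.exp_nonneg _)
    exact mul_nonneg (Real.exp_nonneg _) hb0_nonneg
  have hCpos : (0:ℝ) < Real.sqrt K + 1 := by
    have := Real.sqrt_nonneg K
    linarith
  refine ⟨Real.sqrt K + 1, hCpos, ?_⟩
  intro j s hs0 hs1
  apply opNorm_le_of_quad _ _ hCpos.le
  intro x
  set M : Matrix (Fin n) (Fin n) ℝ := exp (s • A (p j)) * resetTransition A R p d j with hM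
  have hMx : M *ᵥ x = exp (s • A (p j)) *ᵥ (resetTransition A R p d j *ᵥ x) := by
    rw [hM, ← Matrix.mulVec_mulVec]
  have c1 : (M *ᵥ x) ⬝ᵥ (M *ᵥ x) ≤ binvsum * V (p j) (M *ᵥ x) :=
    le_trans (hVlb _ _) (mul_le_mul_of_nonneg_right (hbinv_le _) (hV_nonneg _ _))
  have c2 : V (p j) (M *ᵥ x) ≤ Real.exp (mu * η) * (Real.exp (W j) * V (p 0) x) := by
    rw [hMx]
    calc V (p j) (exp (s • A (p j)) *ᵥ (resetTransition A R p d j *ᵥ x))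
        ≤ Real.exp (mu * η) * V (p j) (resetTransition A R p d j *ᵥ x) := hfin j s hs0 hs1 _
      _ ≤ Real.exp (mu * η) * (Real.exp (W j) * V (p 0) x) :=
          mul_le_mul_of_nonneg_left (key j x) (Real.exp_nonneg _)
  have c3 : V (p 0) x ≤ b0 * (x ⬝ᵥ x) := hVub x
  have c4 : Real.exp (W j) ≤ Real.exp B := Real.exp_le_exp.mpr (hB j)
  have d1 : Real.exp (W j) * V (p 0) x ≤ Real.exp B * (b0 * (x ⬝ᵥ x)) := by
    have e1 : Real.exp (W j) * V (p 0) x ≤ Real.exp (W j) * (b0 * (x ⬝ᵥ x)) :=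
      mul_le_mul_of_nonneg_left c3 (Real.exp_nonneg _)
    have e2 : Real.exp (W j) * (b0 * (x ⬝ᵥ x)) ≤ Real.exp B * (b0 * (x ⬝ᵥ x)) :=
      mul_le_mul_of_nonneg_right c4 (mul_nonneg hb0_nonneg (dot_self_nonneg x))
    linarith
  have d2 : V (p j) (M *ᵥ x) ≤ Real.exp (mu * η) * (Real.exp B * (b0 * (x ⬝ᵥ x))) :=
    le_trans c2 (mul_le_mul_of_nonneg_left d1 (Real.exp_nonneg _))
  have c5 : (M *ᵥ x) ⬝ᵥ (M *ᵥ x) ≤ K * (x ⬝ᵥ x) := by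
    calc (M *ᵥ x) ⬝ᵥ (M *ᵥ x) ≤ binvsum * V (p j) (M *ᵥ x) := c1
      _ ≤ binvsum * (Real.exp (mu * η) * (Real.exp B * (b0 * (x ⬝ᵥ x)))) :=
          mul_le_mul_of_nonneg_left d2 hbinvsum_nonneg
      _ = K * (x ⬝ᵥ x) := by rw [hK_def]; ring
  have hKC : K ≤ (Real.sqrt K + 1) ^ 2 := by
    nlinarith [Real.sq_sqrt hK_nonneg, Real.sqrt_nonneg K]
  calc (M *ᵥ x) ⬝ᵥ (M *ᵥ x) ≤ K * (x ⬝ᵥ x) := c5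
    _ ≤ (Real.sqrt K + 1) ^ 2 * (x ⬝ᵥ x) :=
        mul_le_mul_of_nonneg_right hKC (dot_self_nonneg x)
end
end
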